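/- arXiv:1403.3037 — 7 statements merged into one kernel-verified Lean document; each statement's English description precedes it below -/
import Mathlib

section
/- Let ℓ be a prime and let γ ∈ GSp₄(F_ℓ) be an element whose characteristic polynomial is irreducible over F_ℓ. Then the centralizer of γ in GSp₄(F_ℓ) has order (ℓ²+1)(ℓ−1). -/
open Matrix Polynomial

noncomputable section

/-- The standard symplectic form matrix `J = [[0, I₂], [−I₂, 0]]`. -/
def J4 (k : Type*) [CommRing k] : Matrix (Fin 4) (Fin 4) k :=
  !![0,0,1,0; 0,0,0,1; -1,0,0,0; 0,-1,0,0]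

/-- `γ` is a symplectic similitude with multiplier `m`. -/
def InGSp4 {k : Type*} [CommRing k] (m : k) (γ : Matrix (Fin 4) (Fin 4) k) : Prop :=
  IsUnit γ ∧ IsUnit m ∧ γ.transpose * J4 k * γ = m • J4 k

/-- The order of the centralizer of `γ` in `GSp₄`. -/
def centOrder {k : Type*} [CommRing k] (γ : Matrix (Fin 4) (Fin 4) k) : ℕ :=
  Nat.card {δ : Matrix (Fin 4) (Fin 4) k // (∃ m, InGSp4 m δ) ∧ δ * γ = γ * δ}

/-- `γ` is cyclic: its minimal polynomial equals its characteristic polynomial. -/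
def IsCyclicMat {k : Type*} [Field k] (γ : Matrix (Fin 4) (Fin 4) k) : Prop :=
  minpoly k γ = γ.charpoly

lemma my_charpoly_transpose {R : Type*} [CommRing R] {n : Type*} [DecidableEq n] [Fintype n]
    (M : Matrix n n R) : Mᵀ.charpoly = M.charpoly := by
  rw [Matrix.charpoly, Matrix.charpoly, ← Matrix.det_transpose (charmatrix M)]
  congr 1
  ext i j
  by_cases h : i = j
  · subst h; simp
  · simp [Matrix.charmatrix_apply_ne _ _ _ h, Matrix.charmatrix_apply_ne _ _ _ (Ne.symm h)]

lemma my_ncard_pow_eq_one (K : Type*) [Field K] [Fintype K] [DecidableEq K] {d : ℕ} (hd : 0 < d)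
    (hdvd : d ∣ Fintype.card K - 1) : ({a : K | a ^ d = 1} : Set K).ncard = d := by
  classical
  obtain ⟨g, hg⟩ := IsCyclic.exists_generator (α := Kˣ)
  have hN : orderOf g = Fintype.card Kˣ := by
    rw [orderOf_eq_card_of_forall_mem_zpowers hg, Nat.card_eq_fintype_card]
  have hdvd' : d ∣ Fintype.card Kˣ := by rwa [Fintype.card_units]
  have hN0 : 0 < Fintype.card Kˣ := Fintype.card_pos
  have horder : orderOf (g ^ (Fintype.card Kˣ / d)) = d := by
    rw [orderOf_pow, hN, Nat.gcd_eq_right (Nat.div_dvd_of_dvd hdvd'),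
      Nat.div_div_self hdvd' hN0.ne']
  have hprim : IsPrimitiveRoot ((g ^ (Fintype.card Kˣ / d) : Kˣ) : K) d := by
    have h1 := IsPrimitiveRoot.orderOf (g ^ (Fintype.card Kˣ / d))
    rw [horder] at h1
    exact IsPrimitiveRoot.coe_units_iff.mpr h1
  have hset : {a : K | a ^ d = 1} = ↑(Polynomial.nthRootsFinset d (1 : K)) := by
    ext x; simp [Polynomial.mem_nthRootsFinset hd (1 : K)]
  rw [hset, Set.ncard_coe_finset, hprim.card_nthRootsFinset]

lemma my_tau_eq_frob {K : Type*} [Field K] [Fintype K] {ℓ : ℕ} [hℓp : Fact ℓ.Prime] [CharP K ℓ]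
    (hcard : Fintype.card K = ℓ ^ 4) (τ : K →+* K) (hτ2 : ∀ x, τ (τ x) = x)
    (hτne : ∃ x, τ x ≠ x) : ∀ x : K, τ x = x ^ ℓ ^ 2 := by
  classical
  have hl2 : 2 ≤ ℓ := hℓp.out.two_le
  -- the fixed subfield
  let L : Subfield K :=
  { carrier := {x | τ x = x}
    mul_mem' := by
      intro a b ha hb; simp only [Set.mem_setOf_eq] at *; rw [_root_.map_mul, ha, hb]
    one_mem' := by simp only [Set.mem_setOf_eq, _root_.map_one]
    add_mem' := by
      intro a b ha hb; simp only [Set.mem_setOf_eq] at *; rw [_root_.map_add, ha, hb]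
    zero_mem' := by simp only [Set.mem_setOf_eq, _root_.map_zero]
    neg_mem' := by intro a ha; simp only [Set.mem_setOf_eq] at *; rw [_root_.map_neg, ha]
    inv_mem' := by intro a ha; simp only [Set.mem_setOf_eq] at *; rw [map_inv₀, ha] }
  have hmemL : ∀ x : K, x ∈ L ↔ τ x = x := fun _ => Iff.rfl
  letI : Fintype L := Fintype.ofFinite L
  -- generator of Kˣ
  obtain ⟨g, hg⟩ := IsCyclic.exists_generator (α := Kˣ)
  have hsL : ((g : K) + τ g) ∈ L := by
    show τ _ = _; rw [_root_.map_add, hτ2, add_comm]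
  have hnL : ((g : K) * τ g) ∈ L := by
    show τ _ = _; rw [_root_.map_mul, hτ2, mul_comm]
  -- the span of {1, g} over L is everything
  set W : Submodule L K := Submodule.span L {1, (g : K)} with hWdef
  have h1W : (1 : K) ∈ W := Submodule.subset_span (by simp)
  have hgW : (g : K) ∈ W := Submodule.subset_span (by simp)
  have hgg : (g : K) * g ∈ W := by
    have heq : (g : K) * g = (⟨_, hsL⟩ : L) • (g : K) - (⟨_, hnL⟩ : L) • (1 : K) := by
      rw [Subfield.smul_def, Subfield.smul_def, smul_eq_mul, smul_eq_mul]
      push_cast; ring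
    rw [heq]
    exact W.sub_mem (W.smul_mem _ hgW) (W.smul_mem _ h1W)
  have hmulg : ∀ x ∈ W, x * g ∈ W := by
    intro x hx
    induction hx using Submodule.span_induction with
    | mem y hy =>
        rcases hy with rfl | hy
        · rw [one_mul]; exact hgW
        · simp only [Set.mem_singleton_iff] at hy; subst hy; exact hgg
    | zero => rw [zero_mul]; exact W.zero_mem
    | add y z _ _ hy hz => rw [add_mul]; exact W.add_mem hy hz
    | smul c y _ hy => rw [smul_mul_assoc]; exact W.smul_mem _ hy
  have hpowW : ∀ k : ℕ, ((g : K)) ^ k ∈ W := by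
    intro k
    induction k with
    | zero => simpa using h1W
    | succ n ih => rw [pow_succ]; exact hmulg _ ih
  have hWtop : W = ⊤ := by
    rw [Submodule.eq_top_iff']
    intro x
    rcases eq_or_ne x 0 with rfl | hx
    · exact W.zero_mem
    · lift x to Kˣ using isUnit_iff_ne_zero.mpr hx
      have hz := hg x
      rw [← mem_powers_iff_mem_zpowers] at hz
      obtain ⟨k, hk⟩ := hz
      rw [← hk]
      exact_mod_cast hpowW k
  have hrank2 : Module.finrank L K ≤ 2 := by
    have h1 : Module.finrank L K = Module.finrank L W := by
      rw [hWtop]; exact (finrank_top L K).symm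
    rw [h1, hWdef]
    refine le_trans (finrank_span_le_card _) ?_
    rw [Set.toFinset_insert, Set.toFinset_singleton]
    exact (Finset.card_insert_le _ _).trans (by simp)
  have hcardformula : Fintype.card K = Fintype.card L ^ Module.finrank L K :=
    Module.card_eq_pow_finrank
  -- finrank is exactly 2
  have hLne : ∃ x : K, x ∉ L := by
    obtain ⟨x, hx⟩ := hτne; exact ⟨x, hx⟩
  have hrk : Module.finrank L K = 2 := by
    interval_cases h : (Module.finrank L K)
    · exfalso
      rw [pow_zero] at hcardformula
      have : 1 < Fintype.card K := Fintype.one_lt_card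
      omega
    · exfalso
      rw [pow_one] at hcardformula
      have hsurj : Function.Surjective ((↑) : L → K) :=
        ((Fintype.bijective_iff_injective_and_card _).mpr
          ⟨Subtype.coe_injective, hcardformula.symm⟩).2
      obtain ⟨x, hx⟩ := hLne
      obtain ⟨y, rfl⟩ := hsurj x
      exact hx y.2
    · rfl
  have hcardL : Fintype.card L = ℓ ^ 2 := by
    rw [hrk, hcard] at hcardformula
    have h1 : (ℓ ^ 2) ^ 2 = Fintype.card L ^ 2 := by rw [← hcardformula]; ring
    have := Nat.pow_left_injective (by norm_num : (2:ℕ) ≠ 0) h1.symm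
    omega
  -- L = fixed points of x ↦ x ^ ℓ ^ 2
  have hLpow : ∀ x : K, x ∈ L → x ^ ℓ ^ 2 = x := by
    intro x hx
    have h1 := FiniteField.pow_card (⟨x, hx⟩ : L)
    rw [hcardL] at h1
    have h2 := congrArg (Subtype.val) h1
    push_cast at h2
    exact h2
  have hpowL : ∀ x : K, x ^ ℓ ^ 2 = x → x ∈ L := by
    by_contra hcon
    push_neg at hcon
    obtain ⟨x₀, hx₀, hx₀L⟩ := hcon
    set P : K[X] := X ^ ℓ ^ 2 - X with hP
    have hPdeg : P.natDegree = ℓ ^ 2 := by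
      rw [hP]
      rw [Polynomial.natDegree_sub_eq_left_of_natDegree_lt] <;>
        simp only [Polynomial.natDegree_X_pow, Polynomial.natDegree_X]
      nlinarith
    have hP0 : P ≠ 0 := by
      intro h
      rw [h, Polynomial.natDegree_zero] at hPdeg
      nlinarith
    have hroots : (insert x₀ (Set.toFinset (L : Set K))) ⊆ P.roots.toFinset := by
      intro y hy
      simp only [Finset.mem_insert, Set.mem_toFinset] at hy
      rw [Multiset.mem_toFinset, Polynomial.mem_roots hP0]
      rcases hy with rfl | hy
      · simp [Polynomial.IsRoot, hP, hx₀]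
      · simp [Polynomial.IsRoot, hP, hLpow y hy]
    have hcard1 : (insert x₀ (Set.toFinset (L : Set K))).card = ℓ ^ 2 + 1 := by
      rw [Finset.card_insert_of_notMem (by simpa using hx₀L)]
      congr 1
      rw [Set.toFinset_card]
      rw [← hcardL]
      exact Fintype.card_congr (Equiv.setCongr rfl)
    have hcard2 : P.roots.toFinset.card ≤ ℓ ^ 2 := by
      refine le_trans (Multiset.toFinset_card_le _) ?_
      simpa [hPdeg] using Polynomial.card_roots' P
    have := Finset.card_le_card hroots
    omega
  -- conclusion
  intro x
  by_cases hx : x ∈ L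
  · rw [(hmemL x).mp hx, hLpow x hx]
  · have key : (x ^ 2 - (x + τ x) * x + x * τ x) = 0 := by ring
    have hsx : (x + τ x) ^ ℓ ^ 2 = x + τ x :=
      hLpow _ (by show τ _ = _; rw [_root_.map_add, hτ2, add_comm])
    have hnx : (x * τ x) ^ ℓ ^ 2 = x * τ x :=
      hLpow _ (by show τ _ = _; rw [_root_.map_mul, hτ2, mul_comm])
    have key2 : (x ^ ℓ ^ 2) ^ 2 - (x + τ x) * x ^ ℓ ^ 2 + x * τ x = 0 := by
      have h1 : (x ^ 2 - (x + τ x) * x + x * τ x) ^ ℓ ^ 2 = 0 := by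
        rw [key]; exact zero_pow (by positivity)
      rw [add_pow_char_pow, sub_pow_char_pow, mul_pow] at h1
      rw [hsx, hnx] at h1
      rw [← h1]
      ring
    have key3 : (x ^ ℓ ^ 2 - x) * (x ^ ℓ ^ 2 - τ x) = 0 := by linear_combination key2
    rcases mul_eq_zero.mp key3 with h | h
    · exfalso
      exact hx (hpowL x (by linear_combination h))
    · linear_combination -h

set_option maxHeartbeats 4000000 in
set_option synthInstance.maxHeartbeats 1000000 in
theorem stmt3 (ℓ : ℕ) (hℓ : ℓ.Prime) [Fact ℓ.Prime]
    (γ : Matrix (Fin 4) (Fin 4) (ZMod ℓ)) (m : ZMod ℓ) (hγ : InGSp4 m γ)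
    (hirr : Irreducible γ.charpoly) :
    centOrder γ = (ℓ ^ 2 + 1) * (ℓ - 1) := by
  classical
  obtain ⟨hγu, hmu, hJ⟩ := hγ
  have hl2 : 2 ≤ ℓ := hℓ.two_le
  set U : Matrix (Fin 4) (Fin 4) (ZMod ℓ) := J4 (ZMod ℓ) with hU
  set p : (ZMod ℓ)[X] := γ.charpoly with hp
  haveI : Fact (Irreducible p) := ⟨hirr⟩
  set K := AdjoinRoot p with hK
  set r : K := AdjoinRoot.root p with hr
  -- basic matrix facts about U
  have hU2 : U * U = (-1 : Matrix (Fin 4) (Fin 4) (ZMod ℓ)) := by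
    rw [hU]
    ext i j
    fin_cases i <;> fin_cases j <;>
      simp [J4, Matrix.mul_apply, Fin.sum_univ_four, Matrix.one_apply,
        Matrix.vecHead, Matrix.vecTail]
  have hUU : (-U) * U = 1 := by rw [neg_mul, hU2]; simp
  have hUU' : U * (-U) = 1 := by rw [mul_neg, hU2]; simp
  -- basic facts about p
  have hpmonic : p.Monic := γ.charpoly_monic
  have hpdeg : p.natDegree = 4 := by
    rw [hp]
    simpa using γ.charpoly_natDegree_eq_dim
  have hp0 : p ≠ 0 := hpmonic.ne_zero
  -- the algebra map φ
  have hCH : aeval γ p = 0 := γ.aeval_self_charpoly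
  have hker : ∀ q ∈ Ideal.span {p}, aeval γ q = 0 := by
    intro q hq
    rw [Ideal.mem_span_singleton] at hq
    obtain ⟨c, rfl⟩ := hq
    rw [_root_.map_mul, hCH, zero_mul]
  set φ : K →ₐ[ZMod ℓ] Matrix (Fin 4) (Fin 4) (ZMod ℓ) :=
    Ideal.Quotient.liftₐ (Ideal.span {p}) (Polynomial.aeval γ) hker with hφ
  have hφmk : ∀ q : (ZMod ℓ)[X], φ (AdjoinRoot.mk p q) = aeval γ q := by
    intro q
    show Ideal.Quotient.liftₐ _ _ hker (Ideal.Quotient.mk _ q) = _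
    rfl
  have hφr : φ r = γ := by
    have hrmk : r = AdjoinRoot.mk p X := rfl
    rw [hrmk, hφmk, aeval_X]
  have hφinj : Function.Injective φ := φ.toRingHom.injective
  -- B = m • γ⁻¹
  have hdet : IsUnit γ.det := (Matrix.isUnit_iff_isUnit_det γ).mp hγu
  set B : Matrix (Fin 4) (Fin 4) (ZMod ℓ) := -(U * γᵀ * U) with hB
  have hBγ : B * γ = m • (1 : Matrix (Fin 4) (Fin 4) (ZMod ℓ)) := by
    calc -(U * γᵀ * U) * γ = -(U * (γᵀ * U * γ)) := by noncomm_ring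
      _ = -(U * (m • U)) := by rw [hJ]
      _ = -(m • (U * U)) := by rw [Matrix.mul_smul]
      _ = -(m • (-1 : Matrix (Fin 4) (Fin 4) (ZMod ℓ))) := by rw [hU2]
      _ = m • 1 := by simp
  have hBinv : B = m • γ⁻¹ := by
    have h1 := congrArg (· * γ⁻¹) hBγ
    rwa [mul_assoc, Matrix.mul_nonsing_inv _ hdet, mul_one, Matrix.smul_mul, one_mul] at h1
  -- r is invertible
  have hr0 : r ≠ 0 := by
    intro h
    have hγ0 : γ = 0 := by rw [← hφr, h, map_zero]
    rw [hγ0] at hγu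
    exact not_isUnit_zero hγu
  set u : K := algebraMap (ZMod ℓ) K m * r⁻¹ with hu
  have hφrinv : φ (r⁻¹) = γ⁻¹ := by
    refine (Matrix.inv_eq_left_inv ?_).symm
    rw [← hφr, ← _root_.map_mul, inv_mul_cancel₀ hr0, _root_.map_one]
  have hφu : φ u = B := by
    rw [hu, _root_.map_mul, AlgHom.commutes, hφrinv, hBinv,
      Algebra.algebraMap_eq_smul_one, smul_mul_assoc, one_mul]
  -- the conjugation algebra automorphism
  set ε : Matrix (Fin 4) (Fin 4) (ZMod ℓ) ≃ₐ[ZMod ℓ] Matrix (Fin 4) (Fin 4) (ZMod ℓ) :=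
  { toFun := fun A => (-U) * A * U
    invFun := fun A => U * A * (-U)
    left_inv := by
      intro A
      calc U * ((-U) * A * U) * (-U) = (U * -U) * A * (U * -U) := by noncomm_ring
        _ = A := by rw [hUU']; noncomm_ring
    right_inv := by
      intro A
      calc (-U) * (U * A * (-U)) * U = (U * U) * A * (U * U) := by noncomm_ring
        _ = A := by rw [hU2]; noncomm_ring
    map_mul' := by
      intro A C
      show (-U) * (A * C) * U = ((-U) * A * U) * ((-U) * C * U)
      calc (-U) * (A * C) * U = (-U) * A * 1 * C * U := by noncomm_ring
        _ = (-U) * A * (U * (-U)) * C * U := by rw [hUU']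
        _ = ((-U) * A * U) * ((-U) * C * U) := by noncomm_ring
    map_add' := by intro A C; noncomm_ring
    commutes' := by
      intro c
      show (-U) * (algebraMap (ZMod ℓ) _ c) * U = algebraMap (ZMod ℓ) _ c
      rw [Algebra.algebraMap_eq_smul_one, Matrix.mul_smul, mul_one, Matrix.smul_mul, hUU] }
    with hε
  -- Cayley--Hamilton for B
  have hCHt : aeval γᵀ p = 0 := by
    rw [hp, ← my_charpoly_transpose]
    exact (γᵀ).aeval_self_charpoly
  have hBCH : aeval B p = 0 := by
    have hεγ : ε γᵀ = B := by
      show (-U) * γᵀ * U = B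
      rw [hB]; noncomm_ring
    have h1 := Polynomial.aeval_algHom_apply ε.toAlgHom γᵀ p
    change aeval (ε γᵀ) p = ε (aeval γᵀ p) at h1
    rw [hεγ, hCHt, _root_.map_zero] at h1
    exact h1
  have huCH : aeval u p = 0 := by
    apply hφinj
    rw [_root_.map_zero, ← Polynomial.aeval_algHom_apply φ u p, hφu, hBCH]
  -- the involution τ
  set τ : K →ₐ[ZMod ℓ] K := AdjoinRoot.liftAlgHom p (Algebra.ofId (ZMod ℓ) K) u huCH with hτ
  have hτr : τ r = u :=
    AdjoinRoot.liftAlgHom_root p (Algebra.ofId (ZMod ℓ) K) u huCH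
  have hm0 : m ≠ 0 := hmu.ne_zero
  have halgm0 : algebraMap (ZMod ℓ) K m ≠ 0 := fun h =>
    hm0 ((algebraMap (ZMod ℓ) K).injective (by rw [h, _root_.map_zero]))
  have hτ2 : ∀ x : K, τ (τ x) = x := by
    have hcomp : τ.comp τ = AlgHom.id (ZMod ℓ) K := by
      apply AdjoinRoot.algHom_ext
      show τ (τ (AdjoinRoot.root p)) = AdjoinRoot.root p
      rw [← hr, hτr, hu, _root_.map_mul, AlgHom.commutes, map_inv₀, hτr, hu]
      rw [mul_inv, inv_inv, ← mul_assoc, mul_inv_cancel₀ halgm0, one_mul]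
    intro x
    exact AlgHom.congr_fun hcomp x
  -- τ is not the identity
  have hτner : τ r ≠ r := by
    intro heq
    rw [hτr, hu] at heq
    have h2 : algebraMap (ZMod ℓ) K m = r ^ 2 := by
      rw [mul_inv_eq_iff_eq_mul₀ hr0] at heq
      linear_combination heq
    have hmin : minpoly (ZMod ℓ) r = p := by
      rw [hr, AdjoinRoot.minpoly_root hp0, hpmonic.leadingCoeff, inv_one, Polynomial.C_1,
        mul_one]
    have hdvd : p ∣ (X ^ 2 - C m : (ZMod ℓ)[X]) := by
      rw [← hmin]
      apply minpoly.dvd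
      rw [map_sub, aeval_X_pow, aeval_C, h2, sub_self]
    have hle := Polynomial.natDegree_le_of_dvd hdvd
      (Polynomial.X_pow_sub_C_ne_zero (by norm_num) m)
    rw [hpdeg, natDegree_X_pow_sub_C] at hle
    omega
  -- finiteness and cardinality of K
  haveI : Module.Finite (ZMod ℓ) K := Module.Finite.of_basis (AdjoinRoot.powerBasis hp0).basis
  haveI : Finite K := Module.finite_of_finite (ZMod ℓ)
  letI : Fintype K := Fintype.ofFinite K
  haveI : CharP K ℓ := charP_of_injective_algebraMap' (ZMod ℓ) (A := K) ℓ
  have hfr4 : Module.finrank (ZMod ℓ) K = 4 := by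
    rw [(AdjoinRoot.powerBasis hp0).finrank]
    show p.natDegree = 4
    exact hpdeg
  have hcardK : Fintype.card K = ℓ ^ 4 := by
    rw [Module.card_eq_pow_finrank (K := ZMod ℓ) (V := K), hfr4, ZMod.card]
  -- τ is Frobenius squared
  have hfrob : ∀ x : K, τ x = x ^ ℓ ^ 2 :=
    my_tau_eq_frob hcardK τ.toRingHom (by exact hτ2) ⟨r, hτner⟩
  -- the transpose anti-automorphism identity : φ (τ a) = (-U) * (φ a)ᵀ * U
  have hψmul : ∀ a b : K,
      (-U) * (φ (a * b))ᵀ * U = ((-U) * (φ a)ᵀ * U) * ((-U) * (φ b)ᵀ * U) := by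
    intro a b
    rw [mul_comm a b, _root_.map_mul, Matrix.transpose_mul]
    calc (-U) * ((φ a)ᵀ * (φ b)ᵀ) * U
        = (-U) * (φ a)ᵀ * (U * (-U)) * ((φ b)ᵀ * U) := by rw [hUU']; noncomm_ring
      _ = ((-U) * (φ a)ᵀ * U) * ((-U) * (φ b)ᵀ * U) := by noncomm_ring
  set ψ : K →ₐ[ZMod ℓ] Matrix (Fin 4) (Fin 4) (ZMod ℓ) :=
    AlgHom.mk' (RingHom.mk'
      { toFun := fun a => (-U) * (φ a)ᵀ * U
        map_one' := by
          show (-U) * (φ (1 : K))ᵀ * U = 1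
          rw [_root_.map_one, Matrix.transpose_one, mul_one]; exact hUU
        map_mul' := hψmul }
      (by
        intro a b
        show (-U) * (φ (a + b))ᵀ * U = (-U) * (φ a)ᵀ * U + (-U) * (φ b)ᵀ * U
        rw [_root_.map_add, Matrix.transpose_add]
        noncomm_ring))
      (by
        intro c x
        show (-U) * (φ (c • x))ᵀ * U = c • ((-U) * (φ x)ᵀ * U)
        rw [Algebra.smul_def, _root_.map_mul, AlgHom.commutes, Algebra.algebraMap_eq_smul_one,
          Matrix.smul_mul, one_mul, Matrix.transpose_smul, Matrix.mul_smul,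
          Matrix.smul_mul]) with hψ
  have hτφ : ∀ a : K, φ (τ a) = (-U) * (φ a)ᵀ * U := by
    have hcomp : φ.comp τ = ψ := by
      apply AdjoinRoot.algHom_ext
      show φ (τ (AdjoinRoot.root p)) = (-U) * (φ (AdjoinRoot.root p))ᵀ * U
      rw [← hr, hτr, hφu, hφr, hB]
      noncomm_ring
    intro a
    exact AlgHom.congr_fun hcomp a
  -- key identity
  have htrans : ∀ a : K, (φ a)ᵀ = (-U) * (φ (τ a)) * U := by
    intro a
    rw [hτφ a]
    calc (φ a)ᵀ = -((-U) * U) * (φ a)ᵀ * (-(U * (-U))) := by rw [hUU, hUU']; noncomm_ring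
      _ = (-U) * ((-U) * (φ a)ᵀ * U) * U := by noncomm_ring
  have hkey : ∀ a : K, (φ a)ᵀ * U * (φ a) = U * φ (τ a * a) := by
    intro a
    rw [htrans a, _root_.map_mul]
    calc (-U) * (φ (τ a)) * U * U * (φ a)
        = (-U) * (φ (τ a)) * (U * U) * (φ a) := by noncomm_ring
      _ = (-U) * (φ (τ a)) * (-1) * (φ a) := by rw [hU2]
      _ = U * ((φ (τ a)) * (φ a)) := by noncomm_ring
  -- the centralizer is contained in the image of φ
  have hcardV : Fintype.card K = Fintype.card (Fin 4 → ZMod ℓ) := by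
    rw [hcardK]
    simp [ZMod.card]
  set v : Fin 4 → ZMod ℓ := Pi.single 0 1 with hv
  have hvne : v ≠ 0 := by
    intro h
    have := congrFun h 0
    simp [hv] at this
  set θ : K → (Fin 4 → ZMod ℓ) := fun a => (φ a).mulVec v with hθ
  have hθinj : Function.Injective θ := by
    intro a b hab
    by_contra hne
    have hd : a - b ≠ 0 := sub_ne_zero.mpr hne
    have hunit : IsUnit (φ (a - b)) := (isUnit_iff_ne_zero.mpr hd).map φ
    have h0 : (φ (a - b)).mulVec v = 0 := by
      rw [map_sub, Matrix.sub_mulVec, sub_eq_zero]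
      exact hab
    have hdet2 := (Matrix.isUnit_iff_isUnit_det _).mp hunit
    have hveq : v = 0 := by
      have h1 := congrArg ((φ (a - b))⁻¹.mulVec) h0
      rwa [Matrix.mulVec_mulVec, Matrix.nonsing_inv_mul _ hdet2, Matrix.one_mulVec,
        Matrix.mulVec_zero] at h1
    exact hvne hveq
  have hθbij : Function.Bijective θ :=
    (Fintype.bijective_iff_injective_and_card θ).mpr ⟨hθinj, hcardV⟩
  have hcommφ : ∀ δ : Matrix (Fin 4) (Fin 4) (ZMod ℓ), δ * γ = γ * δ →
      ∀ b : K, δ * φ b = φ b * δ := by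
    intro δ hδ b
    have hγmem : γ ∈ Subalgebra.centralizer (ZMod ℓ) {δ} := by
      rw [Subalgebra.mem_centralizer_iff]
      intro y hy
      rw [Set.mem_singleton_iff] at hy
      subst hy
      exact hδ
    have hle : Algebra.adjoin (ZMod ℓ) {γ} ≤ Subalgebra.centralizer (ZMod ℓ) {δ} := by
      apply Algebra.adjoin_le
      intro y hy
      rw [Set.mem_singleton_iff] at hy
      subst hy
      exact hγmem
    obtain ⟨qq, rfl⟩ := AdjoinRoot.mk_surjective b
    rw [hφmk qq]
    have hmem : aeval γ qq ∈ Algebra.adjoin (ZMod ℓ) {γ} :=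
      Polynomial.aeval_mem_adjoin_singleton (ZMod ℓ) γ
    have := (Subalgebra.mem_centralizer_iff (ZMod ℓ)).mp (hle hmem) δ (Set.mem_singleton δ)
    exact this
  have hrange : ∀ δ : Matrix (Fin 4) (Fin 4) (ZMod ℓ), δ * γ = γ * δ → ∃ a : K, δ = φ a := by
    intro δ hδ
    obtain ⟨a, ha⟩ := hθbij.2 (δ.mulVec v)
    refine ⟨a, ?_⟩
    have hall : ∀ w : Fin 4 → ZMod ℓ, (δ - φ a).mulVec w = 0 := by
      intro w
      obtain ⟨b, hb⟩ := hθbij.2 w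
      rw [← hb]
      have hswap : (δ - φ a) * φ b = φ b * (δ - φ a) := by
        rw [sub_mul, mul_sub, hcommφ δ hδ b]
        have hab : φ a * φ b = φ b * φ a := by
          rw [← _root_.map_mul, ← _root_.map_mul, mul_comm]
        rw [hab]
      show (δ - φ a).mulVec ((φ b).mulVec v) = 0
      rw [Matrix.mulVec_mulVec, hswap, ← Matrix.mulVec_mulVec]
      have hzero : (δ - φ a).mulVec v = 0 := by
        have ha' : (φ a).mulVec v = δ.mulVec v := ha
        rw [Matrix.sub_mulVec, ha', sub_self]
      rw [hzero, Matrix.mulVec_zero]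
    have hzero : δ - φ a = 0 := by
      ext i j
      have h1 := congrFun (hall (Pi.single j 1)) i
      simp only [Matrix.mulVec_single, mul_one, Pi.zero_apply] at h1
      simpa using h1
    rw [← sub_eq_zero]
    exact hzero
  -- |K| - 1 divisibility
  have hiden : (ℓ ^ 2 + 1) * (ℓ - 1) * (ℓ + 1) = ℓ ^ 4 - 1 := by
    obtain ⟨k, rfl⟩ : ∃ k, ℓ = k + 1 := ⟨ℓ - 1, by omega⟩
    symm
    apply Nat.sub_eq_of_eq_add
    simp only [Nat.add_sub_cancel]
    ring
  set d : ℕ := (ℓ ^ 2 + 1) * (ℓ - 1) with hd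
  have hdpos : 0 < d := by
    rw [hd]
    exact Nat.mul_pos (by positivity) (by omega)
  have hddvd : d ∣ Fintype.card K - 1 := by
    rw [hcardK, ← hiden]
    exact ⟨ℓ + 1, rfl⟩
  -- the image of nonzero scalars
  have hscal : ∀ x : K, x ^ (ℓ - 1) = 1 → ∃ c : ZMod ℓ, c ≠ 0 ∧ algebraMap (ZMod ℓ) K c = x := by
    intro x hx
    have hZcard : ({a : K | a ^ (ℓ - 1) = 1} : Set K).ncard = ℓ - 1 := by
      apply my_ncard_pow_eq_one K (by omega)
      rw [hcardK, ← hiden]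
      exact ⟨(ℓ ^ 2 + 1) * (ℓ + 1), by ring⟩
    set I : Set K := (algebraMap (ZMod ℓ) K) '' {c : ZMod ℓ | c ≠ 0} with hI
    have hIsub : I ⊆ {a : K | a ^ (ℓ - 1) = 1} := by
      rintro y ⟨c, hc, rfl⟩
      show (algebraMap (ZMod ℓ) K c) ^ (ℓ - 1) = 1
      rw [← _root_.map_pow, ZMod.pow_card_sub_one_eq_one hc, _root_.map_one]
    have hIcard : I.ncard = ℓ - 1 := by
      rw [hI, Set.ncard_image_of_injective _ (algebraMap (ZMod ℓ) K).injective]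
      have hset0 : ({c : ZMod ℓ | c ≠ 0} : Set (ZMod ℓ)) = ↑(Finset.univ.erase (0 : ZMod ℓ)) := by
        ext c; simp
      rw [hset0, Set.ncard_coe_finset, Finset.card_erase_of_mem (Finset.mem_univ _),
        Finset.card_univ, ZMod.card]
    have hIeq : I = {a : K | a ^ (ℓ - 1) = 1} := by
      exact Set.eq_of_subset_of_ncard_le hIsub (by rw [hZcard, hIcard]) (Set.toFinite _)
    have hx' : x ∈ {a : K | a ^ (ℓ - 1) = 1} := hx
    rw [← hIeq] at hx'
    obtain ⟨c, hc, hcx⟩ := hx'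
    exact ⟨c, hc, hcx⟩
  -- the main set identity
  have hsetEq : {δ : Matrix (Fin 4) (Fin 4) (ZMod ℓ) | (∃ m', InGSp4 m' δ) ∧ δ * γ = γ * δ}
      = φ '' {a : K | a ^ d = 1} := by
    ext δ
    constructor
    · rintro ⟨⟨m', hδu, hm'u, hδJ⟩, hcomm⟩
      obtain ⟨a, rfl⟩ := hrange δ hcomm
      refine ⟨a, ?_, rfl⟩
      show a ^ d = 1
      have hUid : U * φ (τ a * a) = m' • U := by rw [← hkey a]; exact hδJ
      have hφid : φ (τ a * a) = m' • 1 := by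
        have h1 := congrArg ((-U) * ·) hUid
        rw [← mul_assoc, hUU, one_mul, Matrix.mul_smul, hUU] at h1
        exact h1
      have hτaa : τ a * a = algebraMap (ZMod ℓ) K m' := by
        apply hφinj
        rw [hφid, AlgHom.commutes, Algebra.algebraMap_eq_smul_one]
      have hm'0 : m' ≠ 0 := hm'u.ne_zero
      have haa : a ^ (ℓ ^ 2 + 1) = algebraMap (ZMod ℓ) K m' := by
        rw [← hτaa, hfrob a, ← pow_succ]
      rw [hd, pow_mul, haa, ← _root_.map_pow, ZMod.pow_card_sub_one_eq_one hm'0, _root_.map_one]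
    · rintro ⟨a, ha, rfl⟩
      have ha' : a ^ d = 1 := ha
      have ha0 : a ≠ 0 := by
        intro h
        rw [h, zero_pow hdpos.ne'] at ha'
        exact zero_ne_one ha'
      have hb : (a ^ (ℓ ^ 2 + 1)) ^ (ℓ - 1) = 1 := by
        rw [← pow_mul, ← hd]; exact ha'
      obtain ⟨c, hc0, hcb⟩ := hscal _ hb
      have hτaa : τ a * a = algebraMap (ZMod ℓ) K c := by
        rw [hfrob a, ← pow_succ, hcb]
      constructor
      · refine ⟨c, (isUnit_iff_ne_zero.mpr ha0).map φ, isUnit_iff_ne_zero.mpr hc0, ?_⟩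
        show (φ a)ᵀ * U * (φ a) = c • U
        rw [hkey a, hτaa, AlgHom.commutes, Algebra.algebraMap_eq_smul_one,
          Matrix.mul_smul, mul_one]
      · rw [← hφr, ← _root_.map_mul, ← _root_.map_mul, mul_comm]
  -- conclusion
  calc centOrder γ
      = ({δ : Matrix (Fin 4) (Fin 4) (ZMod ℓ) |
          (∃ m', InGSp4 m' δ) ∧ δ * γ = γ * δ} : Set _).ncard :=
        Nat.card_coe_set_eq _
    _ = (φ '' {a : K | a ^ d = 1}).ncard := by rw [hsetEq]
    _ = ({a : K | a ^ d = 1} : Set K).ncard := Set.ncard_image_of_injective _ hφinj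
    _ = d := my_ncard_pow_eq_one K hdpos hddvd
end
end

section
/- Let ℓ be an odd prime, a ∈ F_ℓˣ, and let γ ∈ GSp₄(F_ℓ) be a cyclic element with characteristic polynomial (T−a)²(T+a)² and multiplier m(γ) = a². Then the centralizer of γ in GSp₄(F_ℓ) has order 2ℓ²(ℓ−1). -/
open Matrix Polynomial

noncomputable section

private lemma polyzero4 {k : Type*} [Field k] {b0 b1 b2 b3 : k}
    (h : C b0 + C b1 * X + C b2 * X ^ 2 + C b3 * X ^ 3 = 0) :
    b0 = 0 ∧ b1 = 0 ∧ b2 = 0 ∧ b3 = 0 := by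
  refine ⟨?_, ?_, ?_, ?_⟩
  · simpa using congrArg (fun p => Polynomial.coeff p 0) h
  · simpa using congrArg (fun p => Polynomial.coeff p 1) h
  · simpa using congrArg (fun p => Polynomial.coeff p 2) h
  · simpa using congrArg (fun p => Polynomial.coeff p 3) h

private lemma degree_lt4 {k : Type*} [Field k] (b0 b1 b2 b3 : k) :
    (C b0 + C b1 * X + C b2 * X ^ 2 + C b3 * X ^ 3).degree < 4 := by
  have h : (C b0 + C b1 * X + C b2 * X ^ 2 + C b3 * X ^ 3).degree ≤ 3 := by
    compute_degree
  exact lt_of_le_of_lt h (by decide)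


private lemma ann_sq {k : Type*} [Field k] (γ : Matrix (Fin 4) (Fin 4) k) (b : k)
    (v : Fin 4 → k)
    (hu : (aeval γ (X - C b)).mulVec v ≠ 0)
    (hv2 : (aeval γ ((X - C b) ^ 2)).mulVec v = 0) :
    ∀ r : k[X], (aeval γ r).mulVec v = 0 → (X - C b) ^ 2 ∣ r := by
  intro r hr
  have hmono : ((X - C b) ^ 2).Monic := Monic.pow (monic_X_sub_C b) 2
  have hd2 : ((X - C b) ^ 2).degree = 2 := by
    rw [degree_pow, degree_X_sub_C]; rfl
  set t := r %ₘ (X - C b) ^ 2 with htdef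
  have htv : (aeval γ t).mulVec v = 0 := by
    have h1 := modByMonic_add_div r ((X - C b) ^ 2)
    have h2 : (aeval γ (t + (X - C b) ^ 2 * (r /ₘ (X - C b) ^ 2))).mulVec v = 0 := by
      rw [h1]; exact hr
    rw [map_add, Matrix.add_mulVec] at h2
    have h3 : (aeval γ ((X - C b) ^ 2 * (r /ₘ (X - C b) ^ 2))).mulVec v = 0 := by
      rw [mul_comm, _root_.map_mul, ← Matrix.mulVec_mulVec, hv2, Matrix.mulVec_zero]
    rw [h3, add_zero] at h2
    exact h2
  have hdeg : t.degree < 2 := hd2 ▸ degree_modByMonic_lt r hmono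
  have hnd : t.natDegree < 2 := by
    rcases eq_or_ne t 0 with h | h
    · simp [h]
    · exact (natDegree_lt_iff_degree_lt h).mpr (by exact_mod_cast hdeg)
  have hts : t = C (t.coeff 0) + C (t.coeff 1) * X := by
    conv_lhs => rw [t.as_sum_range' 2 hnd]
    rw [Finset.sum_range_succ, Finset.sum_range_succ, Finset.sum_range_zero]
    simp [← C_mul_X_pow_eq_monomial, pow_one]
  set c0 := t.coeff 0 with hc0
  set c1 := t.coeff 1 with hc1
  have hts2 : t = C (c0 + c1 * b) + C c1 * (X - C b) := by
    rw [hts, map_add, _root_.map_mul]; ring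
  have key : ∀ d e : k, (aeval γ (C d + C e * (X - C b))).mulVec v = 0 → d = 0 ∧ e = 0 := by
    intro d e h
    have hexp : (aeval γ (C d + C e * (X - C b))).mulVec v
        = d • v + e • (aeval γ (X - C b)).mulVec v := by
      simp only [map_add, _root_.map_mul, aeval_C, Algebra.algebraMap_eq_smul_one,
        Matrix.add_mulVec, smul_mul_assoc, one_mul, Matrix.smul_mulVec, Matrix.one_mulVec]
    rw [hexp] at h
    have h2 : d • ((aeval γ (X - C b)).mulVec v) = 0 := by
      have h' := congrArg (fun z => (aeval γ (X - C b)).mulVec z) h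
      simp only [Matrix.mulVec_add, Matrix.mulVec_smul, Matrix.mulVec_zero] at h'
      rw [Matrix.mulVec_mulVec, ← _root_.map_mul, ← pow_two, hv2] at h'
      simpa using h'
    have hd0 : d = 0 := by
      rcases smul_eq_zero.mp h2 with h'' | h''
      · exact h''
      · exact absurd h'' hu
    refine ⟨hd0, ?_⟩
    rw [hd0, zero_smul, zero_add] at h
    rcases smul_eq_zero.mp h with h'' | h''
    · exact h''
    · exact absurd h'' hu
  obtain ⟨hd, he⟩ := key _ _ (by rw [← hts2]; exact htv)
  have ht0 : t = 0 := by rw [hts2, hd, he]; simp [hd]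
  have hsplit := modByMonic_add_div r ((X - C b) ^ 2)
  rw [← hsplit, ← htdef, ht0, zero_add]
  exact Dvd.intro _ rfl


private lemma exv4 {k : Type*} [Field k] (M : Matrix (Fin 4) (Fin 4) k) (hM : M ≠ 0) :
    ∃ u : Fin 4 → k, M.mulVec u ≠ 0 := by
  by_contra hc
  push_neg at hc
  apply hM
  ext i j
  have := congrFun (hc (Pi.single j 1)) i
  simpa [Matrix.mulVec_single] using this

private lemma commutant_poly {k : Type*} [Field k] (a : k) (ha : a ≠ 0) (h2 : (2 : k) ≠ 0)
    (γ : Matrix (Fin 4) (Fin 4) k)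
    (hmin : ∀ q : k[X], q.degree < 4 → aeval γ q = 0 → q = 0)
    (hCH : aeval γ ((X - C a) ^ 2 * (X + C a) ^ 2) = 0)
    (δ : Matrix (Fin 4) (Fin 4) k) (hδ : δ * γ = γ * δ) :
    ∃ c0 c1 c2 c3 : k, δ = aeval γ (C c0 + C c1 * X + C c2 * X ^ 2 + C c3 * X ^ 3) := by
  have hXa : (X + C a : k[X]) = X - C (-a) := by rw [map_neg, sub_neg_eq_add]
  have hdeg4 : ((X - C a) ^ 2 * (X + C a) ^ 2 : k[X]).degree = 4 := by
    rw [degree_mul, degree_pow, degree_pow, degree_X_sub_C, degree_X_add_C]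
    rfl
  -- first cyclic piece
  have hp1 : aeval γ ((X + C a) ^ 2 * (X - C a)) ≠ 0 := by
    intro h
    have h0 := hmin _ ?_ h
    · exact (Monic.ne_zero (Monic.mul (Monic.pow (monic_X_add_C a) 2) (monic_X_sub_C a))) h0
    · rw [degree_mul, degree_pow, degree_X_add_C, degree_X_sub_C]
      decide
  obtain ⟨w1, hw1⟩ := exv4 _ hp1
  set v1 : Fin 4 → k := (aeval γ ((X + C a) ^ 2)).mulVec w1 with hv1def
  have hu1 : (aeval γ (X - C a)).mulVec v1 ≠ 0 := by
    rw [hv1def, Matrix.mulVec_mulVec, ← _root_.map_mul, mul_comm]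
    exact hw1
  have hv12 : (aeval γ ((X - C a) ^ 2)).mulVec v1 = 0 := by
    rw [hv1def, Matrix.mulVec_mulVec, ← _root_.map_mul, hCH, Matrix.zero_mulVec]
  -- second cyclic piece
  have hCH' : aeval γ ((X + C a) ^ 2 * (X - C a) ^ 2) = 0 := by
    rw [mul_comm]; exact hCH
  have hp2 : aeval γ ((X - C a) ^ 2 * (X + C a)) ≠ 0 := by
    intro h
    have h0 := hmin _ ?_ h
    · exact (Monic.ne_zero (Monic.mul (Monic.pow (monic_X_sub_C a) 2) (monic_X_add_C a))) h0
    · rw [degree_mul, degree_pow, degree_X_sub_C, degree_X_add_C]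
      decide
  obtain ⟨w2, hw2⟩ := exv4 _ hp2
  set v2 : Fin 4 → k := (aeval γ ((X - C a) ^ 2)).mulVec w2 with hv2def
  have hu2 : (aeval γ (X + C a)).mulVec v2 ≠ 0 := by
    rw [hv2def, Matrix.mulVec_mulVec, ← _root_.map_mul, mul_comm]
    exact hw2
  have hv22 : (aeval γ ((X + C a) ^ 2)).mulVec v2 = 0 := by
    rw [hv2def, Matrix.mulVec_mulVec, ← _root_.map_mul, hCH', Matrix.zero_mulVec]
  -- annihilator lemmas
  have ann1 := ann_sq γ a v1 hu1 hv12
  have hu2' : (aeval γ (X - C (-a))).mulVec v2 ≠ 0 := by rw [← hXa]; exact hu2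
  have hv22' : (aeval γ ((X - C (-a)) ^ 2)).mulVec v2 = 0 := by rw [← hXa]; exact hv22
  have ann2 := ann_sq γ (-a) v2 hu2' hv22'
  -- coprimality
  have h2a : (2 * a : k) ≠ 0 := mul_ne_zero h2 ha
  have hcop : IsCoprime (X - C a : k[X]) (X + C a) := by
    refine ⟨-C (2 * a)⁻¹, C (2 * a)⁻¹, ?_⟩
    have he : (-C ((2 * a)⁻¹) : k[X]) * (X - C a) + C ((2 * a)⁻¹) * (X + C a)
        = C ((2 * a)⁻¹) * C (2 * a) := by
      rw [C_mul, map_ofNat]; ring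
    rw [he, ← C_mul, inv_mul_cancel₀ h2a, C_1]
  have hcop2 : IsCoprime ((X - C a) ^ 2 : k[X]) ((X + C a) ^ 2) := hcop.pow
  -- order of v
  set v : Fin 4 → k := v1 + v2 with hvdef
  have hord : ∀ q : k[X], q.degree < 4 → (aeval γ q).mulVec v = 0 → q = 0 := by
    intro q hq hqv
    have hqv' : (aeval γ q).mulVec v1 + (aeval γ q).mulVec v2 = 0 := by
      rw [← Matrix.mulVec_add]; exact hqv
    have e1 : (aeval γ ((X + C a) ^ 2 * q)).mulVec v1 = 0 := by
      have h := congrArg (fun z => (aeval γ ((X + C a) ^ 2)).mulVec z) hqv'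
      simp only [Matrix.mulVec_add, Matrix.mulVec_zero, Matrix.mulVec_mulVec] at h
      simp only [← _root_.map_mul] at h
      have hz : (aeval γ ((X + C a) ^ 2 * q)).mulVec v2 = 0 := by
        rw [mul_comm, _root_.map_mul, ← Matrix.mulVec_mulVec, hv22, Matrix.mulVec_zero]
      rw [hz, add_zero] at h
      exact h
    have e2 : (aeval γ ((X - C a) ^ 2 * q)).mulVec v2 = 0 := by
      have h := congrArg (fun z => (aeval γ ((X - C a) ^ 2)).mulVec z) hqv'
      simp only [Matrix.mulVec_add, Matrix.mulVec_zero, Matrix.mulVec_mulVec] at h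
      simp only [← _root_.map_mul] at h
      have hz : (aeval γ ((X - C a) ^ 2 * q)).mulVec v1 = 0 := by
        rw [mul_comm, _root_.map_mul, ← Matrix.mulVec_mulVec, hv12, Matrix.mulVec_zero]
      rw [hz, zero_add] at h
      exact h
    have d1 : ((X - C a) ^ 2 : k[X]) ∣ q := hcop2.dvd_of_dvd_mul_left (ann1 _ e1)
    have d2 : ((X + C a) ^ 2 : k[X]) ∣ q := by
      have := ann2 _ e2
      rw [← hXa] at this
      exact hcop2.symm.dvd_of_dvd_mul_left this
    have d3 : ((X - C a) ^ 2 * (X + C a) ^ 2 : k[X]) ∣ q := hcop2.mul_dvd d1 d2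
    exact Polynomial.eq_zero_of_dvd_of_degree_lt d3 (hdeg4 ▸ hq)
  -- linear independence
  set bb : Fin 4 → (Fin 4 → k) := fun i => (γ ^ (i : ℕ)).mulVec v with hbb
  have sum_eq : ∀ g : Fin 4 → k, ∑ i, g i • bb i
      = (aeval γ (C (g 0) + C (g 1) * X + C (g 2) * X ^ 2 + C (g 3) * X ^ 3)).mulVec v := by
    intro g
    simp only [hbb, Fin.sum_univ_four, map_add, _root_.map_mul, map_pow, aeval_X, aeval_C,
      Algebra.algebraMap_eq_smul_one, smul_mul_assoc, one_mul,
      Matrix.add_mulVec, Matrix.smul_mulVec, Matrix.one_mulVec,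
      show ((0 : Fin 4) : ℕ) = 0 from rfl, show ((1 : Fin 4) : ℕ) = 1 from rfl,
      show ((2 : Fin 4) : ℕ) = 2 from rfl, show ((3 : Fin 4) : ℕ) = 3 from rfl]
    norm_num
  have hli : LinearIndependent k bb := by
    rw [Fintype.linearIndependent_iff]
    intro g hg
    have hq0 := hord _ (degree_lt4 (g 0) (g 1) (g 2) (g 3)) (by rw [← sum_eq]; exact hg)
    obtain ⟨e0, e1, e2, e3⟩ := polyzero4 hq0
    intro i
    fin_cases i <;> assumption
  have hcard : Fintype.card (Fin 4) = Module.finrank k (Fin 4 → k) := by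
    simp [Module.finrank_pi]
  let B := basisOfLinearIndependentOfCardEqFinrank hli hcard
  have hBcoe : ∀ i, B i = bb i := by
    intro i
    rw [show B = basisOfLinearIndependentOfCardEqFinrank hli hcard from rfl,
      coe_basisOfLinearIndependentOfCardEqFinrank]
  set c : Fin 4 → k := fun i => B.repr (δ.mulVec v) i with hc
  set p : k[X] := C (c 0) + C (c 1) * X + C (c 2) * X ^ 2 + C (c 3) * X ^ 3 with hp
  have hrepr : δ.mulVec v = (aeval γ p).mulVec v := by
    have h := B.sum_repr (δ.mulVec v)
    calc δ.mulVec v = ∑ i, c i • B i := h.symm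
    _ = ∑ i, c i • bb i := by simp_rw [hBcoe]
    _ = (aeval γ p).mulVec v := sum_eq c
  refine ⟨c 0, c 1, c 2, c 3, ?_⟩
  have hcomm : ∀ i : ℕ, δ * γ ^ i = γ ^ i * δ := fun i => ((Commute.pow_right hδ i))
  have hcp : aeval γ p * γ = γ * aeval γ p := by
    have h1 : aeval γ p * aeval γ (X : k[X]) = aeval γ (X : k[X]) * aeval γ p := by
      rw [← _root_.map_mul, ← _root_.map_mul, mul_comm]
    simpa using h1
  have hcp' : ∀ i : ℕ, γ ^ i * aeval γ p = aeval γ p * γ ^ i :=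
    fun i => ((Commute.pow_left hcp.symm i) : _)
  have hlin : Matrix.toLin' δ = Matrix.toLin' (aeval γ p) := by
    apply B.ext
    intro i
    rw [Matrix.toLin'_apply, Matrix.toLin'_apply, hBcoe i]
    show δ.mulVec ((γ ^ (i : ℕ)).mulVec v) = (aeval γ p).mulVec ((γ ^ (i : ℕ)).mulVec v)
    calc δ.mulVec ((γ ^ (i : ℕ)).mulVec v) = (δ * γ ^ (i : ℕ)).mulVec v :=
          Matrix.mulVec_mulVec v δ _
      _ = (γ ^ (i : ℕ) * δ).mulVec v := by rw [hcomm]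
      _ = (γ ^ (i : ℕ)).mulVec (δ.mulVec v) := (Matrix.mulVec_mulVec v _ δ).symm
      _ = (γ ^ (i : ℕ)).mulVec ((aeval γ p).mulVec v) := by rw [hrepr]
      _ = (γ ^ (i : ℕ) * aeval γ p).mulVec v := Matrix.mulVec_mulVec v _ _
      _ = (aeval γ p * γ ^ (i : ℕ)).mulVec v := by rw [hcp']
      _ = (aeval γ p).mulVec ((γ ^ (i : ℕ)).mulVec v) := (Matrix.mulVec_mulVec v _ _).symm
  exact Matrix.toLin'.injective hlin


private def pB {k : Type*} [Field k] (a e0 e1 e2 e3 : k) : k[X] :=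
  C e0 + C e1 * X + C e2 * (X ^ 2 - C (a ^ 2)) + C e3 * (X ^ 3 - C (a ^ 2) * X)

private def pS {k : Type*} [Field k] (a : k) : k[X] :=
  C (2 * a ^ 2) * X - X ^ 3

private def pT {k : Type*} [Field k] (a x y z w : k) : k[X] :=
  C (a ^ 6 * x) + C (a ^ 4 * y) * pS a + C (a ^ 2 * z) * (pS a) ^ 2 - C (a ^ 8 * z)
    + C w * (pS a) ^ 3 - C (a ^ 6 * w) * pS a

section Ident
variable {k : Type*} [Field k] (a x y z w : k)

private lemma pT_mul_pB :
    pT a x y z w * pB a x y z w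
      = pB a (a ^ 6 * x ^ 2 + a ^ 8 * y ^ 2) (2 * a ^ 6 * x * y) 0 (-(a ^ 4 * x * y))
        + ((C (a ^ 2 * z) * (X ^ 2 - C (2 * a ^ 2))
            + C w * (X * (C (a ^ 4) + (C (a ^ 2) - (X ^ 2 - C (a ^ 2))) * (X ^ 2 - C (2 * a ^ 2)))))
              * pB a x y z w
            - C (a ^ 4 * y ^ 2)
            - (C (a ^ 6 * z) + C (a ^ 4 * y + a ^ 6 * w) * X) * (C z + C w * X))
          * (X ^ 2 - C (a ^ 2)) ^ 2 := by
  simp only [pB, pT, pS, C_mul, C_add, C_sub, map_pow, map_ofNat, map_neg, C_0]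
  ring

private lemma pS_mul_X :
    pS a * X = C (a ^ 4) + (-1) * (X ^ 2 - C (a ^ 2)) ^ 2 := by
  simp only [pS, C_mul, map_pow, map_ofNat]
  ring

end Ident


set_option maxHeartbeats 1000000 in
theorem stmt5 (ℓ : ℕ) (hℓ : ℓ.Prime) (hodd : ℓ ≠ 2) [Fact ℓ.Prime]
    (a : ZMod ℓ) (ha : a ≠ 0)
    (γ : Matrix (Fin 4) (Fin 4) (ZMod ℓ)) (hγ : InGSp4 (a ^ 2) γ)
    (hcyc : IsCyclicMat γ)
    (hchar : γ.charpoly = (X - C a) ^ 2 * (X + C a) ^ 2) :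
    centOrder γ = 2 * ℓ ^ 2 * (ℓ - 1) := by
  haveI : NeZero ℓ := ⟨hℓ.pos.ne'⟩
  have h2 : (2 : ZMod ℓ) ≠ 0 := by
    have : ((2 : ℕ) : ZMod ℓ) ≠ 0 := by
      rw [Ne, ZMod.natCast_eq_zero_iff]
      intro hdvd
      exact hodd ((Nat.prime_dvd_prime_iff_eq hℓ Nat.prime_two).mp hdvd)
    simpa using this
  have hunit : IsUnit γ := hγ.1
  have hs : γᵀ * J4 (ZMod ℓ) * γ = (a ^ 2) • J4 (ZMod ℓ) := hγ.2.2
  have hCH : aeval γ ((X - C a) ^ 2 * (X + C a) ^ 2) = 0 := by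
    rw [← hchar]; exact Matrix.aeval_self_charpoly γ
  have hdeg4 : ((X - C a) ^ 2 * (X + C a) ^ 2 : (ZMod ℓ)[X]).degree = 4 := by
    rw [degree_mul, degree_pow, degree_pow, degree_X_sub_C, degree_X_add_C]
    rfl
  have hmin : ∀ q : (ZMod ℓ)[X], q.degree < 4 → aeval γ q = 0 → q = 0 := by
    intro q hq hq0
    by_contra hne
    have hle := minpoly.degree_le_of_ne_zero (ZMod ℓ) γ hne hq0
    rw [IsCyclicMat] at hcyc
    rw [hcyc, hchar, hdeg4] at hle
    exact absurd hq (not_lt.mpr hle)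
  have hpneq : ((X ^ 2 - C (a ^ 2)) ^ 2 : (ZMod ℓ)[X]) = (X - C a) ^ 2 * (X + C a) ^ 2 := by
    rw [map_pow]; ring
  have hpn2 : aeval γ (((X ^ 2 - C (a ^ 2)) ^ 2 : (ZMod ℓ)[X])) = 0 := by rw [hpneq]; exact hCH
  have aeq : ∀ p q r : (ZMod ℓ)[X], p = q + r * (X ^ 2 - C (a ^ 2)) ^ 2 → aeval γ p = aeval γ q := by
    intro p q r h
    rw [h, map_add, _root_.map_mul, hpn2, mul_zero, add_zero]
  set J := J4 (ZMod ℓ) with hJdef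
  have hJJ : J * J = -1 := by
    show J4 (ZMod ℓ) * J4 (ZMod ℓ) = -1
    ext i j
    fin_cases i <;> fin_cases j <;>
      simp [J4, Matrix.mul_apply, Fin.sum_univ_four, Matrix.one_apply, Matrix.vecHead,
        Matrix.vecTail]
  have Jcanc : ∀ A B : Matrix (Fin 4) (Fin 4) (ZMod ℓ), J * A = J * B → A = B := by
    intro A B h
    have h' := congrArg (fun M => J * M) h
    simp only [← mul_assoc, hJJ, neg_one_mul, neg_inj] at h'
    exact h'
  have mulcanc : ∀ A B : Matrix (Fin 4) (Fin 4) (ZMod ℓ), A * γ = B * γ → A = B := by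
    intro A B h
    obtain ⟨u, hu⟩ := hunit
    rw [← hu] at h
    exact (Units.mul_left_inj u).mp h
  set S := aeval γ (pS a) with hS
  have hSg : S * γ = (a ^ 4) • (1 : Matrix (Fin 4) (Fin 4) (ZMod ℓ)) := by
    have e := aeq _ _ _ (pS_mul_X a)
    rw [_root_.map_mul, aeval_X, aeval_C, Algebra.algebraMap_eq_smul_one] at e
    rw [hS]; exact e
  have hT1 : (a ^ 2) • (γᵀ * J) = J * S := by
    apply mulcanc
    have l : ((a ^ 2) • (γᵀ * J)) * γ = (a ^ 2 * a ^ 2) • J := by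
      rw [smul_mul_assoc, hs, smul_smul]
    have r : (J * S) * γ = (a ^ 4) • J := by
      rw [mul_assoc, hSg, mul_smul_comm, mul_one]
    rw [l, r, show (a ^ 2 * a ^ 2 : ZMod ℓ) = a ^ 4 by ring]
  have hTn : ∀ n : ℕ, (a ^ (2 * n)) • (γᵀ ^ n * J) = J * S ^ n := by
    intro n
    induction n with
    | zero => simp
    | succ n ih =>
      calc (a ^ (2 * (n + 1))) • (γᵀ ^ (n + 1) * J)
          = (a ^ 2) • (γᵀ * ((a ^ (2 * n)) • (γᵀ ^ n * J))) := by
            rw [mul_smul_comm, smul_smul, ← pow_add, pow_succ']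
            rw [mul_assoc]
            congr 2
            ring
        _ = (a ^ 2) • (γᵀ * (J * S ^ n)) := by rw [ih]
        _ = ((a ^ 2) • (γᵀ * J)) * S ^ n := by rw [← mul_assoc, smul_mul_assoc]
        _ = (J * S) * S ^ n := by rw [hT1]
        _ = J * S ^ (n + 1) := by rw [mul_assoc, ← pow_succ']
  have hT2 : (a ^ 4) • (γᵀ ^ 2 * J) = J * S ^ 2 := by
    have := hTn 2; norm_num at this; exact this
  have hT3 : (a ^ 6) • (γᵀ ^ 3 * J) = J * S ^ 3 := by
    have := hTn 3; norm_num at this; exact this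
  have hT1' : (a ^ 2) • (γᵀ ^ 1 * J) = J * S ^ 1 := by
    have := hTn 1; norm_num at this; simpa using this
  -- expansion of aeval of pB
  have hBexp : ∀ x y z w : ZMod ℓ, aeval γ (pB a x y z w)
      = x • 1 + y • γ + z • (γ ^ 2 - (a ^ 2) • 1) + w • (γ ^ 3 - (a ^ 2) • γ) := by
    intro x y z w
    simp only [pB, map_add, map_sub, _root_.map_mul, map_pow, aeval_X, aeval_C,
      Algebra.algebraMap_eq_smul_one, smul_mul_assoc, one_mul, _root_.smul_pow, one_pow, smul_smul]
    try module
  -- the master transpose identity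
  have hTrans : ∀ x y z w : ZMod ℓ,
      (a ^ 6) • ((aeval γ (pB a x y z w))ᵀ * J) = J * aeval γ (pT a x y z w) := by
    intro x y z w
    have hBt : (aeval γ (pB a x y z w))ᵀ
        = x • 1 + y • γᵀ + z • (γᵀ ^ 2 - (a ^ 2) • 1) + w • (γᵀ ^ 3 - (a ^ 2) • γᵀ) := by
      rw [hBexp]
      simp [Matrix.transpose_add, Matrix.transpose_smul, Matrix.transpose_sub,
        Matrix.transpose_pow, Matrix.transpose_one]
    have hpTexp : aeval γ (pT a x y z w)
        = (a ^ 6 * x) • 1 + (a ^ 4 * y) • S + (a ^ 2 * z) • S ^ 2 - (a ^ 8 * z) • 1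
            + w • S ^ 3 - (a ^ 6 * w) • S := by
      simp only [pT, map_add, map_sub, _root_.map_mul, map_pow, aeval_X, aeval_C,
        Algebra.algebraMap_eq_smul_one, smul_mul_assoc, one_mul, _root_.smul_pow, one_pow,
        smul_smul, ← hS]
      try module
    calc (a ^ 6) • ((aeval γ (pB a x y z w))ᵀ * J)
        = (a ^ 6 * x) • J + (a ^ 4 * y) • ((a ^ 2) • (γᵀ ^ 1 * J))
            + (a ^ 2 * z) • ((a ^ 4) • (γᵀ ^ 2 * J)) - (a ^ 8 * z) • J
            + w • ((a ^ 6) • (γᵀ ^ 3 * J)) - (a ^ 6 * w) • ((a ^ 2) • (γᵀ ^ 1 * J)) := by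
          rw [hBt]
          simp only [add_mul, sub_mul, smul_mul_assoc, one_mul, pow_one]
          module
      _ = (a ^ 6 * x) • J + (a ^ 4 * y) • (J * S ^ 1) + (a ^ 2 * z) • (J * S ^ 2)
            - (a ^ 8 * z) • J + w • (J * S ^ 3) - (a ^ 6 * w) • (J * S ^ 1) := by
          rw [hT1', hT2, hT3]
      _ = J * aeval γ (pT a x y z w) := by
          rw [hpTexp]
          simp only [mul_add, mul_sub, mul_smul_comm, mul_one, pow_one]
  -- coefficient extraction
  have pBz : ∀ e0 e1 e2 e3 : ZMod ℓ, aeval γ (pB a e0 e1 e2 e3) = 0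
      → e0 = 0 ∧ e1 = 0 ∧ e2 = 0 ∧ e3 = 0 := by
    intro e0 e1 e2 e3 h
    have hst : pB a e0 e1 e2 e3
        = C (e0 - a ^ 2 * e2) + C (e1 - a ^ 2 * e3) * X + C e2 * X ^ 2 + C e3 * X ^ 3 := by
      simp only [pB, map_sub, _root_.map_mul]; ring
    rw [hst] at h
    obtain ⟨g0, g1, g2, g3⟩ := polyzero4 (hmin _ (degree_lt4 _ _ _ _) h)
    refine ⟨?_, ?_, g2, g3⟩
    · have : e0 - a ^ 2 * e2 + a ^ 2 * e2 = 0 := by rw [g0, g2]; ring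
      simpa using this
    · have : e1 - a ^ 2 * e3 + a ^ 2 * e3 = 0 := by rw [g1, g3]; ring
      simpa using this
  -- the product reduction
  have hprod : ∀ x y z w : ZMod ℓ, aeval γ (pT a x y z w * pB a x y z w)
      = aeval γ (pB a (a ^ 6 * x ^ 2 + a ^ 8 * y ^ 2) (2 * a ^ 6 * x * y) 0 (-(a ^ 4 * x * y))) :=
    fun x y z w => aeq _ _ _ (pT_mul_pB a x y z w)
  -- C value as smul
  have hCval : ∀ c : ZMod ℓ, aeval γ (C c) = c • (1 : Matrix (Fin 4) (Fin 4) (ZMod ℓ)) := by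
    intro c; rw [aeval_C, Algebra.algebraMap_eq_smul_one]
  -- commuting with γ
  have hcommγ : ∀ p : (ZMod ℓ)[X], aeval γ p * γ = γ * aeval γ p := by
    intro p
    have h1 : aeval γ p * aeval γ (X : (ZMod ℓ)[X]) = aeval γ (X : (ZMod ℓ)[X]) * aeval γ p := by
      rw [← _root_.map_mul, ← _root_.map_mul, mul_comm]
    simpa using h1
  -- the key computation of δᵀ J δ
  have hkey : ∀ x y z w : ZMod ℓ, (a ^ 6) • ((aeval γ (pB a x y z w))ᵀ * J * aeval γ (pB a x y z w))
      = J * aeval γ (pB a (a ^ 6 * x ^ 2 + a ^ 8 * y ^ 2) (2 * a ^ 6 * x * y) 0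
          (-(a ^ 4 * x * y))) := by
    intro x y z w
    calc (a ^ 6) • ((aeval γ (pB a x y z w))ᵀ * J * aeval γ (pB a x y z w))
        = ((a ^ 6) • ((aeval γ (pB a x y z w))ᵀ * J)) * aeval γ (pB a x y z w) := by
          rw [smul_mul_assoc]
      _ = J * aeval γ (pT a x y z w) * aeval γ (pB a x y z w) := by rw [hTrans]
      _ = J * aeval γ (pT a x y z w * pB a x y z w) := by
          rw [mul_assoc, ← _root_.map_mul]
      _ = J * aeval γ (pB a (a ^ 6 * x ^ 2 + a ^ 8 * y ^ 2) (2 * a ^ 6 * x * y) 0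
            (-(a ^ 4 * x * y))) := by rw [hprod]
  have ha6 : (a ^ 6 : ZMod ℓ) ≠ 0 := pow_ne_zero 6 ha
  -- forward direction
  have hfwd : ∀ x y z w m : ZMod ℓ, InGSp4 m (aeval γ (pB a x y z w))
      → x * y = 0 ∧ x ^ 2 + a ^ 2 * y ^ 2 = m := by
    intro x y z w m hI
    have h6 : (a ^ 6) • ((aeval γ (pB a x y z w))ᵀ * J * aeval γ (pB a x y z w))
        = J * ((a ^ 6 * m) • 1) := by
      rw [hI.2.2, smul_smul, mul_smul_comm, mul_one]
    rw [hkey] at h6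
    have h7 := Jcanc _ _ h6
    rw [← hCval] at h7
    have h8 : aeval γ (pB a (a ^ 6 * x ^ 2 + a ^ 8 * y ^ 2 - a ^ 6 * m) (2 * a ^ 6 * x * y) 0
        (-(a ^ 4 * x * y))) = 0 := by
      have e : pB a (a ^ 6 * x ^ 2 + a ^ 8 * y ^ 2 - a ^ 6 * m) (2 * a ^ 6 * x * y) 0
          (-(a ^ 4 * x * y))
          = pB a (a ^ 6 * x ^ 2 + a ^ 8 * y ^ 2) (2 * a ^ 6 * x * y) 0 (-(a ^ 4 * x * y))
            - C (a ^ 6 * m) := by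
        simp only [pB, map_sub, map_add, _root_.map_mul]; ring
      rw [e, map_sub, h7, sub_self]
    obtain ⟨g0, g1, g2, g3⟩ := pBz _ _ _ _ h8
    have hxy : x * y = 0 := by
      have : (a ^ 4) * (x * y) = 0 := by
        have := neg_eq_zero.mp g3
        calc (a ^ 4) * (x * y) = a ^ 4 * x * y := by ring
        _ = 0 := this
      rcases mul_eq_zero.mp this with h | h
      · exact absurd h (pow_ne_zero 4 ha)
      · exact h
    refine ⟨hxy, ?_⟩
    have : a ^ 6 * (x ^ 2 + a ^ 2 * y ^ 2) = a ^ 6 * m := by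
      have := sub_eq_zero.mp g0
      calc a ^ 6 * (x ^ 2 + a ^ 2 * y ^ 2) = a ^ 6 * x ^ 2 + a ^ 8 * y ^ 2 := by ring
      _ = a ^ 6 * m := this
    exact mul_left_cancel₀ ha6 this
  -- backward direction
  have hbwd : ∀ x y z w : ZMod ℓ, x * y = 0 → x ^ 2 + a ^ 2 * y ^ 2 ≠ 0
      → InGSp4 (x ^ 2 + a ^ 2 * y ^ 2) (aeval γ (pB a x y z w)) := by
    intro x y z w hxy hm
    set m := x ^ 2 + a ^ 2 * y ^ 2 with hmdef
    have hred : pB a (a ^ 6 * x ^ 2 + a ^ 8 * y ^ 2) (2 * a ^ 6 * x * y) 0 (-(a ^ 4 * x * y))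
        = C (a ^ 6 * m) := by
      have e1 : (2 * a ^ 6 * x * y : ZMod ℓ) = 2 * a ^ 6 * (x * y) := by ring
      have e2 : (-(a ^ 4 * x * y) : ZMod ℓ) = -(a ^ 4 * (x * y)) := by ring
      have e3 : (a ^ 6 * x ^ 2 + a ^ 8 * y ^ 2 : ZMod ℓ) = a ^ 6 * m := by rw [hmdef]; ring
      rw [e1, e2, e3, hxy]
      simp [pB]
    have hTd : aeval γ (pT a x y z w) * aeval γ (pB a x y z w) = (a ^ 6 * m) • 1 := by
      rw [← _root_.map_mul, hprod, hred, hCval]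
    have ha6m : (a ^ 6 * m : ZMod ℓ) ≠ 0 := mul_ne_zero ha6 hm
    have hcommT : aeval γ (pB a x y z w) * aeval γ (pT a x y z w)
        = aeval γ (pT a x y z w) * aeval γ (pB a x y z w) := by
      rw [← _root_.map_mul, ← _root_.map_mul, mul_comm]
    have hδu : IsUnit (aeval γ (pB a x y z w)) := by
      refine ⟨⟨aeval γ (pB a x y z w), (a ^ 6 * m)⁻¹ • aeval γ (pT a x y z w), ?_, ?_⟩, rfl⟩
      · rw [mul_smul_comm, hcommT, hTd, smul_smul, inv_mul_cancel₀ ha6m, one_smul]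
      · rw [smul_mul_assoc, hTd, smul_smul, inv_mul_cancel₀ ha6m, one_smul]
    refine ⟨hδu, isUnit_iff_ne_zero.mpr hm, ?_⟩
    have h6 : (a ^ 6) • ((aeval γ (pB a x y z w))ᵀ * J * aeval γ (pB a x y z w))
        = (a ^ 6) • (m • J) := by
      rw [hkey]
      have e : pB a (a ^ 6 * x ^ 2 + a ^ 8 * y ^ 2) (2 * a ^ 6 * x * y) 0 (-(a ^ 4 * x * y))
          = C (a ^ 6 * m) := hred
      rw [e, hCval, mul_smul_comm, mul_one, smul_smul]
    exact smul_right_injective _ ha6 h6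
  -- counting
  have hmem : ∀ x y z w : ZMod ℓ, x * y = 0 → x ^ 2 + a ^ 2 * y ^ 2 ≠ 0 →
      (∃ m, InGSp4 m (aeval γ (pB a x y z w))) ∧
        aeval γ (pB a x y z w) * γ = γ * aeval γ (pB a x y z w) :=
    fun x y z w h1 h2' => ⟨⟨_, hbwd x y z w h1 h2'⟩, hcommγ _⟩
  let F : ({u : ZMod ℓ // u ≠ 0} × Bool × ZMod ℓ × ZMod ℓ) →
      {δ : Matrix (Fin 4) (Fin 4) (ZMod ℓ) // (∃ m, InGSp4 m δ) ∧ δ * γ = γ * δ} :=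
    fun d => ⟨aeval γ (pB a (cond d.2.1 d.1.1 0) (cond d.2.1 0 d.1.1)
        d.2.2.1 d.2.2.2), by
      rcases d with ⟨⟨u, hu⟩, b, z, w⟩
      cases b
      · simpa using hmem 0 u z w (by ring)
          (by simpa using mul_ne_zero (pow_ne_zero 2 ha) (pow_ne_zero 2 hu))
      · simpa using hmem u 0 z w (by ring) (by simpa using pow_ne_zero 2 hu)⟩
  have hinjc : ∀ x y z w x' y' z' w' : ZMod ℓ,
      aeval γ (pB a x y z w) = aeval γ (pB a x' y' z' w') →
      x = x' ∧ y = y' ∧ z = z' ∧ w = w' := by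
    intro x y z w x' y' z' w' h
    have hdiff : aeval γ (pB a (x - x') (y - y') (z - z') (w - w')) = 0 := by
      have e : pB a (x - x') (y - y') (z - z') (w - w')
          = pB a x y z w - pB a x' y' z' w' := by
        simp only [pB, map_sub]; ring
      rw [e, map_sub, h, sub_self]
    obtain ⟨g0, g1, g2, g3⟩ := pBz _ _ _ _ hdiff
    exact ⟨sub_eq_zero.mp g0, sub_eq_zero.mp g1, sub_eq_zero.mp g2, sub_eq_zero.mp g3⟩
  have hFinj : Function.Injective F := by
    rintro ⟨⟨u, hu⟩, b, z, w⟩ ⟨⟨u', hu'⟩, b', z', w'⟩ h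
    have hval : aeval γ (pB a (cond b u 0) (cond b 0 u) z w)
        = aeval γ (pB a (cond b' u' 0) (cond b' 0 u') z' w') := congrArg Subtype.val h
    obtain ⟨e0, e1, e2, e3⟩ := hinjc _ _ _ _ _ _ _ _ hval
    subst e2; subst e3
    cases b <;> cases b'
    · simp only [Bool.cond_false] at e1
      subst e1; rfl
    · simp only [Bool.cond_false, Bool.cond_true] at e0
      exact absurd e0.symm hu'
    · simp only [Bool.cond_false, Bool.cond_true] at e0
      exact absurd e0 hu
    · simp only [Bool.cond_true] at e0
      subst e0; rfl
  have hFsurj : Function.Surjective F := by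
    rintro ⟨δ, ⟨m, hm⟩, hcm⟩
    obtain ⟨c0, c1, c2, c3, hδp⟩ := commutant_poly a ha h2 γ hmin hCH δ hcm
    have hform : δ = aeval γ (pB a (c0 + a ^ 2 * c2) (c1 + a ^ 2 * c3) c2 c3) := by
      have e : (C c0 + C c1 * X + C c2 * X ^ 2 + C c3 * X ^ 3 : (ZMod ℓ)[X])
          = pB a (c0 + a ^ 2 * c2) (c1 + a ^ 2 * c3) c2 c3 := by
        simp only [pB, map_add, _root_.map_mul]; ring
      rw [hδp, e]
    set x := c0 + a ^ 2 * c2 with hxdef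
    set y := c1 + a ^ 2 * c3 with hydef
    have hm' : InGSp4 m (aeval γ (pB a x y c2 c3)) := by rw [← hform]; exact hm
    obtain ⟨hxy, hmeq⟩ := hfwd _ _ _ _ _ hm'
    have hm0 : m ≠ 0 := isUnit_iff_ne_zero.mp hm.2.1
    rcases eq_or_ne x 0 with hx0 | hx0
    · have hy0 : y ≠ 0 := by
        intro hy0
        rw [hx0, hy0] at hmeq
        simp at hmeq
        exact hm0 hmeq.symm
      refine ⟨(⟨y, hy0⟩, false, c2, c3), ?_⟩
      apply Subtype.ext
      show aeval γ (pB a 0 y c2 c3) = δ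
      rw [hform, hx0]
    · have hy0 : y = 0 := (mul_eq_zero.mp hxy).resolve_left hx0
      refine ⟨(⟨x, hx0⟩, true, c2, c3), ?_⟩
      apply Subtype.ext
      show aeval γ (pB a x 0 c2 c3) = δ
      rw [hform, hy0]
  have hcount := Nat.card_eq_of_bijective F ⟨hFinj, hFsurj⟩
  have hA : Nat.card {u : ZMod ℓ // u ≠ 0} = ℓ - 1 := by
    rw [← Nat.card_congr (unitsEquivNeZero (G₀ := ZMod ℓ)), Nat.card_eq_fintype_card,
      ZMod.card_units_eq_totient, Nat.totient_prime hℓ]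
  have hB : Nat.card Bool = 2 := by simp [Nat.card_eq_fintype_card]
  show Nat.card {δ : Matrix (Fin 4) (Fin 4) (ZMod ℓ) // (∃ m, InGSp4 m δ) ∧ δ * γ = γ * δ}
      = 2 * ℓ ^ 2 * (ℓ - 1)
  rw [← hcount, Nat.card_prod, Nat.card_prod, Nat.card_prod, hA, hB, Nat.card_zmod]
  generalize ℓ - 1 = q
  ring
end
end

section
/- Let ℓ be a prime, let a₁ ≠ a₂ be elements of F_ℓˣ, and let γ ∈ GSp₄(F_ℓ) be a cyclic element with characteristic polynomial (T−a₁)²(T−a₂)² and multiplier m(γ) = a₁a₂. Then the centralizer of γ in GSp₄(F_ℓ) has order ℓ(ℓ−1)². -/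
open Matrix Polynomial

noncomputable section

namespace Stmt6Aux

variable {k : Type*} [Field k]

abbrev M4 (k : Type*) [Field k] := Matrix (Fin 4) (Fin 4) k

def gam0 (a b : k) : Matrix (Fin 4) (Fin 4) k := !![a,0,0,0; 1,a,0,0; 0,0,b,0; 0,0,1,b]
def dmat (x y z w : k) : Matrix (Fin 4) (Fin 4) k := !![x,0,0,0; y,x,0,0; 0,0,z,0; 0,0,w,z]
def smat (c q r : k) : Matrix (Fin 4) (Fin 4) k := !![0,0,c,q; 0,0,r,0; -c,-r,0,0; -q,0,0,0]

lemma commutant_gam0 {a b : k} (hab : a ≠ b) (δ : Matrix (Fin 4) (Fin 4) k)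
    (h : δ * gam0 a b = gam0 a b * δ) :
    δ = dmat (δ 0 0) (δ 1 0) (δ 2 2) (δ 3 2) := by
  have hij : ∀ i j, (δ * gam0 a b) i j = (gam0 a b * δ) i j := fun i j => by rw [h]
  have key : ∀ x : k, x * b = a * x → x = 0 := by
    intro x hx
    have : x * (b - a) = 0 := by ring_nf; linear_combination hx
    rcases mul_eq_zero.1 this with h' | h'
    · exact h'
    · exact absurd (sub_eq_zero.1 h').symm hab
  have key' : ∀ x : k, x * a = b * x → x = 0 := by
    intro x hx
    have : x * (a - b) = 0 := by ring_nf; linear_combination hx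
    rcases mul_eq_zero.1 this with h' | h'
    · exact h'
    · exact absurd (sub_eq_zero.1 h') hab
  have e00 := hij 0 0; have e02 := hij 0 2; have e03 := hij 0 3
  have e10 := hij 1 0; have e12 := hij 1 2; have e13 := hij 1 3
  have e20 := hij 2 0; have e21 := hij 2 1; have e22 := hij 2 2
  have e30 := hij 3 0; have e31 := hij 3 1; have e32 := hij 3 2
  simp [gam0, Matrix.mul_apply, Fin.sum_univ_four, Matrix.vecHead, Matrix.vecTail] at e00 e02 e03 e10 e12 e13 e20 e21 e22 e30 e31 e32
  have h01 : δ 0 1 = 0 := by linear_combination e00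
  have h03 : δ 0 3 = 0 := key _ e03
  have h02 : δ 0 2 = 0 := key _ (by linear_combination e02 - h03)
  have h11 : δ 1 1 = δ 0 0 := by linear_combination e10
  have h13 : δ 1 3 = 0 := key _ (by linear_combination e13 + h03)
  have h12 : δ 1 2 = 0 := key _ (by linear_combination e12 - h13 + h02)
  have h21 : δ 2 1 = 0 := key' _ e21
  have h20 : δ 2 0 = 0 := key' _ (by linear_combination e20 - h21)
  have h23 : δ 2 3 = 0 := by linear_combination e22
  have h31 : δ 3 1 = 0 := key' _ (by linear_combination e31 + h21)
  have h30 : δ 3 0 = 0 := key' _ (by linear_combination e30 - h31 + h20)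
  have h33 : δ 3 3 = δ 2 2 := by linear_combination e32
  ext i j
  fin_cases i <;> fin_cases j <;>
    simp [dmat, Matrix.vecHead, Matrix.vecTail, h01, h02, h03, h11, h12, h13, h20, h21, h23, h30, h31, h33]

lemma form_struct {a b : k} (ha : a ≠ 0) (hb : b ≠ 0) (hab : a ≠ b)
    (Jm : Matrix (Fin 4) (Fin 4) k) (hskew : Jm.transpose = -Jm) (hdet : Jm.det ≠ 0)
    (hint : (gam0 a b).transpose * Jm * gam0 a b = (a * b) • Jm) :
    Jm = smat (Jm 0 2) (Jm 0 3) (Jm 1 2)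
      ∧ a * Jm 0 3 + b * Jm 1 2 = 0 ∧ Jm 0 3 ≠ 0 ∧ Jm 1 2 ≠ 0 := by
  have hsk : ∀ i j, Jm j i = -Jm i j := by
    intro i j
    have h2 : Jm.transpose i j = (-Jm) i j := by rw [hskew]
    simpa [Matrix.transpose_apply] using h2
  have cancel : ∀ c x : k, c ≠ 0 → x * c = 0 → x = 0 := by
    intro c x hc h
    rcases mul_eq_zero.1 h with h' | h'
    · exact h'
    · exact absurd h' hc
  have haab : a * (a - b) ≠ 0 := mul_ne_zero ha (sub_ne_zero.2 hab)
  have hbba : b * (b - a) ≠ 0 := mul_ne_zero hb (sub_ne_zero.2 (Ne.symm hab))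
  have hij : ∀ i j, ((gam0 a b).transpose * Jm * gam0 a b) i j = ((a * b) • Jm) i j :=
    fun i j => by rw [hint]
  have e00 := hij 0 0; have e01 := hij 0 1; have e02 := hij 0 2; have e11 := hij 1 1
  have e12 := hij 1 2; have e22 := hij 2 2; have e23 := hij 2 3; have e33 := hij 3 3
  simp [gam0, Matrix.mul_apply, Fin.sum_univ_four, Matrix.vecHead, Matrix.vecTail]
    at e00 e01 e02 e11 e12 e22 e23 e33
  have h11 : Jm 1 1 = 0 := cancel _ _ haab (by linear_combination e11)
  have h33 : Jm 3 3 = 0 := cancel _ _ hbba (by linear_combination e33)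
  have h01 : Jm 0 1 = 0 := cancel _ _ haab (by linear_combination e01 - a * h11)
  have h23 : Jm 2 3 = 0 := cancel _ _ hbba (by linear_combination e23 - b * h33)
  have h13 : Jm 1 3 = 0 := cancel _ _ ha (by linear_combination e12)
  have h00 : Jm 0 0 = 0 := cancel _ _ haab (by linear_combination e00 - h11 - a * hsk 0 1)
  have h22 : Jm 2 2 = 0 := cancel _ _ hbba (by linear_combination e22 - h33 - b * hsk 2 3)
  have hrel : a * Jm 0 3 + b * Jm 1 2 = 0 := by linear_combination e02 - h13
  have h10 : Jm 1 0 = 0 := by rw [hsk 0 1, h01, neg_zero]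
  have h31 : Jm 3 1 = 0 := by rw [hsk 1 3, h13, neg_zero]
  have h32 : Jm 3 2 = 0 := by rw [hsk 2 3, h23, neg_zero]
  have hshape : Jm = smat (Jm 0 2) (Jm 0 3) (Jm 1 2) := by
    ext i j
    fin_cases i <;> fin_cases j <;>
      simp [smat, Matrix.vecHead, Matrix.vecTail, h00, h01, h10, h11, h13, h22, h23, h31, h32, h33,
        hsk 0 2, hsk 1 2, hsk 0 3]
  have hdetS : Jm.det = (Jm 0 3 * Jm 1 2) ^ 2 := by
    conv_lhs => rw [hshape]
    simp [smat, Matrix.det_succ_row_zero, Fin.sum_univ_succ, Matrix.vecHead, Matrix.vecTail,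
      Fin.succAbove]
    ring
  refine ⟨hshape, hrel, ?_, ?_⟩
  · intro h
    exact hdet (by rw [hdetS, h]; ring)
  · intro h
    exact hdet (by rw [hdetS, h]; ring)

lemma dmat_det (x y z w : k) : (dmat x y z w).det = (x * z) ^ 2 := by
  simp [dmat, Matrix.det_succ_row_zero, Fin.sum_univ_succ, Matrix.vecHead, Matrix.vecTail,
    Fin.succAbove]
  ring

lemma dmat_isUnit_iff (x y z w : k) : IsUnit (dmat x y z w) ↔ x ≠ 0 ∧ z ≠ 0 := by
  rw [Matrix.isUnit_iff_isUnit_det, dmat_det, isUnit_iff_ne_zero]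
  constructor
  · intro h
    constructor
    · intro hx; apply h; rw [hx]; ring
    · intro hz; apply h; rw [hz]; ring
  · rintro ⟨hx, hz⟩ h
    exact (mul_ne_zero hx hz) (pow_eq_zero_iff (by norm_num) |>.1 h)

lemma dmat_commute (a b x y z w : k) :
    dmat x y z w * gam0 a b = gam0 a b * dmat x y z w := by
  ext i j
  fin_cases i <;> fin_cases j <;>
    simp [dmat, gam0, Matrix.mul_apply, Fin.sum_univ_four, Matrix.vecHead, Matrix.vecTail] <;>
    ring

lemma dmat_sim_fwd {c q r : k} (hq : q ≠ 0) {x y z w m : k}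
    (h : (dmat x y z w).transpose * smat c q r * dmat x y z w = m • smat c q r) :
    m = x * z ∧ r * (y * z) + q * (x * w) = 0 := by
  have hij : ∀ i j, ((dmat x y z w).transpose * smat c q r * dmat x y z w) i j
      = (m • smat c q r) i j := fun i j => by rw [h]
  have e03 := hij 0 3
  have e02 := hij 0 2
  simp [dmat, smat, Matrix.mul_apply, Fin.sum_univ_four, Matrix.vecHead, Matrix.vecTail] at e03 e02
  have hm : m = x * z := by
    have h2 : (x * z - m) * q = 0 := by linear_combination e03
    rcases mul_eq_zero.1 h2 with h' | h'
    · linear_combination -h'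
    · exact absurd h' hq
  refine ⟨hm, ?_⟩
  linear_combination e02 + c * hm

lemma dmat_sim_bwd {c q r x y z w : k} (hrel : r * (y * z) + q * (x * w) = 0) :
    (dmat x y z w).transpose * smat c q r * dmat x y z w = (x * z) • smat c q r := by
  ext i j
  fin_cases i <;> fin_cases j <;>
    simp [dmat, smat, Matrix.mul_apply, Fin.sum_univ_four, Matrix.vecHead, Matrix.vecTail] <;>
    first
      | ring1
      | linear_combination hrel
      | linear_combination -hrel

lemma model_card {a b : k} (ha : a ≠ 0) (hb : b ≠ 0) (hab : a ≠ b)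
    (Jm : Matrix (Fin 4) (Fin 4) k) (hskew : Jm.transpose = -Jm) (hdet : Jm.det ≠ 0)
    (hint : (gam0 a b).transpose * Jm * gam0 a b = (a * b) • Jm) :
    Nat.card {δ : Matrix (Fin 4) (Fin 4) k //
        (∃ m : k, IsUnit δ ∧ IsUnit m ∧ δ.transpose * Jm * δ = m • Jm) ∧ δ * gam0 a b = gam0 a b * δ}
      = Nat.card (kˣ × kˣ × k) := by
  obtain ⟨hshape, hrel, hq, hr⟩ := form_struct ha hb hab Jm hskew hdet hint
  set c := Jm 0 2 with hc
  set q := Jm 0 3 with hqd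
  set r := Jm 1 2 with hrd
  symm
  have hw : ∀ (x z : kˣ) (y : k),
      r * (y * (z : k)) + q * ((x : k) * (-(r * (y * (z : k))) / (q * (x : k)))) = 0 := by
    intro x z y
    have hqx : q * (x : k) ≠ 0 := mul_ne_zero hq x.ne_zero
    field_simp
    ring
  refine Nat.card_eq_of_bijective
    (fun p => ⟨dmat (p.1 : k) p.2.2 (p.2.1 : k)
        (-(r * (p.2.2 * (p.2.1 : k))) / (q * (p.1 : k))), ?_, ?_⟩) ⟨?_, ?_⟩
  · refine ⟨(p.1 : k) * (p.2.1 : k), (dmat_isUnit_iff _ _ _ _).2 ⟨p.1.ne_zero, p.2.1.ne_zero⟩,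
      (p.1.isUnit.mul p.2.1.isUnit), ?_⟩
    rw [hshape]
    exact dmat_sim_bwd (hw p.1 p.2.1 p.2.2)
  · exact dmat_commute a b _ _ _ _
  · rintro ⟨x1, z1, y1⟩ ⟨x2, z2, y2⟩ hFeq
    have hval := congrArg Subtype.val hFeq
    simp only at hval
    have h00 : (x1 : k) = (x2 : k) := by
      have := congrFun (congrFun hval 0) 0
      simpa [dmat] using this
    have h22 : (z1 : k) = (z2 : k) := by
      have := congrFun (congrFun hval 2) 2
      simpa [dmat] using this
    have h10 : y1 = y2 := by
      have := congrFun (congrFun hval 1) 0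
      simpa [dmat] using this
    exact Prod.ext (Units.ext h00) (Prod.ext (Units.ext h22) h10)
  · rintro ⟨δ, ⟨m, hu, hm, hsim⟩, hcomm⟩
    have hδ := commutant_gam0 hab δ hcomm
    set x := δ 0 0; set y := δ 1 0; set z := δ 2 2; set w := δ 3 2
    have hxz : x ≠ 0 ∧ z ≠ 0 := (dmat_isUnit_iff x y z w).1 (hδ ▸ hu)
    have hsim' : (dmat x y z w).transpose * smat c q r * dmat x y z w = m • smat c q r := by
      rw [← hδ, ← hshape]; exact hsim
    obtain ⟨hmxz, hrel2⟩ := dmat_sim_fwd hq hsim'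
    refine ⟨⟨Units.mk0 x hxz.1, Units.mk0 z hxz.2, y⟩, ?_⟩
    have hwval : -(r * (y * z)) / (q * x) = w := by
      rw [div_eq_iff (mul_ne_zero hq hxz.1)]
      linear_combination -hrel2
    apply Subtype.ext
    simp only [Units.val_mk0]
    rw [hwval, ← hδ]

lemma exists_vec {a b : k} (γ : M4 k)
    (hmin : minpoly k γ = (X - C a) ^ 2 * (X - C b) ^ 2) :
    ∃ v : Fin 4 → k,
      ((γ - algebraMap k (M4 k) a) * (γ - algebraMap k (M4 k) a)) *ᵥ v = 0 ∧
      (γ - algebraMap k (M4 k) a) *ᵥ v ≠ 0 := by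
  set N1 := γ - algebraMap k (M4 k) a with hN1
  set N2 := γ - algebraMap k (M4 k) b with hN2
  have haev : aeval γ ((X - C a) ^ 2 * (X - C b) ^ 2) = 0 := by
    rw [← hmin]; exact minpoly.aeval k γ
  have hP : (N1 * N1) * (N2 * N2) = 0 := by
    have : aeval γ ((X - C a) ^ 2 * (X - C b) ^ 2)
        = (N1 * N1) * (N2 * N2) := by
      simp [_root_.map_mul, map_pow, _root_.map_sub, aeval_X, aeval_C, sq, hN1, hN2]
    rw [← this, haev]
  by_contra hcon
  push_neg at hcon
  have hq0 : N1 * (N2 * N2) = 0 := by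
    have hall : ∀ v : Fin 4 → k, (N1 * (N2 * N2)) *ᵥ v = 0 := by
      intro v
      have h1 : (N1 * N1) *ᵥ ((N2 * N2) *ᵥ v) = 0 := by
        rw [Matrix.mulVec_mulVec, mul_assoc, ← mul_assoc N1 N1, hP, Matrix.zero_mulVec]
      have := hcon ((N2 * N2) *ᵥ v) h1
      rwa [Matrix.mulVec_mulVec] at this
    ext i j
    have := congrFun (hall (Pi.single j 1)) i
    rw [Matrix.mulVec_single] at this
    simpa using this
  have haevq : aeval γ ((X - C a) * (X - C b) ^ 2) = 0 := by
    have : aeval γ ((X - C a) * (X - C b) ^ 2) = N1 * (N2 * N2) := by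
      simp [_root_.map_mul, map_pow, _root_.map_sub, aeval_X, aeval_C, sq, hN1, hN2]
    rw [this, hq0]
  have hdvd : minpoly k γ ∣ (X - C a) * (X - C b) ^ 2 := minpoly.dvd k γ haevq
  have hqne : ((X - C a) * (X - C b) ^ 2 : k[X]) ≠ 0 :=
    ((monic_X_sub_C a).mul ((monic_X_sub_C b).pow 2)).ne_zero
  have hle := Polynomial.natDegree_le_of_dvd hdvd hqne
  have hdeg1 : (minpoly k γ).natDegree = 4 := by
    rw [hmin]
    compute_degree!
  have hdeg2 : ((X - C a) * (X - C b) ^ 2 : k[X]).natDegree = 3 := by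
    compute_degree!
  omega

lemma exists_conj {a b : k} (hab : a ≠ b) (γ : M4 k)
    (hmin : minpoly k γ = (X - C a) ^ 2 * (X - C b) ^ 2) :
    ∃ g : M4 k, IsUnit g ∧ γ * g = g * gam0 a b := by
  have halg : ∀ (c : k) (v : Fin 4 → k), (algebraMap k (M4 k) c) *ᵥ v = c • v := by
    intro c v
    simp [Algebra.algebraMap_eq_smul_one, Matrix.smul_mulVec]
  obtain ⟨v1, hv1a, hv1b⟩ := exists_vec γ hmin
  obtain ⟨v2, hv2a, hv2b⟩ := exists_vec γ (show minpoly k γ = (X - C b) ^ 2 * (X - C a) ^ 2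
    by rw [hmin]; ring)
  set N1 := γ - algebraMap k (M4 k) a with hN1
  set N2 := γ - algebraMap k (M4 k) b with hN2
  set u1 := N1 *ᵥ v1 with hu1
  set u2 := N2 *ᵥ v2 with hu2
  have hba : b - a ≠ 0 := sub_ne_zero.2 (Ne.symm hab)
  have hcop : IsCoprime ((X - C a) ^ 2 : k[X]) ((X - C b) ^ 2) := by
    apply IsCoprime.pow
    refine ⟨C (b - a)⁻¹, -C (b - a)⁻¹, ?_⟩
    have h1 : C (b-a)⁻¹ * (X - C a) + -C (b-a)⁻¹ * (X - C b) = C (b-a)⁻¹ * C (b - a) := by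
      rw [C_sub]; ring
    rw [h1, ← C_mul, inv_mul_cancel₀ hba, C_1]
  obtain ⟨s, t, hst⟩ := hcop
  have hmat : aeval γ s * (N1 * N1) + aeval γ t * (N2 * N2) = 1 := by
    have h2 := congrArg (aeval γ) hst
    simpa [_root_.map_mul, map_pow, _root_.map_add, _root_.map_sub, aeval_X, aeval_C, sq,
      hN1, hN2] using h2
  have hg1 : γ *ᵥ v1 = a • v1 + u1 := by
    rw [hu1, hN1, Matrix.sub_mulVec, halg]
    abel
  have hg3 : γ *ᵥ v2 = b • v2 + u2 := by
    rw [hu2, hN2, Matrix.sub_mulVec, halg]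
    abel
  have hN1u1 : N1 *ᵥ u1 = 0 := by
    rw [hu1, Matrix.mulVec_mulVec, hv1a]
  have hN2u2 : N2 *ᵥ u2 = 0 := by
    rw [hu2, Matrix.mulVec_mulVec, hv2a]
  have hg2 : γ *ᵥ u1 = a • u1 := by
    have h3 : N1 *ᵥ u1 = γ *ᵥ u1 - a • u1 := by rw [hN1, Matrix.sub_mulVec, halg]
    rw [h3] at hN1u1
    exact sub_eq_zero.1 hN1u1
  have hg4 : γ *ᵥ u2 = b • u2 := by
    have h3 : N2 *ᵥ u2 = γ *ᵥ u2 - b • u2 := by rw [hN2, Matrix.sub_mulVec, halg]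
    rw [h3] at hN2u2
    exact sub_eq_zero.1 hN2u2
  set bv : Fin 4 → (Fin 4 → k) := ![v1, u1, v2, u2] with hbv
  set g : M4 k := Matrix.of (fun i j => bv j i) with hgdef
  have hker : ∀ cv : Fin 4 → k, g *ᵥ cv = 0 → cv = 0 := by
    intro cv hcv
    have hgv : g *ᵥ cv = (cv 0 • v1 + cv 1 • u1) + (cv 2 • v2 + cv 3 • u2) := by
      funext i
      simp [hgdef, Matrix.mulVec, dotProduct, Fin.sum_univ_four, hbv]
      ring
    set w1 : Fin 4 → k := cv 0 • v1 + cv 1 • u1 with hw1def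
    set w2 : Fin 4 → k := cv 2 • v2 + cv 3 • u2 with hw2def
    have hsum : w1 + w2 = 0 := by rw [← hgv, hcv]
    have hP1w1 : (N1 * N1) *ᵥ w1 = 0 := by
      rw [hw1def, Matrix.mulVec_add, Matrix.mulVec_smul, Matrix.mulVec_smul, hv1a]
      have h4 : (N1 * N1) *ᵥ u1 = 0 := by
        rw [hu1, Matrix.mulVec_mulVec, mul_assoc, ← Matrix.mulVec_mulVec, hv1a, Matrix.mulVec_zero]
      rw [h4]
      simp
    have hP2w2 : (N2 * N2) *ᵥ w2 = 0 := by
      rw [hw2def, Matrix.mulVec_add, Matrix.mulVec_smul, Matrix.mulVec_smul, hv2a]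
      have h4 : (N2 * N2) *ᵥ u2 = 0 := by
        rw [hu2, Matrix.mulVec_mulVec, mul_assoc, ← Matrix.mulVec_mulVec, hv2a, Matrix.mulVec_zero]
      rw [h4]
      simp
    have hP2w1 : (N2 * N2) *ᵥ w1 = 0 := by
      have h5 : w1 = -w2 := eq_neg_of_add_eq_zero_left hsum
      rw [h5, Matrix.mulVec_neg, hP2w2, neg_zero]
    have hw1 : w1 = 0 := by
      have h6 : (aeval γ s * (N1 * N1) + aeval γ t * (N2 * N2)) *ᵥ w1 = w1 := by
        rw [hmat, Matrix.one_mulVec]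
      have h7 : (aeval γ s * (N1 * N1)) *ᵥ w1 = 0 := by
        rw [← Matrix.mulVec_mulVec, hP1w1, Matrix.mulVec_zero]
      have h8 : (aeval γ t * (N2 * N2)) *ᵥ w1 = 0 := by
        rw [← Matrix.mulVec_mulVec, hP2w1, Matrix.mulVec_zero]
      rwa [Matrix.add_mulVec, h7, h8, add_zero, eq_comm] at h6
    have hw2 : w2 = 0 := by
      rw [hw1, zero_add] at hsum
      exact hsum
    have hc0 : cv 0 = 0 := by
      have h7 : N1 *ᵥ w1 = cv 0 • u1 := by
        rw [hw1def, Matrix.mulVec_add, Matrix.mulVec_smul, Matrix.mulVec_smul, hN1u1, ← hu1]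
        simp
      rw [hw1, Matrix.mulVec_zero] at h7
      rcases smul_eq_zero.1 h7.symm with h | h
      · exact h
      · exact absurd h hv1b
    have hc1 : cv 1 = 0 := by
      rw [hw1def, hc0, zero_smul, zero_add] at hw1
      rcases smul_eq_zero.1 hw1 with h | h
      · exact h
      · exact absurd h hv1b
    have hc2 : cv 2 = 0 := by
      have h7 : N2 *ᵥ w2 = cv 2 • u2 := by
        rw [hw2def, Matrix.mulVec_add, Matrix.mulVec_smul, Matrix.mulVec_smul, hN2u2, ← hu2]
        simp
      rw [hw2, Matrix.mulVec_zero] at h7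
      rcases smul_eq_zero.1 h7.symm with h | h
      · exact h
      · exact absurd h hv2b
    have hc3 : cv 3 = 0 := by
      rw [hw2def, hc2, zero_smul, zero_add] at hw2
      rcases smul_eq_zero.1 hw2 with h | h
      · exact h
      · exact absurd h hv2b
    funext i
    fin_cases i
    · exact hc0
    · exact hc1
    · exact hc2
    · exact hc3
  have hdet : g.det ≠ 0 := by
    intro hdet0
    obtain ⟨cv, hc0, hcv⟩ := (Matrix.exists_mulVec_eq_zero_iff).2 hdet0
    exact hc0 (hker cv hcv)
  refine ⟨g, (Matrix.isUnit_iff_isUnit_det g).2 (isUnit_iff_ne_zero.2 hdet), ?_⟩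
  ext i j
  fin_cases j
  · have h8 := congrFun hg1 i
    simp [Matrix.mulVec, dotProduct, Fin.sum_univ_four] at h8
    simp [hgdef, hbv, gam0, Matrix.mul_apply, Fin.sum_univ_four, Matrix.vecHead, Matrix.vecTail]
    linear_combination h8
  · have h8 := congrFun hg2 i
    simp [Matrix.mulVec, dotProduct, Fin.sum_univ_four] at h8
    simp [hgdef, hbv, gam0, Matrix.mul_apply, Fin.sum_univ_four, Matrix.vecHead, Matrix.vecTail]
    linear_combination h8
  · have h8 := congrFun hg3 i
    simp [Matrix.mulVec, dotProduct, Fin.sum_univ_four] at h8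
    simp [hgdef, hbv, gam0, Matrix.mul_apply, Fin.sum_univ_four, Matrix.vecHead, Matrix.vecTail]
    linear_combination h8
  · have h8 := congrFun hg4 i
    simp [Matrix.mulVec, dotProduct, Fin.sum_univ_four] at h8
    simp [hgdef, hbv, gam0, Matrix.mul_apply, Fin.sum_univ_four, Matrix.vecHead, Matrix.vecTail]
    linear_combination h8

lemma J4_transpose : (J4 k).transpose = -(J4 k) := by
  ext i j
  fin_cases i <;> fin_cases j <;>
    simp [J4, Matrix.transpose_apply, Matrix.vecHead, Matrix.vecTail]

lemma J4_det : (J4 k).det = 1 := by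
  simp [J4, Matrix.det_succ_row_zero, Fin.sum_univ_succ, Matrix.vecHead, Matrix.vecTail,
    Fin.succAbove]

end Stmt6Aux

open Stmt6Aux in
theorem stmt6 (ℓ : ℕ) (hℓ : ℓ.Prime) [Fact ℓ.Prime]
    (a₁ a₂ : ZMod ℓ) (ha₁ : a₁ ≠ 0) (ha₂ : a₂ ≠ 0) (hne : a₁ ≠ a₂)
    (γ : Matrix (Fin 4) (Fin 4) (ZMod ℓ)) (hγ : InGSp4 (a₁ * a₂) γ)
    (hcyc : IsCyclicMat γ)
    (hchar : γ.charpoly = (X - C a₁) ^ 2 * (X - C a₂) ^ 2) :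
    centOrder γ = ℓ * (ℓ - 1) ^ 2 := by
  classical
  obtain ⟨hγu, hmu, hγJ⟩ := hγ
  have hmin : minpoly (ZMod ℓ) γ = (X - C a₁) ^ 2 * (X - C a₂) ^ 2 := hcyc.trans hchar
  obtain ⟨g, hg, hconj⟩ := exists_conj hne γ hmin
  have hgd : IsUnit g.det := (Matrix.isUnit_iff_isUnit_det g).1 hg
  set gi := g⁻¹ with hgi
  have hgg : g * gi = 1 := Matrix.mul_nonsing_inv g hgd
  have hgg' : gi * g = 1 := Matrix.nonsing_inv_mul g hgd
  set Jm := g.transpose * J4 (ZMod ℓ) * g with hJm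
  have hskew : Jm.transpose = -Jm := by
    rw [hJm, Matrix.transpose_mul, Matrix.transpose_mul, Matrix.transpose_transpose,
      J4_transpose]
    simp only [Matrix.mul_neg, Matrix.neg_mul, Matrix.mul_assoc]
  have hdet : Jm.det ≠ 0 := by
    rw [hJm, Matrix.det_mul, Matrix.det_mul, Matrix.det_transpose, J4_det, mul_one]
    exact mul_ne_zero (IsUnit.ne_zero hgd) (IsUnit.ne_zero hgd)
  have hint : (gam0 a₁ a₂).transpose * Jm * gam0 a₁ a₂ = (a₁ * a₂) • Jm := by
    calc (gam0 a₁ a₂).transpose * Jm * gam0 a₁ a₂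
        = (g * gam0 a₁ a₂).transpose * J4 (ZMod ℓ) * (g * gam0 a₁ a₂) := by
          simp only [hJm, Matrix.transpose_mul, Matrix.mul_assoc]
      _ = (γ * g).transpose * J4 (ZMod ℓ) * (γ * g) := by rw [← hconj]
      _ = g.transpose * (γ.transpose * J4 (ZMod ℓ) * γ) * g := by
          simp only [Matrix.transpose_mul, Matrix.mul_assoc]
      _ = g.transpose * ((a₁ * a₂) • J4 (ZMod ℓ)) * g := by rw [hγJ]
      _ = (a₁ * a₂) • Jm := by
          rw [hJm]
          simp only [Matrix.mul_smul, Matrix.smul_mul]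
  have hred1 : ∀ X : M4 (ZMod ℓ), g * (gi * X) = X := fun X => by
    rw [← Matrix.mul_assoc, hgg, Matrix.one_mul]
  have hgit : gi.transpose * g.transpose = 1 := by
    rw [← Matrix.transpose_mul, hgg, Matrix.transpose_one]
  have hgam : gam0 a₁ a₂ = gi * γ * g := by
    rw [Matrix.mul_assoc, hconj, ← Matrix.mul_assoc, hgg', Matrix.one_mul]
  have hsim_iff : ∀ (δ : M4 (ZMod ℓ)) (m : ZMod ℓ),
      (δ.transpose * J4 (ZMod ℓ) * δ = m • J4 (ZMod ℓ)) ↔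
      ((gi * δ * g).transpose * Jm * (gi * δ * g) = m • Jm) := by
    intro δ m
    have hLHS : (gi * δ * g).transpose * Jm * (gi * δ * g)
        = g.transpose * (δ.transpose * J4 (ZMod ℓ) * δ) * g := by
      simp only [hJm, Matrix.transpose_mul, Matrix.mul_assoc]
      congr 1
      congr 1
      rw [← Matrix.mul_assoc gi.transpose g.transpose, hgit, Matrix.one_mul]
      congr 1
      rw [← Matrix.mul_assoc g gi, hgg, Matrix.one_mul]
    constructor
    · intro h
      rw [hLHS, h, hJm]
      simp only [Matrix.mul_smul, Matrix.smul_mul]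
    · intro h
      rw [hLHS] at h
      have h2 : m • Jm = g.transpose * (m • J4 (ZMod ℓ)) * g := by
        rw [hJm]; simp only [Matrix.mul_smul, Matrix.smul_mul]
      rw [h2] at h
      have h3 := congrArg (fun X => gi.transpose * X * gi) h
      have hred : ∀ Y : M4 (ZMod ℓ), gi.transpose * (g.transpose * Y * g) * gi = Y := by
        intro Y
        rw [← Matrix.mul_assoc, ← Matrix.mul_assoc, hgit, Matrix.one_mul, Matrix.mul_assoc,
          hgg, Matrix.mul_one]
      rw [hred, hred] at h3
      exact h3
  have hcomm_iff : ∀ δ : M4 (ZMod ℓ),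
      (δ * γ = γ * δ) ↔ ((gi * δ * g) * gam0 a₁ a₂ = gam0 a₁ a₂ * (gi * δ * g)) := by
    intro δ
    rw [hgam]
    constructor
    · intro h
      calc gi * δ * g * (gi * γ * g) = gi * (δ * (g * (gi * (γ * g)))) := by
            simp only [Matrix.mul_assoc]
        _ = gi * ((δ * γ) * g) := by rw [hred1]; simp only [Matrix.mul_assoc]
        _ = gi * ((γ * δ) * g) := by rw [h]
        _ = gi * γ * g * (gi * δ * g) := by
            simp only [Matrix.mul_assoc]
            rw [hred1 (δ * g)]
    · intro h
      have h2 : gi * (δ * (γ * g)) = gi * (γ * (δ * g)) := by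
        calc gi * (δ * (γ * g)) = gi * δ * g * (gi * γ * g) := by
              simp only [Matrix.mul_assoc]
              rw [hred1 (γ * g)]
          _ = gi * γ * g * (gi * δ * g) := h
          _ = gi * (γ * (δ * g)) := by
              simp only [Matrix.mul_assoc]
              rw [hred1 (δ * g)]
      have h3 := congrArg (fun X => g * X) h2
      simp only [hred1] at h3
      have h5 := congrArg (fun X => X * gi) h3
      have hL : δ * (γ * g) * gi = δ * γ := by
        rw [← Matrix.mul_assoc δ γ g, Matrix.mul_assoc (δ * γ) g gi, hgg, Matrix.mul_one]
      have hR : γ * (δ * g) * gi = γ * δ := by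
        rw [← Matrix.mul_assoc γ δ g, Matrix.mul_assoc (γ * δ) g gi, hgg, Matrix.mul_one]
      rw [← hL, ← hR]
      exact h5
  have hIsUnit_iff : ∀ δ : M4 (ZMod ℓ), IsUnit δ ↔ IsUnit (gi * δ * g) := by
    intro δ
    have hgiu : IsUnit gi := ⟨⟨gi, g, hgg', hgg⟩, rfl⟩
    constructor
    · intro h
      exact (hgiu.mul h).mul hg
    · intro h
      have h2 : δ = g * (gi * δ * g) * gi := by
        simp only [← Matrix.mul_assoc]
        rw [hgg, Matrix.one_mul, Matrix.mul_assoc, hgg, Matrix.mul_one]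
      rw [h2]
      exact (hg.mul h).mul hgiu
  let conj : M4 (ZMod ℓ) ≃ M4 (ZMod ℓ) :=
    { toFun := fun δ => gi * δ * g
      invFun := fun δ => g * δ * gi
      left_inv := by
        intro δ
        simp only [← Matrix.mul_assoc]
        rw [hgg, Matrix.one_mul, Matrix.mul_assoc, hgg, Matrix.mul_one]
      right_inv := by
        intro δ
        simp only [← Matrix.mul_assoc]
        rw [hgg', Matrix.one_mul, Matrix.mul_assoc, hgg', Matrix.mul_one] }
  have hpred : ∀ δ : M4 (ZMod ℓ),
      ((∃ m, InGSp4 m δ) ∧ δ * γ = γ * δ) ↔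
      ((∃ m : ZMod ℓ, IsUnit (conj δ) ∧ IsUnit m ∧
          (conj δ).transpose * Jm * (conj δ) = m • Jm)
        ∧ (conj δ) * gam0 a₁ a₂ = gam0 a₁ a₂ * (conj δ)) := by
    intro δ
    show ((∃ m, InGSp4 m δ) ∧ δ * γ = γ * δ) ↔
      ((∃ m : ZMod ℓ, IsUnit (gi * δ * g) ∧ IsUnit m ∧
          (gi * δ * g).transpose * Jm * (gi * δ * g) = m • Jm)
        ∧ (gi * δ * g) * gam0 a₁ a₂ = gam0 a₁ a₂ * (gi * δ * g))
    simp only [InGSp4]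
    constructor
    · rintro ⟨⟨m, hu, hm, hsim⟩, hcomm⟩
      exact ⟨⟨m, (hIsUnit_iff δ).1 hu, hm, (hsim_iff δ m).1 hsim⟩, (hcomm_iff δ).1 hcomm⟩
    · rintro ⟨⟨m, hu, hm, hsim⟩, hcomm⟩
      exact ⟨⟨m, (hIsUnit_iff δ).2 hu, hm, (hsim_iff δ m).2 hsim⟩, (hcomm_iff δ).2 hcomm⟩
  have hcard : centOrder γ = Nat.card ((ZMod ℓ)ˣ × (ZMod ℓ)ˣ × ZMod ℓ) := by
    rw [centOrder, Nat.card_congr (Equiv.subtypeEquiv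
      (q := fun δ' => (∃ m : ZMod ℓ, IsUnit δ' ∧ IsUnit m ∧
          δ'.transpose * Jm * δ' = m • Jm) ∧ δ' * gam0 a₁ a₂ = gam0 a₁ a₂ * δ') conj hpred)]
    exact model_card ha₁ ha₂ hne Jm hskew hdet hint
  rw [hcard, Nat.card_prod, Nat.card_prod, Nat.card_zmod,
    Nat.card_eq_fintype_card, ZMod.card_units]
  ring
end
end

section
/- Let ℓ be an odd prime, let m ∈ F_ℓˣ be a nonsquare, and let γ ∈ GSp₄(F_ℓ) be a cyclic element with characteristic polynomial (T²−m)² and multiplier m(γ) = m. Then the centralizer of γ in GSp₄(F_ℓ) has order 2ℓ²(ℓ−1). -/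
open Matrix Polynomial

noncomputable section

lemma J4_mul_J4 (k : Type*) [CommRing k] : J4 k * J4 k = -1 := by
  ext i j
  fin_cases i <;> fin_cases j <;>
    simp [J4, Matrix.mul_apply, Fin.sum_univ_four, Matrix.one_apply,
      Matrix.vecHead, Matrix.vecTail]

section Count

variable {k : Type*} [Field k]

/-- The parameter space `{(A,B) // A*B = 0, (A,B) ≠ 0}` is in bijection with `kˣ ⊕ kˣ`. -/
def countEquiv : (kˣ ⊕ kˣ) ≃ {p : k × k // p.1 * p.2 = 0 ∧ p ≠ 0} := by
  classical
  refine Equiv.ofBijective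
    (fun x => Sum.rec (fun u => ⟨((u : k), 0), by simp, by simp [Prod.ext_iff, u.ne_zero]⟩)
      (fun u => ⟨(0, (u : k)), by simp, by simp [Prod.ext_iff, u.ne_zero]⟩) x) ⟨?_, ?_⟩
  · rintro (u | u) (u' | u') h <;>
      simp only [Subtype.mk.injEq, Prod.mk.injEq] at h
    · exact congrArg Sum.inl (Units.ext h.1)
    · exact absurd h.1 u.ne_zero
    · exact absurd h.2 u.ne_zero
    · exact congrArg Sum.inr (Units.ext h.2)
  · rintro ⟨⟨A, B⟩, hAB, hne⟩
    have hAB' : A * B = 0 := hAB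
    rcases mul_eq_zero.mp hAB' with hA | hB
    · have hB : B ≠ 0 := by
        intro h; exact hne (by simp [Prod.ext_iff, hA, h])
      exact ⟨Sum.inr (Units.mk0 B hB), Subtype.ext (by simp [hA])⟩
    · have hA : A ≠ 0 := by
        intro h; exact hne (by simp [Prod.ext_iff, hB, h])
      exact ⟨Sum.inl (Units.mk0 A hA), Subtype.ext (by simp [hB])⟩

end Count

set_option maxHeartbeats 1000000 in
lemma masterIdentity {k : Type*} [CommRing k] (m A B c d : k) :
    (C m * C A + C B * ((C m + C m) * X - X ^ 3)
        - C m * C c * (X ^ 2 - C m) - C m * C d * (X ^ 3 - C m * X))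
      * (C A + C B * X + C c * (X ^ 2 - C m) + C d * (X ^ 3 - C m * X))
    = (X ^ 2 - C m) ^ 2
        * (-(C B * C B) - C m * C c * C c
          - (C B * C c + (C m * C c * C d + C m * C c * C d)) * X
          - (C B * C d + C m * C d * C d) * X ^ 2)
      + (C m * (C A * C A + C m * C B * C B) + (C m * C A * C B + C m * C A * C B) * X
          - C A * C B * (X ^ 3 - C m * X)) := by
  ring

set_option maxHeartbeats 2000000 in
theorem stmt8 (ℓ : ℕ) (hℓ : ℓ.Prime) (hodd : ℓ ≠ 2) [Fact ℓ.Prime]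
    (m : ZMod ℓ) (hm : m ≠ 0) (hns : ¬ IsSquare m)
    (γ : Matrix (Fin 4) (Fin 4) (ZMod ℓ)) (hγ : InGSp4 m γ)
    (hcyc : IsCyclicMat γ)
    (hchar : γ.charpoly = (X ^ 2 - C m) ^ 2) :
    centOrder γ = 2 * ℓ ^ 2 * (ℓ - 1) := by
  classical
  obtain ⟨hγu, hmu, hγJ⟩ := hγ
  have hJJ : J4 (ZMod ℓ) * J4 (ZMod ℓ) = -1 := J4_mul_J4 (ZMod ℓ)
  set q : (ZMod ℓ)[X] := (X ^ 2 - C m) ^ 2 with hq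
  have hCH : aeval γ q = 0 := by
    have h := γ.aeval_self_charpoly
    rwa [hchar] at h
  -- evaluation modulo q
  have heq : ∀ p₁ p₂ r : (ZMod ℓ)[X], p₁ = q * r + p₂ → aeval γ p₁ = aeval γ p₂ := by
    intro p₁ p₂ r h
    rw [h, map_add, _root_.map_mul, hCH, zero_mul, zero_add]
  set N : Matrix (Fin 4) (Fin 4) (ZMod ℓ) := aeval γ (X ^ 2 - C m) with hNdef
  set G : Matrix (Fin 4) (Fin 4) (ZMod ℓ) := aeval γ (X ^ 3 - C m * X) with hGdef
  have hPQ : ∀ p₁ p₂ : (ZMod ℓ)[X], aeval γ p₁ * aeval γ p₂ = aeval γ p₂ * aeval γ p₁ := by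
    intro p₁ p₂; rw [← _root_.map_mul, ← _root_.map_mul, mul_comm]
  have hNs : N = γ ^ 2 - m • 1 := by
    rw [hNdef]
    simp only [map_sub, map_pow, aeval_X, aeval_C, Algebra.algebraMap_eq_smul_one]
  have hGs : G = γ ^ 3 - m • γ := by
    rw [hGdef]
    simp only [map_sub, map_pow, _root_.map_mul, aeval_X, aeval_C,
      Algebra.algebraMap_eq_smul_one, smul_mul_assoc, one_mul]
  have hGmul : G = γ * N := by
    rw [hGdef, hNdef, show (X ^ 3 - C m * X : (ZMod ℓ)[X]) = X * (X ^ 2 - C m) from by ring,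
      _root_.map_mul, aeval_X]
  have hNN : N * N = 0 := by
    rw [hNdef, ← _root_.map_mul,
      heq ((X ^ 2 - C m) * (X ^ 2 - C m)) 0 1 (by rw [hq]; ring), map_zero]
  have hNG : N * G = 0 := by
    rw [hNdef, hGdef, ← _root_.map_mul,
      heq ((X ^ 2 - C m) * (X ^ 3 - C m * X)) 0 X (by rw [hq]; ring), map_zero]
  have hNγ : N * γ = G := by
    rw [hNdef, hGdef, show (X ^ 3 - C m * X : (ZMod ℓ)[X]) = (X ^ 2 - C m) * X from by ring,
      _root_.map_mul, aeval_X]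
  -- N ≠ 0 since the minimal polynomial has degree 4
  have hNne : N ≠ 0 := by
    intro h
    have hdvd : minpoly (ZMod ℓ) γ ∣ (X ^ 2 - C m) := by
      apply minpoly.dvd
      rw [hNdef] at h
      exact h
    rw [hcyc, hchar] at hdvd
    have hne : (X ^ 2 - C m : (ZMod ℓ)[X]) ≠ 0 := by
      intro h0
      have h1 := natDegree_X_pow_sub_C (n := 2) (r := m) (R := ZMod ℓ)
      rw [h0] at h1
      simp at h1
    have hle := Polynomial.natDegree_le_of_dvd hdvd hne
    rw [Polynomial.natDegree_pow, natDegree_X_pow_sub_C] at hle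
    omega
  -- a vector not killed by N
  have hv : ∃ v : Fin 4 → ZMod ℓ, N.mulVec v ≠ 0 := by
    by_contra h
    push_neg at h
    apply hNne
    ext i j
    have h2 := congrFun (h (Pi.single j 1)) i
    rw [Matrix.mulVec_single_one] at h2
    simpa using h2
  obtain ⟨v, hvne⟩ := hv
  -- the key independence lemma
  have hL : ∀ a b : ZMod ℓ, a • N.mulVec v + b • G.mulVec v = 0 → a = 0 ∧ b = 0 := by
    intro a b hab
    have hGv : G.mulVec v = γ.mulVec (N.mulVec v) := by
      rw [Matrix.mulVec_mulVec, ← hGmul]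
    set u := N.mulVec v with hu
    rw [hGv] at hab
    have h1 : (a • (1 : Matrix (Fin 4) (Fin 4) (ZMod ℓ)) + b • γ).mulVec u = 0 := by
      rwa [Matrix.add_mulVec, Matrix.smul_mulVec, Matrix.smul_mulVec,
        Matrix.one_mulVec]
    have h2 : ((a • (1 : Matrix (Fin 4) (Fin 4) (ZMod ℓ)) - b • γ)
        * (a • (1 : Matrix (Fin 4) (Fin 4) (ZMod ℓ)) + b • γ)).mulVec u = 0 := by
      rw [← Matrix.mulVec_mulVec, h1, Matrix.mulVec_zero]
    have hgg : γ * γ = N + m • 1 := by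
      rw [hNs, pow_two]; abel
    have h3 : (a • (1 : Matrix (Fin 4) (Fin 4) (ZMod ℓ)) - b • γ)
        * (a • (1 : Matrix (Fin 4) (Fin 4) (ZMod ℓ)) + b • γ)
        = (a * a - b * b * m) • 1 - (b * b) • N := by
      simp only [sub_mul, mul_add, smul_mul_assoc, mul_smul_comm, one_mul, mul_one]
      rw [hgg]
      module
    rw [h3] at h2
    have hNu : N.mulVec u = 0 := by
      rw [hu, Matrix.mulVec_mulVec, hNN, Matrix.zero_mulVec]
    rw [Matrix.sub_mulVec, Matrix.smul_mulVec, Matrix.smul_mulVec,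
      Matrix.one_mulVec, hNu, smul_zero, sub_zero] at h2
    have h4 : a * a - b * b * m = 0 := by
      rcases smul_eq_zero.mp h2 with h | h
      · exact h
      · exact absurd h hvne
    by_cases hb : b = 0
    · subst hb
      simp only [mul_zero, zero_mul, sub_zero] at h4
      exact ⟨mul_self_eq_zero.mp h4, rfl⟩
    · exfalso
      apply hns
      refine ⟨a * b⁻¹, ?_⟩
      field_simp
      linear_combination -h4
  -- linear independence of v, γv, Nv, Gv
  have hli : LinearIndependent (ZMod ℓ) ![v, γ.mulVec v, N.mulVec v, G.mulVec v] := by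
    rw [Fintype.linearIndependent_iff]
    intro g hg
    rw [Fin.sum_univ_four] at hg
    simp only [Matrix.cons_val_zero, Matrix.cons_val_one, Matrix.head_cons,
      Matrix.cons_val_two, Matrix.tail_cons, Matrix.cons_val_three] at hg
    have h2 : N.mulVec (g 0 • v + g 1 • γ.mulVec v + g 2 • N.mulVec v + g 3 • G.mulVec v) = 0 := by
      rw [hg, Matrix.mulVec_zero]
    rw [Matrix.mulVec_add, Matrix.mulVec_add, Matrix.mulVec_add,
      Matrix.mulVec_smul, Matrix.mulVec_smul, Matrix.mulVec_smul, Matrix.mulVec_smul,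
      Matrix.mulVec_mulVec, Matrix.mulVec_mulVec, Matrix.mulVec_mulVec,
      hNγ, hNN, hNG, Matrix.zero_mulVec, smul_zero, smul_zero, add_zero, add_zero] at h2
    obtain ⟨h01a, h01b⟩ := hL _ _ h2
    rw [h01a, h01b, zero_smul, zero_smul, zero_add, zero_add] at hg
    obtain ⟨h23a, h23b⟩ := hL _ _ hg
    intro i
    fin_cases i <;> assumption
  have hcard : Fintype.card (Fin 4) = Module.finrank (ZMod ℓ) (Fin 4 → ZMod ℓ) := by
    simp
  set bas := basisOfLinearIndependentOfCardEqFinrank hli hcard with hbas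
  have hbcoe : ⇑bas = ![v, γ.mulVec v, N.mulVec v, G.mulVec v] :=
    coe_basisOfLinearIndependentOfCardEqFinrank hli hcard
  -- canonical elements
  set Δ : ZMod ℓ → ZMod ℓ → ZMod ℓ → ZMod ℓ → Matrix (Fin 4) (Fin 4) (ZMod ℓ) := fun A B c d =>
    aeval γ (C A + C B * X + C c * (X ^ 2 - C m) + C d * (X ^ 3 - C m * X)) with hΔdef
  have hΔ' : ∀ A B c d, Δ A B c d = A • 1 + B • γ + c • N + d • G := by
    intro A B c d
    rw [hΔdef, hNs, hGs]
    simp only [map_add, _root_.map_mul, map_sub, map_pow, aeval_X, aeval_C,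
      Algebra.algebraMap_eq_smul_one, smul_mul_assoc, one_mul]
  have hΔv : ∀ A B c d, (Δ A B c d).mulVec v
      = A • v + B • γ.mulVec v + c • N.mulVec v + d • G.mulVec v := by
    intro A B c d
    rw [hΔ']
    rw [Matrix.add_mulVec, Matrix.add_mulVec, Matrix.add_mulVec,
      Matrix.smul_mulVec, Matrix.smul_mulVec, Matrix.smul_mulVec,
      Matrix.smul_mulVec, Matrix.one_mulVec]
  have hΔγ : ∀ A B c d : ZMod ℓ, Δ A B c d * γ = γ * Δ A B c d := by
    intro A B c d
    have h := hPQ (C A + C B * X + C c * (X ^ 2 - C m) + C d * (X ^ 3 - C m * X)) X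
    rw [aeval_X] at h
    rw [hΔdef]
    exact h
  -- independence of 1, γ, N, G
  have hind : ∀ A B c d : ZMod ℓ, Δ A B c d = 0 → A = 0 ∧ B = 0 ∧ c = 0 ∧ d = 0 := by
    intro A B c d h
    have h2 : A • v + B • γ.mulVec v + c • N.mulVec v + d • G.mulVec v = 0 := by
      rw [← hΔv, h, Matrix.zero_mulVec]
    have h3 := Fintype.linearIndependent_iff.mp hli ![A, B, c, d] (by
      rw [Fin.sum_univ_four]
      simpa using h2)
    exact ⟨h3 0, h3 1, h3 2, h3 3⟩
  -- commutant is the polynomial algebra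
  have hcommutant : ∀ δ : Matrix (Fin 4) (Fin 4) (ZMod ℓ),
      δ * γ = γ * δ → ∃ A B c d, δ = Δ A B c d := by
    intro δ hδγ
    have hco : ∀ p : (ZMod ℓ)[X], δ * aeval γ p = aeval γ p * δ := by
      intro p
      induction p using Polynomial.induction_on with
      | C a =>
          simp only [aeval_C, Algebra.algebraMap_eq_smul_one]
          rw [mul_smul_comm, smul_mul_assoc, mul_one, one_mul]
      | add p1 p2 hp1 hp2 =>
          simp only [map_add, mul_add, add_mul, hp1, hp2]
      | monomial n a ih =>
          simp only [_root_.map_mul, map_pow, aeval_C, aeval_X,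
            Algebra.algebraMap_eq_smul_one, smul_mul_assoc, one_mul, mul_smul_comm]
          rw [Commute.pow_right hδγ (n + 1)]
    refine ⟨bas.repr (δ.mulVec v) 0, bas.repr (δ.mulVec v) 1,
      bas.repr (δ.mulVec v) 2, bas.repr (δ.mulVec v) 3, ?_⟩
    set A := bas.repr (δ.mulVec v) 0
    set B := bas.repr (δ.mulVec v) 1
    set c := bas.repr (δ.mulVec v) 2
    set d := bas.repr (δ.mulVec v) 3
    have hδ'v : (Δ A B c d).mulVec v = δ.mulVec v := by
      rw [hΔv]
      have h := bas.sum_repr (δ.mulVec v)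
      rw [Fin.sum_univ_four] at h
      rw [hbcoe] at h
      simpa using h
    have hδ'γ : Δ A B c d * γ = γ * Δ A B c d := by
      have h := hPQ (C A + C B * X + C c * (X ^ 2 - C m) + C d * (X ^ 3 - C m * X)) X
      rw [aeval_X] at h
      rw [hΔdef]
      exact h
    have hδ'N : Δ A B c d * N = N * Δ A B c d := by
      have h := hPQ (C A + C B * X + C c * (X ^ 2 - C m) + C d * (X ^ 3 - C m * X))
        (X ^ 2 - C m)
      rw [← hNdef] at h
      rw [hΔdef]
      exact h
    have hδ'G : Δ A B c d * G = G * Δ A B c d := by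
      have h := hPQ (C A + C B * X + C c * (X ^ 2 - C m) + C d * (X ^ 3 - C m * X))
        (X ^ 3 - C m * X)
      rw [← hGdef] at h
      rw [hΔdef]
      exact h
    have hδN : δ * N = N * δ := by
      have h := hco (X ^ 2 - C m); rwa [← hNdef] at h
    have hδG : δ * G = G * δ := by
      have h := hco (X ^ 3 - C m * X); rwa [← hGdef] at h
    have key : Matrix.toLin' δ = Matrix.toLin' (Δ A B c d) := by
      apply bas.ext
      intro i
      have h0 : bas 0 = v := by rw [hbcoe]; rfl
      have h1 : bas 1 = γ.mulVec v := by rw [hbcoe]; rfl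
      have h2 : bas 2 = N.mulVec v := by rw [hbcoe]; rfl
      have h3 : bas 3 = G.mulVec v := by rw [hbcoe]; rfl
      fin_cases i
      · show Matrix.toLin' δ (bas 0) = Matrix.toLin' (Δ A B c d) (bas 0)
        rw [Matrix.toLin'_apply, Matrix.toLin'_apply, h0, hδ'v]
      · show Matrix.toLin' δ (bas 1) = Matrix.toLin' (Δ A B c d) (bas 1)
        rw [Matrix.toLin'_apply, Matrix.toLin'_apply, h1, Matrix.mulVec_mulVec,
          Matrix.mulVec_mulVec, hδγ, hδ'γ,
          ← Matrix.mulVec_mulVec, ← Matrix.mulVec_mulVec, hδ'v]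
      · show Matrix.toLin' δ (bas 2) = Matrix.toLin' (Δ A B c d) (bas 2)
        rw [Matrix.toLin'_apply, Matrix.toLin'_apply, h2, Matrix.mulVec_mulVec,
          Matrix.mulVec_mulVec, hδN, hδ'N,
          ← Matrix.mulVec_mulVec, ← Matrix.mulVec_mulVec, hδ'v]
      · show Matrix.toLin' δ (bas 3) = Matrix.toLin' (Δ A B c d) (bas 3)
        rw [Matrix.toLin'_apply, Matrix.toLin'_apply, h3, Matrix.mulVec_mulVec,
          Matrix.mulVec_mulVec, hδG, hδ'G,
          ← Matrix.mulVec_mulVec, ← Matrix.mulVec_mulVec, hδ'v]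
    exact Matrix.toLin'.injective key
  -- the τ involution
  set τf : Matrix (Fin 4) (Fin 4) (ZMod ℓ) → Matrix (Fin 4) (Fin 4) (ZMod ℓ) :=
    fun δ => -(J4 (ZMod ℓ)) * δ.transpose * J4 (ZMod ℓ) with hτf
  have hJl : ∀ x : Matrix (Fin 4) (Fin 4) (ZMod ℓ), J4 (ZMod ℓ) * (J4 (ZMod ℓ) * x) = -x := by
    intro x
    rw [← mul_assoc, hJJ, Matrix.neg_mul, Matrix.one_mul]
  have tau1 : ∀ (δ : Matrix (Fin 4) (Fin 4) (ZMod ℓ)) (μ : ZMod ℓ),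
      δ.transpose * J4 (ZMod ℓ) * δ = μ • J4 (ZMod ℓ) → τf δ * δ = μ • 1 := by
    intro δ μ h
    have h2 : τf δ * δ = -(J4 (ZMod ℓ)) * (δ.transpose * J4 (ZMod ℓ) * δ) := by
      simp only [hτf, Matrix.neg_mul, Matrix.mul_neg, mul_assoc]
    rw [h2, h, mul_smul_comm, Matrix.neg_mul, hJJ, neg_neg]
  have tau2 : ∀ (δ : Matrix (Fin 4) (Fin 4) (ZMod ℓ)) (μ : ZMod ℓ),
      τf δ * δ = μ • 1 → δ.transpose * J4 (ZMod ℓ) * δ = μ • J4 (ZMod ℓ) := by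
    intro δ μ h
    have h2 : J4 (ZMod ℓ) * (τf δ * δ) = μ • J4 (ZMod ℓ) := by
      rw [h, mul_smul_comm, mul_one]
    have h3 : J4 (ZMod ℓ) * (τf δ * δ) = δ.transpose * J4 (ZMod ℓ) * δ := by
      simp only [hτf, Matrix.neg_mul, Matrix.mul_neg, mul_assoc, hJl, neg_neg]
    rw [← h3, h2]
  have hτadd : ∀ x y : Matrix (Fin 4) (Fin 4) (ZMod ℓ), τf (x + y) = τf x + τf y := by
    intro x y
    simp only [hτf, Matrix.transpose_add, Matrix.add_mul, Matrix.mul_add]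
  have hτsmul : ∀ (a : ZMod ℓ) (x : Matrix (Fin 4) (Fin 4) (ZMod ℓ)), τf (a • x) = a • τf x := by
    intro a x
    simp only [hτf, Matrix.transpose_smul, smul_mul_assoc, mul_smul_comm]
  have hτone : τf (1 : Matrix (Fin 4) (Fin 4) (ZMod ℓ)) = 1 := by
    rw [hτf]
    simp only [Matrix.transpose_one, Matrix.mul_one]
    rw [Matrix.neg_mul, hJJ, neg_neg]
  have hτmul : ∀ x y : Matrix (Fin 4) (Fin 4) (ZMod ℓ), τf (x * y) = τf y * τf x := by
    intro x y
    simp only [hτf, Matrix.transpose_mul, Matrix.neg_mul, Matrix.mul_neg, neg_neg, mul_assoc,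
      hJl, Matrix.mul_neg]
  have hτγγ : τf γ * γ = m • 1 := tau1 γ m hγJ
  have hcancel : ∀ x y : Matrix (Fin 4) (Fin 4) (ZMod ℓ), x * γ = y * γ → x = y := by
    intro x y hxy
    obtain ⟨uu, huu⟩ := hγu
    calc x = x * ↑uu * ↑uu⁻¹ := by rw [mul_assoc, Units.mul_inv, mul_one]
    _ = y * ↑uu * ↑uu⁻¹ := by rw [huu, hxy, ← huu]
    _ = y := by rw [mul_assoc, Units.mul_inv, mul_one]
  set w : Matrix (Fin 4) (Fin 4) (ZMod ℓ) :=
    m⁻¹ • aeval γ ((C m + C m) * X - X ^ 3) with hwdef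
  have hmw : m • w = aeval γ ((C m + C m) * X - X ^ 3) := by
    rw [hwdef, smul_smul, mul_inv_cancel₀ hm, one_smul]
  have hwγ : w * γ = m • 1 := by
    rw [hwdef, smul_mul_assoc]
    rw [show aeval γ ((C m + C m) * X - X ^ 3) * γ
        = aeval γ (((C m + C m) * X - X ^ 3) * X) from by rw [_root_.map_mul, aeval_X]]
    rw [heq (((C m + C m) * X - X ^ 3) * X) (C m * C m) (-1) (by rw [hq]; ring)]
    rw [← C_mul, aeval_C, Algebra.algebraMap_eq_smul_one, smul_smul]
    rw [show m⁻¹ * (m * m) = m from by field_simp]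
  have hτγ : τf γ = w := hcancel _ _ (by rw [hτγγ, hwγ])
  have hww : w * w = (m • 1 + m • 1) - γ ^ 2 := by
    have haa : aeval γ ((C m + C m) * X - X ^ 3) * aeval γ ((C m + C m) * X - X ^ 3)
        = (m * m) • ((m • 1 + m • 1) - γ ^ 2) := by
      rw [← _root_.map_mul,
        heq (((C m + C m) * X - X ^ 3) * ((C m + C m) * X - X ^ 3))
          (C (m * m) * (C m + C m - X ^ 2)) (X ^ 2 - (C m + C m)) (by rw [hq, C_mul]; ring)]
      simp only [_root_.map_mul, map_sub, map_add, map_pow, aeval_X, aeval_C,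
        Algebra.algebraMap_eq_smul_one, smul_mul_assoc, one_mul]
      rw [smul_smul]
    rw [hwdef, smul_mul_assoc, mul_smul_comm, haa]
    match_scalars <;> field_simp
  have hτN : τf N = -N := by
    have h1 : τf N = τf (γ * γ) - m • τf 1 := by
      rw [hNs, pow_two]
      rw [show (γ * γ - m • 1 : Matrix (Fin 4) (Fin 4) (ZMod ℓ))
          = γ * γ - m • (1 : Matrix (Fin 4) (Fin 4) (ZMod ℓ)) from rfl]
      rw [show τf (γ * γ - m • 1) = τf (γ * γ) - τf (m • 1) from by
        simp only [hτf, Matrix.transpose_sub, Matrix.sub_mul, Matrix.mul_sub], hτsmul]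
    rw [h1, hτmul, hτγ, hτone, hww, hNs]
    module
  have hNw : N * w = G := by
    rw [hwdef, mul_smul_comm, hNdef, ← _root_.map_mul,
      heq ((X ^ 2 - C m) * ((C m + C m) * X - X ^ 3)) (C m * (X ^ 3 - C m * X)) (-X)
        (by rw [hq]; ring),
      _root_.map_mul, aeval_C, Algebra.algebraMap_eq_smul_one, smul_mul_assoc, one_mul,
      ← hGdef, smul_smul, inv_mul_cancel₀ hm, one_smul]
  have hτG : τf G = -G := by
    conv_lhs => rw [hGmul]
    rw [hτmul, hτN, hτγ, Matrix.neg_mul, hNw]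
  -- the master computation
  have hτΔ : ∀ A B c d : ZMod ℓ, m • τf (Δ A B c d)
      = aeval γ (C m * C A + C B * ((C m + C m) * X - X ^ 3)
        - C m * C c * (X ^ 2 - C m) - C m * C d * (X ^ 3 - C m * X)) := by
    intro A B c d
    rw [hΔ' A B c d]
    rw [show (A • 1 + B • γ + c • N + d • G : Matrix (Fin 4) (Fin 4) (ZMod ℓ))
        = ((A • 1 + B • γ) + c • N) + d • G from rfl]
    rw [hτadd, hτadd, hτadd, hτsmul, hτsmul, hτsmul, hτsmul, hτone, hτγ, hτN, hτG]
    rw [smul_add, smul_add, smul_add, smul_comm m B w, hmw, hNs, hGs]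
    simp only [map_add, map_sub, _root_.map_mul, map_pow, aeval_X, aeval_C,
      Algebra.algebraMap_eq_smul_one, smul_mul_assoc, mul_smul_comm, add_mul, sub_mul,
      one_mul, mul_one]
    module
  have hmaster : ∀ A B c d : ZMod ℓ, m • (τf (Δ A B c d) * Δ A B c d)
      = (m * (A * A + m * (B * B))) • 1 + (m * (A * B) + m * (A * B)) • γ - (A * B) • G := by
    intro A B c d
    rw [← smul_mul_assoc, hτΔ]
    conv_lhs => rw [hΔdef]
    rw [← _root_.map_mul,
      heq ((C m * C A + C B * ((C m + C m) * X - X ^ 3)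
        - C m * C c * (X ^ 2 - C m) - C m * C d * (X ^ 3 - C m * X))
        * (C A + C B * X + C c * (X ^ 2 - C m) + C d * (X ^ 3 - C m * X)))
        (C m * (C A * C A + C m * C B * C B) + (C m * C A * C B + C m * C A * C B) * X
          - C A * C B * (X ^ 3 - C m * X))
        (-(C B * C B) - C m * C c * C c - (C B * C c + (C m * C c * C d + C m * C c * C d)) * X
          - (C B * C d + C m * C d * C d) * X ^ 2)
        (by rw [hq]; exact masterIdentity m A B c d)]
    rw [hGs]
    simp only [map_add, map_sub, _root_.map_mul, map_pow, aeval_X, aeval_C,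
      Algebra.algebraMap_eq_smul_one, smul_mul_assoc, mul_smul_comm, add_mul, sub_mul,
      one_mul, mul_one]
    module
  have hcommτ : ∀ A B c d : ZMod ℓ,
      Δ A B c d * τf (Δ A B c d) = τf (Δ A B c d) * Δ A B c d := by
    intro A B c d
    apply smul_right_injective (Matrix (Fin 4) (Fin 4) (ZMod ℓ)) hm
    show m • _ = m • _
    conv_lhs => rw [← mul_smul_comm, hτΔ]
    conv_rhs => rw [← smul_mul_assoc, hτΔ]
    simp only [hΔdef]
    exact hPQ _ _
  -- forward direction: the canonical elements lie in the centralizer subset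
  have hfwd : ∀ A B c d : ZMod ℓ, A * B = 0 → ¬(A = 0 ∧ B = 0) →
      (∃ μ, InGSp4 μ (Δ A B c d)) ∧ Δ A B c d * γ = γ * Δ A B c d := by
    intro A B c d hAB hne
    have hμne : A * A + m * (B * B) ≠ 0 := by
      rcases mul_eq_zero.mp hAB with hA | hB
      · have hB : B ≠ 0 := fun h => hne ⟨hA, h⟩
        rw [hA]
        simpa using mul_ne_zero hm (mul_ne_zero hB hB)
      · have hA : A ≠ 0 := fun h => hne ⟨h, hB⟩
        rw [hB]
        simpa using mul_ne_zero hA hA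
    have hτΔΔ : τf (Δ A B c d) * Δ A B c d = (A * A + m * (B * B)) • 1 := by
      apply smul_right_injective (Matrix (Fin 4) (Fin 4) (ZMod ℓ)) hm
      show m • _ = m • _
      rw [hmaster, hAB, smul_smul]
      simp
    have hunit : IsUnit (Δ A B c d) := by
      have h1 : Δ A B c d * ((A * A + m * (B * B))⁻¹ • τf (Δ A B c d)) = 1 := by
        rw [mul_smul_comm, hcommτ, hτΔΔ, smul_smul, inv_mul_cancel₀ hμne, one_smul]
      have h2 : ((A * A + m * (B * B))⁻¹ • τf (Δ A B c d)) * Δ A B c d = 1 :=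
        mul_eq_one_comm.mp h1
      exact ⟨⟨Δ A B c d, _, h1, h2⟩, rfl⟩
    refine ⟨⟨A * A + m * (B * B), hunit, isUnit_iff_ne_zero.mpr hμne, ?_⟩, hΔγ A B c d⟩
    exact tau2 _ _ hτΔΔ
  -- backward direction: constraints on coefficients
  have hbwd : ∀ A B c d μ : ZMod ℓ, IsUnit (Δ A B c d) →
      (Δ A B c d).transpose * J4 (ZMod ℓ) * Δ A B c d = μ • J4 (ZMod ℓ) →
      A * B = 0 ∧ ¬(A = 0 ∧ B = 0) := by
    intro A B c d μ hunit hJcond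
    have h1 : τf (Δ A B c d) * Δ A B c d = μ • 1 := tau1 _ _ hJcond
    have h2 : (m * (A * A + m * (B * B))) • (1 : Matrix (Fin 4) (Fin 4) (ZMod ℓ))
        + (m * (A * B) + m * (A * B)) • γ - (A * B) • G = (m * μ) • 1 := by
      rw [← hmaster, h1, smul_smul]
    have h3 : Δ (m * (A * A + m * (B * B)) - m * μ) (m * (A * B) + m * (A * B)) 0 (-(A * B))
        = 0 := by
      rw [hΔ']
      rw [show ((m * (A * A + m * (B * B)) - m * μ) • 1
          + (m * (A * B) + m * (A * B)) • γ + (0 : ZMod ℓ) • N + (-(A * B)) • G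
            : Matrix (Fin 4) (Fin 4) (ZMod ℓ))
          = ((m * (A * A + m * (B * B))) • 1 + (m * (A * B) + m * (A * B)) • γ - (A * B) • G)
            - (m * μ) • 1 from by module]
      rw [h2, sub_self]
    obtain ⟨-, -, -, h4⟩ := hind _ _ _ _ h3
    have hAB : A * B = 0 := by
      have := neg_eq_zero.mp h4
      exact this
    refine ⟨hAB, ?_⟩
    rintro ⟨hA, hB⟩
    have hΔsq : Δ A B c d * Δ A B c d = 0 := by
      conv_lhs => rw [hΔdef]
      rw [hA, hB, ← _root_.map_mul]
      rw [heq ((C 0 + C 0 * X + C c * (X ^ 2 - C m) + C d * (X ^ 3 - C m * X))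
          * (C 0 + C 0 * X + C c * (X ^ 2 - C m) + C d * (X ^ 3 - C m * X))) 0
          ((C c + C d * X) * (C c + C d * X)) (by rw [hq, C_0]; ring), map_zero]
    obtain ⟨u, hu⟩ := hunit
    have hΔ0 : Δ A B c d = 0 := by
      have h5 : (↑u⁻¹ : Matrix (Fin 4) (Fin 4) (ZMod ℓ)) * (Δ A B c d * Δ A B c d)
          = Δ A B c d := by
        rw [← mul_assoc, ← hu, Units.inv_mul, one_mul]
      rw [hΔsq, mul_zero] at h5
      exact h5.symm
    have h10 : (1 : Matrix (Fin 4) (Fin 4) (ZMod ℓ)) = 0 := by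
      have h5 := Units.inv_mul u
      rw [hu, hΔ0, mul_zero] at h5
      exact h5.symm
    have h11 := congrFun (congrFun h10 0) 0
    simp [Matrix.one_apply] at h11
  -- the bijection
  have hMain : centOrder γ
      = Nat.card ({p : ZMod ℓ × ZMod ℓ // p.1 * p.2 = 0 ∧ p ≠ 0} × ZMod ℓ × ZMod ℓ) := by
    rw [centOrder]
    refine (Nat.card_congr (Equiv.ofBijective
      (fun x : {p : ZMod ℓ × ZMod ℓ // p.1 * p.2 = 0 ∧ p ≠ 0} × ZMod ℓ × ZMod ℓ =>
        (⟨Δ x.1.1.1 x.1.1.2 x.2.1 x.2.2, by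
          obtain ⟨⟨⟨A, B⟩, hAB, hne⟩, c, d⟩ := x
          have hne' : ¬(A = 0 ∧ B = 0) := by
            rintro ⟨hA, hB⟩
            exact hne (by simp [Prod.ext_iff, hA, hB])
          exact hfwd A B c d hAB hne'⟩ :
          {δ : Matrix (Fin 4) (Fin 4) (ZMod ℓ) // (∃ m, InGSp4 m δ) ∧ δ * γ = γ * δ}))
      ⟨?_, ?_⟩)).symm
    · rintro ⟨⟨⟨A, B⟩, hAB, hne⟩, c, d⟩ ⟨⟨⟨A', B'⟩, hAB', hne'⟩, c', d'⟩ h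
      simp only [Subtype.mk.injEq] at h
      have hdiff : Δ (A - A') (B - B') (c - c') (d - d') = 0 := by
        have h2 : Δ A B c d - Δ A' B' c' d' = Δ (A - A') (B - B') (c - c') (d - d') := by
          rw [hΔ', hΔ', hΔ']
          module
        rw [← h2, h, sub_self]
      obtain ⟨e1, e2, e3, e4⟩ := hind _ _ _ _ hdiff
      have hA : A = A' := by linear_combination e1
      have hB : B = B' := by linear_combination e2
      have hc : c = c' := by linear_combination e3
      have hd : d = d' := by linear_combination e4
      subst hA; subst hB; subst hc; subst hd
      rfl
    · rintro ⟨δ, ⟨μ, hu, hμu, hJcond⟩, hcomm⟩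
      obtain ⟨A, B, c, d, hδeq⟩ := hcommutant δ hcomm
      subst hδeq
      obtain ⟨hAB, hne⟩ := hbwd A B c d μ hu hJcond
      refine ⟨⟨⟨(A, B), hAB, ?_⟩, c, d⟩, rfl⟩
      intro h
      rw [Prod.ext_iff] at h
      exact hne ⟨h.1, h.2⟩
  have hU : Nat.card {p : ZMod ℓ × ZMod ℓ // p.1 * p.2 = 0 ∧ p ≠ 0} = 2 * (ℓ - 1) := by
    rw [← Nat.card_congr (countEquiv (k := ZMod ℓ)), Nat.card_sum, Nat.card_eq_fintype_card,
      ZMod.card_units, two_mul]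
  rw [hMain, Nat.card_prod, Nat.card_prod, Nat.card_zmod, hU]
  set t := ℓ - 1 with ht
  ring
end
end

section
/- Let ℓ be an odd prime, let a ∈ F_ℓˣ, and let x ∈ F_ℓˣ be a nonsquare. Define the 4×4 matrices over F_ℓ: γ₁ with rows (a,0,1,0), (0,−a,0,1), (0,0,a,0), (0,0,0,−a), and γ₂ with rows (a,0,1,0), (0,−a,0,x), (0,0,a,0), (0,0,0,−a). Then γ₁ and γ₂ both lie in GSp₄(F_ℓ) with multiplier a², they are conjugate in GL₄(F_ℓ), but they are not conjugate in GSp₄(F_ℓ). -/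
open Matrix Polynomial
noncomputable section
lemma aux_inGSp4 {ℓ : ℕ} [Fact ℓ.Prime] (a u : ZMod ℓ) (ha : a ≠ 0) :
    InGSp4 (a ^ 2) (!![a,0,1,0;0,-a,0,u;0,0,a,0;0,0,0,-a] : Matrix (Fin 4) (Fin 4) (ZMod ℓ)) := by
  refine ⟨?_, (pow_ne_zero 2 ha).isUnit, ?_⟩
  · rw [Matrix.isUnit_iff_isUnit_det]
    have hd : (!![a,0,1,0;0,-a,0,u;0,0,a,0;0,0,0,-a] : Matrix (Fin 4) (Fin 4) (ZMod ℓ)).det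
        = a ^ 4 := by
      simp [Matrix.det_succ_row_zero, Fin.sum_univ_succ]; ring
    rw [hd]; exact (pow_ne_zero 4 ha).isUnit
  · have ht : (!![a,0,1,0;0,-a,0,u;0,0,a,0;0,0,0,-a] : Matrix (Fin 4) (Fin 4) (ZMod ℓ)).transpose
        = !![a,0,0,0; 0,-a,0,0; 1,0,a,0; 0,u,0,-a] := by
      ext i j; fin_cases i <;> fin_cases j <;> rfl
    rw [ht]
    ext i j
    fin_cases i <;> fin_cases j <;>
      simp [J4, Matrix.mul_apply, Fin.sum_univ_four] <;>
      (try simp [Matrix.vecHead, Matrix.vecTail]) <;> (try ring)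
theorem stmt9 (ℓ : ℕ) (hℓ : ℓ.Prime) (hodd : ℓ ≠ 2) [Fact ℓ.Prime]
    (a : ZMod ℓ) (ha : a ≠ 0)
    (x : ZMod ℓ) (hx : x ≠ 0) (hns : ¬ IsSquare x)
    (γ₁ γ₂ : Matrix (Fin 4) (Fin 4) (ZMod ℓ))
    (hγ₁ : γ₁ = !![a, 0, 1, 0; 0, -a, 0, 1; 0, 0, a, 0; 0, 0, 0, -a])
    (hγ₂ : γ₂ = !![a, 0, 1, 0; 0, -a, 0, x; 0, 0, a, 0; 0, 0, 0, -a]) :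
    InGSp4 (a ^ 2) γ₁ ∧ InGSp4 (a ^ 2) γ₂ ∧
      (∃ g : Matrix (Fin 4) (Fin 4) (ZMod ℓ), IsUnit g ∧ g * γ₁ * g⁻¹ = γ₂) ∧
      ¬ (∃ g : Matrix (Fin 4) (Fin 4) (ZMod ℓ), (∃ m, InGSp4 m g) ∧ g * γ₁ * g⁻¹ = γ₂) := by
  have h2 : (2 : ZMod ℓ) ≠ 0 := by
    intro h
    have h2' : ((2 : ℕ) : ZMod ℓ) = 0 := by exact_mod_cast h
    rw [ZMod.natCast_eq_zero_iff] at h2'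
    exact hodd ((Nat.prime_dvd_prime_iff_eq hℓ Nat.prime_two).1 h2')
  have h2a : (2 : ZMod ℓ) * a ≠ 0 := mul_ne_zero h2 ha
  refine ⟨hγ₁ ▸ aux_inGSp4 a 1 ha, hγ₂ ▸ aux_inGSp4 a x ha, ?_, ?_⟩
  · -- GL₄ conjugacy via diag(1, x, 1, 1)
    refine ⟨!![1,0,0,0;0,x,0,0;0,0,1,0;0,0,0,1], ?_, ?_⟩
    · rw [Matrix.isUnit_iff_isUnit_det]
      have hd : (!![1,0,0,0;0,x,0,0;0,0,1,0;0,0,0,1] : Matrix (Fin 4) (Fin 4) (ZMod ℓ)).det = x := by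
        simp [Matrix.det_succ_row_zero, Fin.sum_univ_succ]
      rw [hd]; exact hx.isUnit
    · have hd : IsUnit (!![1,0,0,0;0,x,0,0;0,0,1,0;0,0,0,1] : Matrix (Fin 4) (Fin 4) (ZMod ℓ)).det := by
        have : (!![1,0,0,0;0,x,0,0;0,0,1,0;0,0,0,1] : Matrix (Fin 4) (Fin 4) (ZMod ℓ)).det = x := by
          simp [Matrix.det_succ_row_zero, Fin.sum_univ_succ]
        rw [this]; exact hx.isUnit
      have hge : (!![1,0,0,0;0,x,0,0;0,0,1,0;0,0,0,1] : Matrix (Fin 4) (Fin 4) (ZMod ℓ)) * γ₁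
          = γ₂ * !![1,0,0,0;0,x,0,0;0,0,1,0;0,0,0,1] := by
        ext i j
        fin_cases i <;> fin_cases j <;>
          simp [hγ₁, hγ₂, Matrix.mul_apply, Fin.sum_univ_four] <;>
          (try simp [Matrix.vecHead, Matrix.vecTail]) <;> (try ring)
      rw [hge, mul_assoc, Matrix.mul_nonsing_inv _ hd, mul_one]
  · -- not conjugate in GSp₄
    rintro ⟨g, ⟨m, hgU, hmU, hsymp⟩, hconj⟩
    have hd : IsUnit g.det := (Matrix.isUnit_iff_isUnit_det g).1 hgU
    have hge : g * γ₁ = γ₂ * g := by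
      rw [← hconj, mul_assoc, Matrix.nonsing_inv_mul g hd, mul_one]
    have E : ∀ i j, (g * γ₁) i j = (γ₂ * g) i j := fun i j => by rw [hge]
    -- extract entry equations
    have e21 := E 2 1; have e22 := E 2 2; have e30 := E 3 0
    have e01 := E 0 1; have e10 := E 1 0; have e02 := E 0 2
    have e33 := E 3 3; have e13 := E 1 3
    simp only [hγ₁, hγ₂, Matrix.mul_apply, Fin.sum_univ_four] at e21 e22 e30 e01 e10 e02 e33 e13
    simp at e21 e22 e30 e01 e10 e02 e33 e13
    try simp only [Matrix.vecHead, Matrix.vecTail, Function.comp] at e21 e22 e30 e01 e10 e02 e33 e13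
    try norm_num at e21 e22 e30 e01 e10 e02 e33 e13
    -- deduce vanishing entries
    have hg21 : g 2 1 = 0 := by
      have h : (2 * a) * g 2 1 = 0 := by linear_combination -e21
      exact (mul_eq_zero.1 h).resolve_left h2a
    have hg20 : g 2 0 = 0 := by linear_combination e22
    have hg30 : g 3 0 = 0 := by
      have h : (2 * a) * g 3 0 = 0 := by linear_combination e30
      exact (mul_eq_zero.1 h).resolve_left h2a
    have hg01 : g 0 1 = 0 := by
      have h : (2 * a) * g 0 1 = 0 := by linear_combination -e01 - hg21
      exact (mul_eq_zero.1 h).resolve_left h2a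
    have hg10 : g 1 0 = 0 := by
      have h : (2 * a) * g 1 0 = 0 := by linear_combination e10 + x * hg30
      exact (mul_eq_zero.1 h).resolve_left h2a
    have hg22 : g 2 2 = g 0 0 := by linear_combination -e02
    have hg31 : g 3 1 = 0 := by linear_combination e33
    have hg11 : g 1 1 = x * g 3 3 := by linear_combination e13
    -- symplectic condition entries
    have S : ∀ i j, (g.transpose * J4 (ZMod ℓ) * g) i j = (m • J4 (ZMod ℓ)) i j :=
      fun i j => by rw [hsymp]
    have s02 := S 0 2
    have s13 := S 1 3
    simp only [J4, Matrix.mul_apply, Matrix.transpose_apply, Matrix.smul_apply,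
      Fin.sum_univ_four] at s02 s13
    simp at s02 s13
    try simp only [Matrix.vecHead, Matrix.vecTail, Function.comp] at s02 s13
    try norm_num at s02 s13
    have hm1 : g 0 0 * g 0 0 = m := by
      linear_combination s02 + g 0 2 * hg20 + g 1 2 * hg30 - g 3 2 * hg10 - g 0 0 * hg22
    have hm2 : x * (g 3 3 * g 3 3) = m := by
      linear_combination s13 + g 0 3 * hg21 + g 1 3 * hg31 - g 2 3 * hg01 - g 3 3 * hg11
    have hm0 : m ≠ 0 := hmU.ne_zero
    have hg33 : g 3 3 ≠ 0 := by
      intro h; apply hm0; rw [← hm2, h]; ring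
    apply hns
    refine ⟨g 0 0 * (g 3 3)⁻¹, ?_⟩
    field_simp
    linear_combination hm2 - hm1
end
end

section
/- Let ℓ be a prime and let γ ∈ GSp₄(F_ℓ) have characteristic polynomial f irreducible over F_ℓ. Let t be a root of f in the field F_{ℓ⁴} with ℓ⁴ elements. Then t^{ℓ²+1} equals (the image in F_{ℓ⁴} of) the multiplier m(γ); that is, the multiplier is the norm of t from F_{ℓ⁴} to F_{ℓ²}. -/
open Matrix Polynomial

noncomputable section

/-- Auxiliary: evaluating the characteristic polynomial as a determinant. -/
lemma evalCharpoly4 {R : Type*} [CommRing R] (M : Matrix (Fin 4) (Fin 4) R) (r : R) :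
    (Matrix.charpoly M).eval r = (r • (1 : Matrix (Fin 4) (Fin 4) R) - M).det := by
  rw [Matrix.charpoly, _root_.eval_det, Matrix.matPolyEquiv_charmatrix]
  congr 1
  rw [eval_sub, eval_X, eval_C]
  simp [Matrix.scalar_apply, Matrix.smul_eq_diagonal_mul]

/-- Auxiliary: an element of degree `4` over the prime field cannot lie in a proper
subfield, i.e. cannot be fixed by a proper power of Frobenius. -/
lemma notSmallField (ℓ : ℕ) [Fact ℓ.Prime] {F : Type*} [Field F] [Algebra (ZMod ℓ) F]
    [Fintype F] (hF : Fintype.card F = ℓ ^ 4) (t : F)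
    (hdeg : (minpoly (ZMod ℓ) t).natDegree = 4)
    (d : ℕ) (hd : 0 < d) (hd4 : d < 4) (h : t ^ ℓ ^ d = t) : False := by
  classical
  have hℓ : ℓ.Prime := Fact.out
  have h1 : 1 < ℓ := hℓ.one_lt
  haveI : CharP F ℓ := charP_of_injective_algebraMap (algebraMap (ZMod ℓ) F).injective ℓ
  haveI : ExpChar F ℓ := ExpChar.prime hℓ
  let ψ : F →ₐ[ZMod ℓ] F := AlgHom.mk' (iterateFrobenius F ℓ d) (fun r x => by
    simp only [Algebra.smul_def, iterateFrobenius_def, mul_pow]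
    congr 1
    rw [← map_pow, ZMod.pow_card_pow])
  have hψ : ∀ x : F, ψ x = x ^ ℓ ^ d := fun _ => rfl
  have hall : ∀ x : F, x ^ ℓ ^ d = x := by
    have hint : IsIntegral (ZMod ℓ) t := IsIntegral.of_finite (ZMod ℓ) t
    have hfr : Module.finrank (ZMod ℓ) (Algebra.adjoin (ZMod ℓ) {t}) = 4 := by
      rw [(Algebra.adjoin.powerBasis hint).finrank, Algebra.adjoin.powerBasis_dim, hdeg]
    have hfinF : Module.finrank (ZMod ℓ) F = 4 := by
      have hc := Module.card_eq_pow_finrank (K := ZMod ℓ) (V := F)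
      rw [ZMod.card, hF] at hc
      exact (Nat.pow_right_injective hℓ.two_le hc.symm)
    have htop : Subalgebra.toSubmodule (Algebra.adjoin (ZMod ℓ) {t}) = ⊤ :=
      Submodule.eq_top_of_finrank_eq (by
        rw [Subalgebra.finrank_toSubmodule, hfr, hfinF])
    have hle : Algebra.adjoin (ZMod ℓ) {t} ≤ AlgHom.equalizer ψ (AlgHom.id _ _) := by
      apply Algebra.adjoin_le
      intro x hx
      rw [Set.mem_singleton_iff] at hx
      subst hx
      simp only [SetLike.mem_coe, AlgHom.mem_equalizer, hψ, AlgHom.id_apply]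
      exact h
    intro x
    have hx : x ∈ Algebra.adjoin (ZMod ℓ) {t} := by
      rw [← Subalgebra.mem_toSubmodule, htop]; trivial
    have := hle hx
    rw [AlgHom.mem_equalizer, hψ, AlgHom.id_apply] at this
    exact this
  obtain ⟨g, hg⟩ := IsCyclic.exists_generator (α := Fˣ)
  have hord : orderOf g = Fintype.card Fˣ :=
    (orderOf_eq_card_of_forall_mem_zpowers hg).trans Nat.card_eq_fintype_card
  have hcard : Fintype.card Fˣ = ℓ ^ 4 - 1 := by rw [Fintype.card_units, hF]
  have hq1 : 1 < ℓ ^ d := one_lt_pow₀ (by omega) (by omega)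
  have hgq : g ^ (ℓ ^ d) = g := Units.ext (by
    rw [Units.val_pow_eq_pow_val]; exact hall g)
  have hpow : g ^ (ℓ ^ d - 1) = 1 := by
    have e : g ^ (ℓ ^ d - 1) * g = 1 * g := by
      rw [one_mul, ← pow_succ, Nat.sub_add_cancel (by omega), hgq]
    exact mul_right_cancel e
  have hdvd : orderOf g ∣ ℓ ^ d - 1 := orderOf_dvd_of_pow_eq_one hpow
  rw [hord, hcard] at hdvd
  have hle' : ℓ ^ 4 - 1 ≤ ℓ ^ d - 1 := Nat.le_of_dvd (by omega) hdvd
  have : ℓ ^ d < ℓ ^ 4 := Nat.pow_lt_pow_right h1 hd4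
  omega

theorem stmt12 (ℓ : ℕ) (hℓ : ℓ.Prime) [Fact ℓ.Prime]
    (γ : Matrix (Fin 4) (Fin 4) (ZMod ℓ)) (m : ZMod ℓ) (hγ : InGSp4 m γ)
    (hirr : Irreducible γ.charpoly)
    (F : Type*) [Field F] [Algebra (ZMod ℓ) F] [Fintype F]
    (hF : Fintype.card F = ℓ ^ 4)
    (t : F) (ht : Polynomial.aeval t γ.charpoly = 0) :
    t ^ (ℓ ^ 2 + 1) = algebraMap (ZMod ℓ) F m := by
  classical
  obtain ⟨hγu, hmu, hrel⟩ := hγ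
  set φ := algebraMap (ZMod ℓ) F with hφ
  have hφinj : Function.Injective φ := (algebraMap (ZMod ℓ) F).injective
  set f := γ.charpoly with hfdef
  have hmon : f.Monic := γ.charpoly_monic
  have hdeg4 : f.natDegree = 4 := by
    rw [hfdef, Matrix.charpoly_natDegree_eq_dim, Fintype.card_fin]
  have hmin : minpoly (ZMod ℓ) t = f := (minpoly.eq_of_irreducible_of_monic hirr ht hmon).symm
  have hmindeg : (minpoly (ZMod ℓ) t).natDegree = 4 := by rw [hmin, hdeg4]
  have ht0 : t ≠ 0 := by
    rintro rfl
    rw [minpoly.zero] at hmin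
    rw [← hmin] at hdeg4
    simp at hdeg4
  have hc0 : (φ m) ≠ 0 := fun h => hmu.ne_zero (hφinj (by rw [h, map_zero]))
  haveI : CharP F ℓ := charP_of_injective_algebraMap hφinj ℓ
  haveI : ExpChar F ℓ := ExpChar.prime Fact.out
  -- map the symplectic relation to F
  set A := γ.map φ with hAdef
  have hJmap : (J4 (ZMod ℓ)).map φ = J4 F := by
    ext i j
    fin_cases i <;> fin_cases j <;>
      simp [J4, Matrix.map_apply, Matrix.vecHead, Matrix.vecTail]
  have hrelF : Aᵀ * J4 F * A = (φ m) • J4 F := by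
    have h1 := congrArg (fun M => M.map φ) hrel
    rw [Matrix.map_mul, Matrix.map_mul, Matrix.transpose_map, hJmap] at h1
    have h2 : (m • J4 (ZMod ℓ)).map φ = φ m • ((J4 (ZMod ℓ)).map φ) := by
      ext i j
      simp [Matrix.map_apply, Matrix.smul_apply, smul_eq_mul, _root_.map_mul]
    rw [h2, hJmap] at h1
    exact h1
  have hdetJ : (J4 F).det = 1 := by
    simp [J4, Matrix.det_succ_row_zero, Fin.sum_univ_succ]
    rfl
  -- the characteristic polynomial evaluated in F
  have hcp : ∀ x : F, (aeval x) f = (x • (1 : Matrix (Fin 4) (Fin 4) F) - A).det := by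
    intro x
    rw [aeval_def, ← eval_map, ← Matrix.charpoly_map, evalCharpoly4]
  have hdet0 : (t • (1 : Matrix (Fin 4) (Fin 4) F) - A).det = 0 := by
    rw [← hcp t]; exact ht
  -- the conjugate root m/t
  set s := φ m * t⁻¹ with hsdef
  have hts : t * s = φ m := by
    rw [hsdef]; field_simp
  have hid : (t • (1 : Matrix (Fin 4) (Fin 4) F) - Aᵀ) * (J4 F * A)
      = (-t) • (J4 F * (s • (1 : Matrix (Fin 4) (Fin 4) F) - A)) := by
    have e1 : Aᵀ * (J4 F * A) = (φ m) • J4 F := by rw [← Matrix.mul_assoc, hrelF]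
    rw [sub_mul, Matrix.smul_mul, one_mul, e1, ← hts]
    rw [Matrix.mul_sub, Matrix.mul_smul, mul_one]
    module
  have hdet := congrArg Matrix.det hid
  simp only [Matrix.det_mul, Matrix.det_smul, hdetJ, one_mul, Fintype.card_fin] at hdet
  have hT : (t • (1 : Matrix (Fin 4) (Fin 4) F) - Aᵀ).det = 0 := by
    have e : t • (1 : Matrix (Fin 4) (Fin 4) F) - Aᵀ
        = (t • (1 : Matrix (Fin 4) (Fin 4) F) - A)ᵀ := by
      rw [Matrix.transpose_sub, Matrix.transpose_smul, Matrix.transpose_one]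
    rw [e, Matrix.det_transpose, hdet0]
  rw [hT, zero_mul] at hdet
  have hsroot : (s • (1 : Matrix (Fin 4) (Fin 4) F) - A).det = 0 := by
    have h4 : (-t) ^ (4 : ℕ) ≠ 0 := pow_ne_zero _ (neg_ne_zero.2 ht0)
    exact (mul_eq_zero.1 hdet.symm).resolve_left h4
  have hs0 : aeval s f = 0 := by rw [hcp s]; exact hsroot
  -- Frobenius conjugate roots
  let Fr : F →ₐ[ZMod ℓ] F := AlgHom.mk' (frobenius F ℓ) (fun r x => by
    simp only [Algebra.smul_def, frobenius_def, mul_pow]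
    congr 1
    rw [← map_pow, ZMod.pow_card])
  have hFr : ∀ x : F, Fr x = x ^ ℓ := fun _ => rfl
  have e2 : t ^ ℓ ^ 2 = (t ^ ℓ) ^ ℓ := by rw [← pow_mul, pow_two]
  have e3 : t ^ ℓ ^ 3 = (t ^ ℓ ^ 2) ^ ℓ := by rw [← pow_mul, ← pow_succ]
  have hR1 : aeval (t ^ ℓ) f = 0 := by
    rw [← hFr, Polynomial.aeval_algHom_apply, ht, map_zero]
  have hR2 : aeval (t ^ ℓ ^ 2) f = 0 := by
    rw [e2, ← hFr, Polynomial.aeval_algHom_apply, hR1, map_zero]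
  have hR3 : aeval (t ^ ℓ ^ 3) f = 0 := by
    rw [e3, ← hFr, Polynomial.aeval_algHom_apply, hR2, map_zero]
  -- distinctness of the Frobenius orbit
  have hinj : ∀ a b : F, a ^ ℓ = b ^ ℓ → a = b := fun a b hab =>
    (frobenius F ℓ).injective hab
  have hNS := notSmallField ℓ hF t hmindeg
  have d01 : t ≠ t ^ ℓ := fun h =>
    hNS 1 one_pos (by norm_num) (by rw [pow_one]; exact h.symm)
  have d02 : t ≠ t ^ ℓ ^ 2 := fun h => hNS 2 two_pos (by norm_num) h.symm
  have d03 : t ≠ t ^ ℓ ^ 3 := fun h => hNS 3 three_pos (by norm_num) h.symm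
  have d12 : t ^ ℓ ≠ t ^ ℓ ^ 2 := fun h => d01 (hinj t (t ^ ℓ) (by rw [← e2]; exact h))
  have d13 : t ^ ℓ ≠ t ^ ℓ ^ 3 := fun h =>
    d02 (hinj t (t ^ ℓ ^ 2) (by rw [← e3]; exact h))
  have d23 : t ^ ℓ ^ 2 ≠ t ^ ℓ ^ 3 := fun h =>
    d12 (hinj (t ^ ℓ) (t ^ ℓ ^ 2) (by rw [← e2, ← e3]; exact h))
  -- classification of the root s
  have hclass : s = t ∨ s = t ^ ℓ ∨ s = t ^ ℓ ^ 2 ∨ s = t ^ ℓ ^ 3 := by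
    by_contra hcon
    push_neg at hcon
    obtain ⟨h1, h2, h3, h4⟩ := hcon
    set fm := f.map φ with hfm
    have hfm0 : fm ≠ 0 := (hmon.map φ).ne_zero
    have hmemr : ∀ x : F, aeval x f = 0 → x ∈ fm.roots.toFinset := by
      intro x hx
      rw [Multiset.mem_toFinset, mem_roots']
      exact ⟨hfm0, by rw [IsRoot, hfm, eval_map, ← aeval_def]; exact hx⟩
    have hsub : ({s, t, t ^ ℓ, t ^ ℓ ^ 2, t ^ ℓ ^ 3} : Finset F) ⊆ fm.roots.toFinset := by
      intro x hx
      simp only [Finset.mem_insert, Finset.mem_singleton] at hx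
      rcases hx with rfl | rfl | rfl | rfl | rfl
      · exact hmemr _ hs0
      · exact hmemr _ ht
      · exact hmemr _ hR1
      · exact hmemr _ hR2
      · exact hmemr _ hR3
    have hcard : ({s, t, t ^ ℓ, t ^ ℓ ^ 2, t ^ ℓ ^ 3} : Finset F).card = 5 := by
      rw [Finset.card_insert_of_notMem (by simp [h1, h2, h3, h4]),
        Finset.card_insert_of_notMem (by simp [d01, d02, d03]),
        Finset.card_insert_of_notMem (by simp [d12, d13]),
        Finset.card_insert_of_notMem (by simp [d23]),
        Finset.card_singleton]
    have hle5 := Finset.card_le_card hsub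
    have hc1 : fm.roots.toFinset.card ≤ Multiset.card fm.roots :=
      fm.roots.toFinset_card_le
    have hc2 : Multiset.card fm.roots ≤ 4 := by
      have hcr := fm.card_roots'
      rwa [hfm, hmon.natDegree_map, hdeg4] at hcr
    omega
  have hts' : φ m = t * s := hts.symm
  rcases hclass with h | h | h | h
  · -- s = t : impossible, t would have degree ≤ 2
    exfalso
    have hc2 : φ m = t ^ 2 := by rw [hts', h, pow_two]
    have hpmon : (X ^ 2 - C m : (ZMod ℓ)[X]).Monic := monic_X_pow_sub_C m two_ne_zero
    have haev : aeval t (X ^ 2 - C m : (ZMod ℓ)[X]) = 0 := by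
      rw [map_sub, map_pow, aeval_X, aeval_C, ← hφ, hc2, sub_self]
    have hmin2 := minpoly.min (ZMod ℓ) t hpmon haev
    have hn := Polynomial.natDegree_le_natDegree hmin2
    rw [hmindeg, natDegree_X_pow_sub_C] at hn
    omega
  · -- s = t^ℓ : impossible
    exfalso
    have hcl : (φ m) ^ ℓ = φ m := by rw [← map_pow, ZMod.pow_card]
    rw [hts', h] at hcl
    have e : (t * t ^ ℓ) ^ ℓ = t ^ ℓ ^ 2 * t ^ ℓ := by
      rw [mul_pow, ← pow_mul, ← pow_two, mul_comm]
    rw [e] at hcl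
    have : t ^ ℓ ^ 2 = t := mul_right_cancel₀ (pow_ne_zero ℓ ht0) hcl
    exact hNS 2 two_pos (by norm_num) this
  · -- s = t^{ℓ²} : the desired conclusion
    rw [h] at hts'
    rw [hts', pow_add, pow_one, mul_comm]
  · -- s = t^{ℓ³} : impossible
    exfalso
    have hcl : (φ m) ^ ℓ = φ m := by rw [← map_pow, ZMod.pow_card]
    rw [hts', h] at hcl
    have e4 : t ^ ℓ ^ 4 = t := by rw [← hF]; exact FiniteField.pow_card t
    have e : (t * t ^ ℓ ^ 3) ^ ℓ = t ^ ℓ * t := by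
      rw [mul_pow, ← pow_mul, ← pow_succ, e4]
    rw [e] at hcl
    have e5 : t ^ ℓ * t = t ^ ℓ ^ 3 * t := by rw [hcl, mul_comm]
    have e6 : t ^ ℓ = t ^ ℓ ^ 3 := mul_right_cancel₀ ht0 e5
    have e7 : t ^ ℓ ^ 2 = t := hinj (t ^ ℓ ^ 2) t (by rw [← e3]; exact e6.symm)
    exact hNS 2 two_pos (by norm_num) e7
end
end

section
/- Let p be a prime, e ≥ 1, q = p^e, and let a, b ∈ ℤ with p not dividing b. Suppose f(T) = T⁴ − aT³ + bT² − qaT + q² is irreducible over ℚ and every complex root of f has absolute value √q. Let K = ℚ[T]/(f(T)), let ϖ ∈ K be the image of T, and set ϖ̄ = q/ϖ ∈ K. Then the subring ℤ[ϖ] has index q as an additive subgroup of the order ℤ[ϖ, ϖ̄] in K. -/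
open Polynomial

theorem stmt14 (p : ℕ) (hp : p.Prime) (e : ℕ) (he : 1 ≤ e) (q : ℕ) (hq : q = p ^ e)
    (a b : ℤ) (hb : ¬ (p : ℤ) ∣ b)
    (f : ℚ[X])
    (hf : f = X ^ 4 - C (a : ℚ) * X ^ 3 + C (b : ℚ) * X ^ 2
        - C ((q : ℚ) * (a : ℚ)) * X + C ((q : ℚ) ^ 2))
    (hirr : Irreducible f)
    (hroots : ∀ z : ℂ, Polynomial.aeval z f = 0 → ‖z‖ = Real.sqrt q)
    (K : Type*) [Field K] [Algebra ℚ K]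
    (ϖ : K) (hϖ : Polynomial.aeval ϖ f = 0)
    (hgen : Algebra.adjoin ℚ {ϖ} = ⊤)
    (ϖbar : K) (hbar : ϖ * ϖbar = (q : K)) :
    AddSubgroup.relIndex
      (Algebra.adjoin ℤ {ϖ}).toSubring.toAddSubgroup
      (Algebra.adjoin ℤ {ϖ, ϖbar}).toSubring.toAddSubgroup = q := by
  haveI : CharZero K := charZero_of_injective_algebraMap (algebraMap ℚ K).injective
  have hq0 : 0 < q := by subst hq; exact pow_pos hp.pos e
  haveI : NeZero q := ⟨hq0.ne'⟩
  have hqK : (q : K) ≠ 0 := Nat.cast_ne_zero.mpr hq0.ne'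
  have hϖ0 : ϖ ≠ 0 := by
    intro h; rw [h, zero_mul] at hbar; exact hqK hbar.symm
  have hmonic : f.Monic := by subst hf; monicity!
  have hdeg : f.natDegree = 4 := by subst hf; compute_degree!
  have hE1 : ϖ ^ 4 = (a : K) * ϖ ^ 3 - (b : K) * ϖ ^ 2 + (q : K) * (a : K) * ϖ - (q : K) ^ 2 := by
    rw [hf] at hϖ
    simp only [map_sub, map_add, map_mul, map_pow, aeval_X, aeval_C, map_intCast,
      map_natCast, map_ofNat, eq_intCast, eq_ratCast, Rat.cast_intCast, Rat.cast_natCast,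
      Rat.cast_mul, Rat.cast_pow] at hϖ
    linear_combination hϖ
  have hE2 : (q : K) * ϖbar = (a : K) * ϖ ^ 2 - (b : K) * ϖ + (q : K) * (a : K) - ϖ ^ 3 := by
    apply mul_right_cancel₀ hϖ0
    linear_combination (q : K) * hbar + hE1
  have hE3 : ϖbar ^ 2 = (a : K) * ϖ + (a : K) * ϖbar - ϖ ^ 2 - (b : K) := by
    apply mul_left_cancel₀ (pow_ne_zero 2 hϖ0)
    linear_combination (ϖ * ϖbar + (q : K) - (a : K) * ϖ) * hbar + hE1
  -- the power basis and the coordinate functional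
  have hInt : IsIntegral ℚ ϖ := ⟨f, hmonic, hϖ⟩
  have hmin : f = minpoly ℚ ϖ := minpoly.eq_of_irreducible_of_monic hirr hϖ hmonic
  let eqv : (Algebra.adjoin ℚ {ϖ}) ≃ₐ[ℚ] K :=
    (Subalgebra.equivOfEq _ ⊤ hgen).trans Subalgebra.topEquiv
  let pb : PowerBasis ℚ K := (Algebra.adjoin.powerBasis hInt).map eqv
  have hpbgen : pb.gen = ϖ := rfl
  have hpbdim : pb.dim = 4 := by
    show (minpoly ℚ ϖ).natDegree = 4
    rw [← hmin, hdeg]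
  let i3 : Fin pb.dim := ⟨3, by rw [hpbdim]; norm_num⟩
  let lam : K →ₗ[ℚ] ℚ := pb.basis.coord i3
  have hlam_pow : ∀ i : ℕ, (h : i < pb.dim) → lam (ϖ ^ i) = if i = 3 then 1 else 0 := by
    intro i h
    have : ϖ ^ i = pb.basis ⟨i, h⟩ := by rw [pb.coe_basis, hpbgen]
    rw [this]
    show pb.basis.coord i3 (pb.basis ⟨i, h⟩) = _
    rw [Module.Basis.coord_apply, Module.Basis.repr_self, Finsupp.single_apply]
    simp only [i3, Fin.mk.injEq]
  have l0 : lam 1 = 0 := by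
    have := hlam_pow 0 (by rw [hpbdim]; norm_num); simpa using this
  have l1 : lam ϖ = 0 := by
    have := hlam_pow 1 (by rw [hpbdim]; norm_num); simpa using this
  have l2 : lam (ϖ ^ 2) = 0 := by
    have := hlam_pow 2 (by rw [hpbdim]; norm_num); simpa using this
  have l3 : lam (ϖ ^ 3) = 1 := by
    have := hlam_pow 3 (by rw [hpbdim]; norm_num); simpa using this
  have hsm : ∀ (r : ℚ) (y : K), lam (algebraMap ℚ K r * y) = r * lam y := by
    intro r y; rw [← Algebra.smul_def, map_smul, smul_eq_mul]
  have hsmi : ∀ (c : ℤ) (y : K), lam ((c : K) * y) = (c : ℚ) * lam y := by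
    intro c y
    have h1 : ((c : ℤ) : K) = algebraMap ℚ K ((c : ℤ) : ℚ) := by simp
    rw [h1, hsm]
  have hsmn : ∀ (c : ℕ) (y : K), lam ((c : K) * y) = (c : ℚ) * lam y := by
    intro c y
    have h1 : ((c : ℕ) : K) = algebraMap ℚ K ((c : ℕ) : ℚ) := by simp
    rw [h1, hsm]
  have hqlam : (q : ℚ) * lam ϖbar = -1 := by
    have h := congrArg lam hE2
    simp only [map_sub, map_add] at h
    rw [hsmn q ϖbar, hsmi a (ϖ ^ 2), hsmi b ϖ] at h
    have h2 : lam ((q : K) * (a : K)) = (((q : ℤ) * a : ℤ) : ℚ) * lam 1 := by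
      rw [show ((q : K) * (a : K)) = ((((q : ℤ) * a : ℤ)) : K) * 1 by push_cast; ring, hsmi]
    rw [h2, l0, l1, l2, l3] at h
    push_cast at h
    linear_combination h
  -- the lattices
  set A := Algebra.adjoin ℤ {ϖ} with hA
  set B := Algebra.adjoin ℤ ({ϖ, ϖbar} : Set K) with hB
  set M1 : Submodule ℤ K := Submodule.span ℤ {1, ϖ, ϖ ^ 2, ϖ ^ 3} with hM1
  set M : Submodule ℤ K := Submodule.span ℤ {1, ϖ, ϖ ^ 2, ϖbar} with hM
  have g1M1 : (1 : K) ∈ M1 := Submodule.subset_span (by simp)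
  have gϖM1 : ϖ ∈ M1 := Submodule.subset_span (by simp)
  have gϖ2M1 : ϖ ^ 2 ∈ M1 := Submodule.subset_span (by simp)
  have gϖ3M1 : ϖ ^ 3 ∈ M1 := Submodule.subset_span (by simp)
  have g1M : (1 : K) ∈ M := Submodule.subset_span (by simp)
  have gϖM : ϖ ∈ M := Submodule.subset_span (by simp)
  have gϖ2M : ϖ ^ 2 ∈ M := Submodule.subset_span (by simp)
  have gbM : ϖbar ∈ M := Submodule.subset_span (by simp)
  have hzm : ∀ (N : Submodule ℤ K) (c : ℤ) (y : K), y ∈ N → (c : K) * y ∈ N := by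
    intro N c y hy; rw [← zsmul_eq_mul]; exact N.smul_mem c hy
  have memM1 : ∀ c0 c1 c2 c3 : ℤ,
      ((c0 : K) + c1 * ϖ + c2 * ϖ ^ 2 + c3 * ϖ ^ 3) ∈ M1 := by
    intro c0 c1 c2 c3
    refine add_mem (add_mem (add_mem ?_ ?_) ?_) ?_
    · simpa using hzm M1 c0 1 g1M1
    · exact hzm M1 c1 ϖ gϖM1
    · exact hzm M1 c2 _ gϖ2M1
    · exact hzm M1 c3 _ gϖ3M1
  have memM : ∀ c0 c1 c2 c3 : ℤ,
      ((c0 : K) + c1 * ϖ + c2 * ϖ ^ 2 + c3 * ϖbar) ∈ M := by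
    intro c0 c1 c2 c3
    refine add_mem (add_mem (add_mem ?_ ?_) ?_) ?_
    · simpa using hzm M c0 1 g1M
    · exact hzm M c1 ϖ gϖM
    · exact hzm M c2 _ gϖ2M
    · exact hzm M c3 _ gbM
  -- all powers of ϖ lie in M1
  have hpowM1 : ∀ n : ℕ, ϖ ^ n ∈ M1 := by
    intro n
    induction n using Nat.strong_induction_on with
    | _ n ih =>
      match n with
      | 0 => simpa using g1M1
      | 1 => simpa using gϖM1
      | 2 => exact gϖ2M1
      | 3 => exact gϖ3M1
      | (m + 4) =>
        have hred : ϖ ^ (m + 4) = (a : K) * ϖ ^ (m + 3) - (b : K) * ϖ ^ (m + 2)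
            + (q : K) * (a : K) * ϖ ^ (m + 1) - (q : K) ^ 2 * ϖ ^ m := by
          linear_combination ϖ ^ m * hE1
        rw [hred]
        refine sub_mem (add_mem (sub_mem ?_ ?_) ?_) ?_
        · exact hzm M1 a _ (ih (m + 3) (by omega))
        · exact hzm M1 b _ (ih (m + 2) (by omega))
        · have he2 : (q : K) * (a : K) * ϖ ^ (m + 1)
              = (((q : ℤ) * a : ℤ) : K) * ϖ ^ (m + 1) := by push_cast; ring
          rw [he2]; exact hzm M1 _ _ (ih (m + 1) (by omega))
        · have : ((q : K)) ^ 2 = (((q : ℤ) ^ 2 : ℤ) : K) := by push_cast; ring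
          rw [this]
          exact hzm M1 _ _ (ih m (by omega))
  -- M1 is closed under multiplication
  have hmulM1 : ∀ x ∈ M1, ∀ y ∈ M1, x * y ∈ M1 := by
    intro x hx
    induction hx using Submodule.span_induction with
    | mem g hg =>
      intro y hy
      induction hy using Submodule.span_induction with
      | mem z hz =>
        simp only [Set.mem_insert_iff, Set.mem_singleton_iff] at hg hz
        rcases hg with hg | hg | hg | hg <;> rcases hz with hz | hz | hz | hz <;>
          rw [hg, hz] <;>
          (try simp only [one_mul, mul_one, ← pow_succ, ← pow_succ', ← pow_add]) <;>
          first
            | exact hpowM1 _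
            | assumption
            | (rw [show ϖ * ϖ = ϖ ^ 2 by ring]; exact hpowM1 _)
      | zero => rw [mul_zero]; exact zero_mem _
      | add y1 y2 h1 h2 ih1 ih2 => rw [mul_add]; exact add_mem ih1 ih2
      | smul c y1 h1 ih => rw [mul_smul_comm]; exact M1.smul_mem c ih
    | zero => intro y hy; rw [zero_mul]; exact zero_mem _
    | add x1 x2 h1 h2 ih1 ih2 =>
      intro y hy; rw [add_mul]; exact add_mem (ih1 y hy) (ih2 y hy)
    | smul c x1 h1 ih =>
      intro y hy; rw [smul_mul_assoc]; exact M1.smul_mem c (ih y hy)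
  -- auxiliary elements of M
  have hϖ3M : ϖ ^ 3 ∈ M := by
    have h : ϖ ^ 3 = ((q * a : ℤ) : K) + (-b : ℤ) * ϖ + (a : ℤ) * ϖ ^ 2
        + ((-(q : ℤ)) : ℤ) * ϖbar := by push_cast; linear_combination hE2
    rw [h]; exact memM (q * a) (-b) a (-(q : ℤ))
  have hϖ4M : ϖ ^ 4 ∈ M := by
    have h : ϖ ^ 4 = ((a ^ 2 * q - q ^ 2 : ℤ) : K) + ((q * a - a * b : ℤ)) * ϖ
        + ((a ^ 2 - b : ℤ)) * ϖ ^ 2 + ((-(q * a) : ℤ)) * ϖbar := by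
      push_cast; linear_combination hE1 + (a : K) * hE2
    rw [h]; exact memM _ _ _ _
  -- M is closed under multiplication
  have hmulM : ∀ x ∈ M, ∀ y ∈ M, x * y ∈ M := by
    intro x hx
    induction hx using Submodule.span_induction with
    | mem g hg =>
      intro y hy
      induction hy using Submodule.span_induction with
      | mem z hz =>
        simp only [Set.mem_insert_iff, Set.mem_singleton_iff] at hg hz
        have hqM : ∀ y ∈ M, (q : K) * y ∈ M := by
          intro y hy
          have hc : ((q : ℕ) : K) = (((q : ℤ)) : K) := by push_cast; ring
          rw [hc]; exact hzm M _ _ hy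
        rcases hg with hg | hg | hg | hg <;> rcases hz with hz | hz | hz | hz <;> rw [hg, hz]
        · simpa using g1M
        · simpa using gϖM
        · simpa using gϖ2M
        · simpa using gbM
        · simpa using gϖM
        · rw [show ϖ * ϖ = ϖ ^ 2 by ring]; exact gϖ2M
        · rw [show ϖ * ϖ ^ 2 = ϖ ^ 3 by ring]; exact hϖ3M
        · rw [hbar]; simpa using hqM 1 g1M
        · simpa using gϖ2M
        · rw [show ϖ ^ 2 * ϖ = ϖ ^ 3 by ring]; exact hϖ3M
        · rw [show ϖ ^ 2 * ϖ ^ 2 = ϖ ^ 4 by ring]; exact hϖ4M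
        · rw [show ϖ ^ 2 * ϖbar = (ϖ * ϖbar) * ϖ by ring, hbar]; exact hqM ϖ gϖM
        · simpa using gbM
        · rw [mul_comm, hbar]; simpa using hqM 1 g1M
        · rw [show ϖbar * ϖ ^ 2 = (ϖ * ϖbar) * ϖ by ring, hbar]; exact hqM ϖ gϖM
        · rw [show ϖbar * ϖbar = ϖbar ^ 2 by ring, hE3]
          have h : (a : K) * ϖ + (a : K) * ϖbar - ϖ ^ 2 - (b : K)
              = ((-b : ℤ) : K) + (a : ℤ) * ϖ + ((-1 : ℤ)) * ϖ ^ 2 + (a : ℤ) * ϖbar := by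
            push_cast; ring
          rw [h]; exact memM _ _ _ _
      | zero => rw [mul_zero]; exact zero_mem _
      | add y1 y2 h1 h2 ih1 ih2 => rw [mul_add]; exact add_mem ih1 ih2
      | smul c y1 h1 ih => rw [mul_smul_comm]; exact M.smul_mem c ih
    | zero => intro y hy; rw [zero_mul]; exact zero_mem _
    | add x1 x2 h1 h2 ih1 ih2 =>
      intro y hy; rw [add_mul]; exact add_mem (ih1 y hy) (ih2 y hy)
    | smul c x1 h1 ih =>
      intro y hy; rw [smul_mul_assoc]; exact M.smul_mem c (ih y hy)
  -- adjoin subsets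
  have hAM1 : ∀ x ∈ A, x ∈ M1 := by
    intro x hx
    induction hx using Algebra.adjoin_induction with
    | mem z hz => rw [Set.mem_singleton_iff] at hz; subst hz; exact gϖM1
    | algebraMap r =>
      have : algebraMap ℤ K r = (r : K) * 1 := by simp
      rw [this]; exact hzm M1 r 1 g1M1
    | add x y hx hy ihx ihy => exact add_mem ihx ihy
    | mul x y hx hy ihx ihy => exact hmulM1 x ihx y ihy
  have hBM : ∀ x ∈ B, x ∈ M := by
    intro x hx
    induction hx using Algebra.adjoin_induction with
    | mem z hz =>
      rcases hz with rfl | hz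
      · exact gϖM
      · rw [Set.mem_singleton_iff] at hz; subst hz; exact gbM
    | algebraMap r =>
      have : algebraMap ℤ K r = (r : K) * 1 := by simp
      rw [this]; exact hzm M r 1 g1M
    | add x y hx hy ihx ihy => exact add_mem ihx ihy
    | mul x y hx hy ihx ihy => exact hmulM x ihx y ihy
  -- representation lemmas
  have repM : ∀ x ∈ M, ∃ c0 c1 c2 c3 : ℤ,
      x = (c0 : K) + c1 * ϖ + c2 * ϖ ^ 2 + c3 * ϖbar := by
    intro x hx
    induction hx using Submodule.span_induction with
    | mem z hz =>
      simp only [Set.mem_insert_iff, Set.mem_singleton_iff] at hz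
      rcases hz with rfl | rfl | rfl | rfl
      · exact ⟨1, 0, 0, 0, by push_cast; ring⟩
      · exact ⟨0, 1, 0, 0, by push_cast; ring⟩
      · exact ⟨0, 0, 1, 0, by push_cast; ring⟩
      · exact ⟨0, 0, 0, 1, by push_cast; ring⟩
    | zero => exact ⟨0, 0, 0, 0, by push_cast; ring⟩
    | add x y hx hy ihx ihy =>
      obtain ⟨c0, c1, c2, c3, rfl⟩ := ihx
      obtain ⟨d0, d1, d2, d3, rfl⟩ := ihy
      exact ⟨c0 + d0, c1 + d1, c2 + d2, c3 + d3, by push_cast; ring⟩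
    | smul c x hx ihx =>
      obtain ⟨c0, c1, c2, c3, rfl⟩ := ihx
      exact ⟨c * c0, c * c1, c * c2, c * c3, by push_cast [zsmul_eq_mul]; ring⟩
  have repM1 : ∀ x ∈ M1, ∃ c0 c1 c2 c3 : ℤ,
      x = (c0 : K) + c1 * ϖ + c2 * ϖ ^ 2 + c3 * ϖ ^ 3 := by
    intro x hx
    induction hx using Submodule.span_induction with
    | mem z hz =>
      simp only [Set.mem_insert_iff, Set.mem_singleton_iff] at hz
      rcases hz with rfl | rfl | rfl | rfl
      · exact ⟨1, 0, 0, 0, by push_cast; ring⟩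
      · exact ⟨0, 1, 0, 0, by push_cast; ring⟩
      · exact ⟨0, 0, 1, 0, by push_cast; ring⟩
      · exact ⟨0, 0, 0, 1, by push_cast; ring⟩
    | zero => exact ⟨0, 0, 0, 0, by push_cast; ring⟩
    | add x y hx hy ihx ihy =>
      obtain ⟨c0, c1, c2, c3, rfl⟩ := ihx
      obtain ⟨d0, d1, d2, d3, rfl⟩ := ihy
      exact ⟨c0 + d0, c1 + d1, c2 + d2, c3 + d3, by push_cast; ring⟩
    | smul c x hx ihx =>
      obtain ⟨c0, c1, c2, c3, rfl⟩ := ihx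
      exact ⟨c * c0, c * c1, c * c2, c * c3, by push_cast [zsmul_eq_mul]; ring⟩
  -- lam on representations
  have lamRepM : ∀ c0 c1 c2 c3 : ℤ,
      (q : ℚ) * lam ((c0 : K) + c1 * ϖ + c2 * ϖ ^ 2 + c3 * ϖbar) = -c3 := by
    intro c0 c1 c2 c3
    rw [map_add, map_add, map_add, hsmi c1 ϖ, hsmi c2 _, hsmi c3 _]
    have h0 : lam ((c0 : ℤ) : K) = (c0 : ℚ) * lam 1 := by
      rw [show ((c0 : ℤ) : K) = (c0 : K) * 1 by ring, hsmi]
    rw [h0, l0, l1, l2]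
    linear_combination (c3 : ℚ) * hqlam
  have lamRepM1 : ∀ c0 c1 c2 c3 : ℤ,
      (q : ℚ) * lam ((c0 : K) + c1 * ϖ + c2 * ϖ ^ 2 + c3 * ϖ ^ 3) = (q : ℚ) * c3 := by
    intro c0 c1 c2 c3
    rw [map_add, map_add, map_add, hsmi c1 ϖ, hsmi c2 _, hsmi c3 _]
    have h0 : lam ((c0 : ℤ) : K) = (c0 : ℚ) * lam 1 := by
      rw [show ((c0 : ℤ) : K) = (c0 : K) * 1 by ring, hsmi]
    rw [h0, l0, l1, l2, l3]
    ring
  -- membership in A of integer combinations of powers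
  have hϖA : ϖ ∈ A := Algebra.subset_adjoin (Set.mem_singleton ϖ)
  have memA : ∀ c0 c1 c2 c3 : ℤ,
      ((c0 : K) + c1 * ϖ + c2 * ϖ ^ 2 + c3 * ϖ ^ 3) ∈ A := by
    intro c0 c1 c2 c3
    have hi : ∀ c : ℤ, ((c : ℤ) : K) ∈ A := by
      intro c
      have : ((c : ℤ) : K) = algebraMap ℤ K c := by simp
      rw [this]; exact A.algebraMap_mem c
    exact add_mem (add_mem (add_mem (hi c0) (mul_mem (hi c1) hϖA))
      (mul_mem (hi c2) (pow_mem hϖA 2))) (mul_mem (hi c3) (pow_mem hϖA 3))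
  have hbarB : ϖbar ∈ B := Algebra.subset_adjoin (by simp)
  -- the homomorphism
  set G1 := A.toSubring.toAddSubgroup with hG1
  set G2 := B.toSubring.toAddSubgroup with hG2
  have memG2 : ∀ x : G2, (x : K) ∈ B := fun x => x.2
  have keyB : ∀ x : G2, ∃ n : ℤ, (q : ℚ) * lam (x : K) = (n : ℚ) := by
    intro x
    obtain ⟨c0, c1, c2, c3, hx⟩ := repM _ (hBM _ (memG2 x))
    exact ⟨-c3, by rw [hx, lamRepM]; push_cast; ring⟩
  let φ : G2 →+ ZMod q := AddMonoidHom.mk'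
    (fun x => (((q : ℚ) * lam (x : K)).num : ZMod q))
    (by
      intro x y
      obtain ⟨n, hn⟩ := keyB x
      obtain ⟨m, hm⟩ := keyB y
      have hco : ((x + y : G2) : K) = (x : K) + (y : K) := rfl
      have hxy : (q : ℚ) * lam ((x + y : G2) : K) = ((n + m : ℤ) : ℚ) := by
        rw [hco, map_add, mul_add, hn, hm]; push_cast; ring
      show (((q : ℚ) * lam ((x + y : G2) : K)).num : ZMod q)
          = (((q : ℚ) * lam (x : K)).num : ZMod q) + (((q : ℚ) * lam (y : K)).num : ZMod q)
      rw [hxy, hn, hm, Rat.num_intCast, Rat.num_intCast, Rat.num_intCast]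
      push_cast; ring)
  have hφ : ∀ x : G2, φ x = (((q : ℚ) * lam (x : K)).num : ZMod q) := fun _ => rfl
  have hker : φ.ker = G1.addSubgroupOf G2 := by
    ext x
    rw [AddMonoidHom.mem_ker, AddSubgroup.mem_addSubgroupOf, hφ]
    constructor
    · intro h
      obtain ⟨c0, c1, c2, c3, hx⟩ := repM _ (hBM _ (memG2 x))
      rw [hx, lamRepM] at h
      have hnum : (-(c3 : ℚ)).num = -c3 := by
        rw [show -(c3 : ℚ) = ((-c3 : ℤ) : ℚ) by push_cast; ring, Rat.num_intCast]
      rw [hnum] at h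
      have hdvd : (q : ℤ) ∣ -c3 := (ZMod.intCast_zmod_eq_zero_iff_dvd _ q).mp h
      obtain ⟨k, hk⟩ := (dvd_neg.mp hdvd)
      have hx2 : (x : K) = ((c0 + k * (q * a) : ℤ) : K) + ((c1 - k * b : ℤ)) * ϖ
          + ((c2 + k * a : ℤ)) * ϖ ^ 2 + ((-k : ℤ)) * ϖ ^ 3 := by
        rw [hx, hk]
        push_cast
        linear_combination (k : K) * hE2
      show (x : K) ∈ A
      rw [hx2]
      exact memA _ _ _ _
    · intro h
      have hxA : (x : K) ∈ A := h
      obtain ⟨d0, d1, d2, d3, hx⟩ := repM1 _ (hAM1 _ hxA)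
      rw [hx, lamRepM1]
      have : ((q : ℚ) * (d3 : ℚ)) = ((q * d3 : ℤ) : ℚ) := by push_cast; ring
      rw [this, Rat.num_intCast]
      push_cast
      simp [ZMod.natCast_self]
  have hφbar : φ ⟨ϖbar, hbarB⟩ = -1 := by
    rw [hφ]
    show (((q : ℚ) * lam ϖbar).num : ZMod q) = -1
    rw [hqlam]
    norm_num
  have hsurj : Function.Surjective φ := by
    intro z
    refine ⟨(-(z.val : ℤ)) • (⟨ϖbar, hbarB⟩ : G2), ?_⟩
    rw [map_zsmul, hφbar]
    have hz : ((z.val : ℕ) : ZMod q) = z := ZMod.natCast_rightInverse z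
    rw [zsmul_eq_mul]
    push_cast
    rw [hz]
    ring
  show AddSubgroup.relIndex G1 G2 = q
  rw [AddSubgroup.relIndex, ← hker, AddSubgroup.index_ker,
    AddMonoidHom.range_eq_top_of_surjective φ hsurj]
  rw [Nat.card_congr AddSubgroup.topEquiv.toEquiv, Nat.card_zmod]
end
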